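/- arXiv:1012.4514 — 8 statements merged into one kernel-verified Lean document; each statement's English description precedes it below -/
import Mathlib

section
/- Let T be a contraction on a finite-dimensional Hilbert space H (‖T‖ ≤ 1), and let D_T = (I - T*T)^{1/2} and D_{T*} = (I - TT*)^{1/2}. Then the 2×2 block operator U = [[T, D_{T*}], [D_T, -T*]] on H ⊕ H is unitary, and P_H U P_H = T (i.e., the (1,1) block of U is T). -/
open ContinuousLinearMap

noncomputable section HalmosAux

open Matrix Complex
open scoped ComplexOrder

variable {n : Type*} [Fintype n] [DecidableEq n]

private lemma trace_ctms (B : Matrix n n ℂ) :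
    (Bᴴ * B).trace = ((∑ i, ∑ j, Complex.normSq (B j i) : ℝ) : ℂ) := by
  push_cast
  simp only [Matrix.trace, Matrix.diag, Matrix.mul_apply, Matrix.conjTranspose_apply]
  congr 1; ext i; congr 1; ext j
  rw [Complex.normSq_eq_conj_mul_self]
  rfl

open scoped MatrixOrder in
private lemma psd_eq_ctms (P : Matrix n n ℂ) (hP : P.PosSemidef) : ∃ B : Matrix n n ℂ, P = Bᴴ * B :=
  CStarAlgebra.nonneg_iff_eq_star_mul_self.mp hP.nonneg

private lemma psd_trace_nonneg (P : Matrix n n ℂ) (hP : P.PosSemidef) :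
    ∃ r : ℝ, 0 ≤ r ∧ P.trace = (r : ℂ) := by
  obtain ⟨B, rfl⟩ := psd_eq_ctms _ hP
  exact ⟨_, Finset.sum_nonneg fun i _ => Finset.sum_nonneg fun j _ =>
    Complex.normSq_nonneg _, trace_ctms B⟩

private lemma psd_trace_zero (P : Matrix n n ℂ) (hP : P.PosSemidef)
    (h : P.trace = 0) : P = 0 := by
  obtain ⟨B, rfl⟩ := psd_eq_ctms _ hP
  rw [trace_ctms B] at h
  have h' : (∑ i, ∑ j, Complex.normSq (B j i) : ℝ) = 0 := by exact_mod_cast h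
  have hB : B = 0 := by
    ext a b
    have h1 : ∀ i ∈ Finset.univ (α := n), (0:ℝ) ≤ ∑ j, Complex.normSq (B j i) :=
      fun i _ => Finset.sum_nonneg fun j _ => Complex.normSq_nonneg _
    have h2 := (Finset.sum_eq_zero_iff_of_nonneg h1).mp h' b (Finset.mem_univ _)
    have h3 := (Finset.sum_eq_zero_iff_of_nonneg
      (fun j _ => Complex.normSq_nonneg _)).mp h2 a (Finset.mem_univ _)
    simpa using Complex.normSq_eq_zero.mp h3
  simp [hB]

/-- Key algebraic lemma: intertwining of the defect operators, matrix version. -/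
private lemma matrix_intertwine (M N N' : Matrix n n ℂ)
    (hN : N.PosSemidef) (hN' : N'.PosSemidef)
    (h2 : N * N = 1 - Mᴴ * M) (h2' : N' * N' = 1 - M * Mᴴ) :
    M * N = N' * M := by
  have hNH : Nᴴ = N := hN.isHermitian
  have hN'H : N'ᴴ = N' := hN'.isHermitian
  set X : Matrix n n ℂ := N' * M - M * N with hXdef
  have h1 : N' * N' * M = M * (N * N) := by
    rw [h2, h2']; noncomm_ring
  have hX : N' * X = -(X * N) := by
    rw [hXdef]; rw [mul_sub, sub_mul, ← mul_assoc, h1]; noncomm_ring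
  have hXH : Xᴴ = Mᴴ * N' - N * Mᴴ := by
    rw [hXdef]; simp [Matrix.conjTranspose_sub, Matrix.conjTranspose_mul, hNH, hN'H]
  -- S = Xᴴ N' X  is PSD and equals -(Xᴴ X N)
  have hS : Xᴴ * N' * X = -(Xᴴ * (X * N)) := by
    rw [mul_assoc, hX]; noncomm_ring
  have hSpsd : (Xᴴ * N' * X).PosSemidef := hN'.conjTranspose_mul_mul_same X
  have hRpsd : (X * N * Xᴴ).PosSemidef := hN.mul_mul_conjTranspose_same X
  -- traces
  have htr : (Xᴴ * N' * X).trace = -((X * N * Xᴴ).trace) := by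
    rw [hS, Matrix.trace_neg, Matrix.trace_mul_comm Xᴴ (X * N)]
  obtain ⟨r, hr, hrt⟩ := psd_trace_nonneg _ hSpsd
  obtain ⟨s, hs, hst⟩ := psd_trace_nonneg _ hRpsd
  have hrs : (r : ℂ) = -(s : ℂ) := by rw [← hrt, ← hst, htr]
  have hr0 : r = 0 := by
    have : r = -s := by exact_mod_cast hrs
    linarith
  have hS0 : Xᴴ * N' * X = 0 := psd_trace_zero _ hSpsd (by rw [hrt, hr0]; simp)
  -- conclude N' * X = 0
  obtain ⟨C, hC⟩ := psd_eq_ctms _ hN'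
  have hCX : C * X = 0 := by
    have : (C * X)ᴴ * (C * X) = 0 := by
      rw [Matrix.conjTranspose_mul, ← mul_assoc, mul_assoc Xᴴ Cᴴ C, ← hC, hS0]
    exact Matrix.conjTranspose_mul_self_eq_zero.mp this
  have hN'X : N' * X = 0 := by rw [hC, mul_assoc, hCX, mul_zero]
  have hXN : X * N = 0 := by
    have := hX; rw [hN'X] at this; exact neg_eq_zero.mp this.symm
  -- now XᴴX = -(N * Mᴴ * X) and (XᴴX)² = 0
  have hXX : Xᴴ * X = -(N * Mᴴ * X) := by
    rw [hXH, sub_mul, mul_assoc, mul_assoc, hN'X, mul_zero]; noncomm_ring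
  have hXXN : Xᴴ * X * N = 0 := by rw [mul_assoc, hXN, mul_zero]
  have hXX2 : (Xᴴ * X) * (Xᴴ * X) = 0 := by
    nth_rewrite 2 [hXX]
    rw [mul_neg, mul_assoc N Mᴴ X, ← mul_assoc (Xᴴ * X) N (Mᴴ * X), hXXN, zero_mul, neg_zero]
  have hXX0 : Xᴴ * X = 0 := by
    have h4 : (Xᴴ * X)ᴴ * (Xᴴ * X) = 0 := by
      rw [Matrix.conjTranspose_mul, Matrix.conjTranspose_conjTranspose, hXX2]
    exact Matrix.conjTranspose_mul_self_eq_zero.mp h4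
  have hX0 : X = 0 := Matrix.conjTranspose_mul_self_eq_zero.mp hXX0
  exact (sub_eq_zero.mp hX0).symm

end HalmosAux

section CLMAux

open Matrix
open scoped ComplexOrder InnerProductSpace

variable {H : Type*} [NormedAddCommGroup H] [InnerProductSpace ℂ H] [FiniteDimensional ℂ H]

private lemma coe_adjoint' (A : H →L[ℂ] H) :
    (ContinuousLinearMap.adjoint A : H →ₗ[ℂ] H) = LinearMap.adjoint (A : H →ₗ[ℂ] H) :=
  (LinearMap.eq_adjoint_iff _ _).mpr fun x y => A.adjoint_inner_left y x

private lemma psd_of_isPositive {ι : Type*} [Fintype ι] [DecidableEq ι]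
    (b : OrthonormalBasis ι ℂ H) (A : H →L[ℂ] H) (hA : A.IsPositive) :
    (LinearMap.toMatrixOrthonormal b (A : H →ₗ[ℂ] H)).PosSemidef := by
  have hsa : LinearMap.adjoint (A : H →ₗ[ℂ] H) = (A : H →ₗ[ℂ] H) := by
    rw [← coe_adjoint', hA.isSelfAdjoint.adjoint_eq]
  refine Matrix.posSemidef_iff_dotProduct_mulVec.mpr ⟨?_, ?_⟩
  · show star _ = _
    rw [← map_star (LinearMap.toMatrixOrthonormal b), LinearMap.star_eq_adjoint, hsa]
  · intro x
    set M := LinearMap.toMatrixOrthonormal b (A : H →ₗ[ℂ] H) with hM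
    set w : H := b.repr.symm ((WithLp.equiv 2 (ι → ℂ)).symm x) with hw
    have hx : x = fun i => b.toBasis.repr w i := by
      funext i
      rw [OrthonormalBasis.coe_toBasis_repr_apply, hw, LinearIsometryEquiv.apply_symm_apply]
      rfl
    have hmv : M *ᵥ x = fun i => b.toBasis.repr (A w) i := by
      conv_lhs => rw [hx]
      rw [show (fun i => b.toBasis.repr w i) = ⇑(b.toBasis.repr w) from rfl, hM,
        show LinearMap.toMatrixOrthonormal b (A : H →ₗ[ℂ] H)
          = LinearMap.toMatrix b.toBasis b.toBasis (A : H →ₗ[ℂ] H) from rfl,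
        LinearMap.toMatrix_mulVec_repr]
      rfl
    have key : dotProduct (star x) (M *ᵥ x) = inner (𝕜 := ℂ) w (A w) := by
      rw [← b.repr.inner_map_map w (A w), EuclideanSpace.inner_eq_star_dotProduct, dotProduct_comm]
      congr 1
      all_goals try (congr 1)
      all_goals funext i
      all_goals simp only [hx, hmv]
      all_goals simp [OrthonormalBasis.coe_toBasis_repr_apply]
    rw [key]
    obtain ⟨h1, h2⟩ := (ContinuousLinearMap.isPositive_iff_complex A).mp hA w
    have h3 : inner (𝕜 := ℂ) w (A w) = ((RCLike.re ⟪A w, w⟫_ℂ : ℝ) : ℂ) := by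
      rw [← inner_conj_symm, ← h1]
      simp
    rw [h3]
    exact Complex.zero_le_real.mpr h2

private lemma clm_intertwine (T D D' : H →L[ℂ] H)
    (hD_pos : D.IsPositive) (hD_sq : D * D = 1 - adjoint T * T)
    (hD'_pos : D'.IsPositive) (hD'_sq : D' * D' = 1 - T * adjoint T) :
    T * D = D' * T := by
  let b := stdOrthonormalBasis ℂ H
  let Φ := LinearMap.toMatrixOrthonormal (𝕜 := ℂ) b
  have hcoe : ∀ A B : H →L[ℂ] H, ((A * B : H →L[ℂ] H) : H →ₗ[ℂ] H)
      = (A : H →ₗ[ℂ] H) * (B : H →ₗ[ℂ] H) := fun A B => rfl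
  have hone : ((1 : H →L[ℂ] H) : H →ₗ[ℂ] H) = 1 := rfl
  have hsub : ∀ A B : H →L[ℂ] H, ((A - B : H →L[ℂ] H) : H →ₗ[ℂ] H)
      = (A : H →ₗ[ℂ] H) - (B : H →ₗ[ℂ] H) := fun A B => rfl
  have hstar : (Φ (T : H →ₗ[ℂ] H))ᴴ = Φ ((adjoint T : H →L[ℂ] H) : H →ₗ[ℂ] H) := by
    rw [← Matrix.star_eq_conjTranspose, ← map_star Φ, LinearMap.star_eq_adjoint, coe_adjoint']
  have h2 : Φ (D : H →ₗ[ℂ] H) * Φ (D : H →ₗ[ℂ] H)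
      = 1 - (Φ (T : H →ₗ[ℂ] H))ᴴ * Φ (T : H →ₗ[ℂ] H) := by
    rw [← map_mul Φ, ← hcoe, hD_sq, hsub, hone, hcoe, map_sub, _root_.map_one, _root_.map_mul, hstar]
  have h2' : Φ (D' : H →ₗ[ℂ] H) * Φ (D' : H →ₗ[ℂ] H)
      = 1 - Φ (T : H →ₗ[ℂ] H) * (Φ (T : H →ₗ[ℂ] H))ᴴ := by
    rw [← map_mul Φ, ← hcoe, hD'_sq, hsub, hone, hcoe, map_sub, _root_.map_one, _root_.map_mul, hstar]
  have key := matrix_intertwine (Φ (T : H →ₗ[ℂ] H)) (Φ (D : H →ₗ[ℂ] H)) (Φ (D' : H →ₗ[ℂ] H))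
    (psd_of_isPositive b D hD_pos) (psd_of_isPositive b D' hD'_pos) h2 h2'
  have : Φ ((T * D : H →L[ℂ] H) : H →ₗ[ℂ] H) = Φ ((D' * T : H →L[ℂ] H) : H →ₗ[ℂ] H) := by
    rw [hcoe, hcoe, _root_.map_mul, _root_.map_mul, key]
  have hlin : ((T * D : H →L[ℂ] H) : H →ₗ[ℂ] H) = ((D' * T : H →L[ℂ] H) : H →ₗ[ℂ] H) :=
    Φ.injective this
  exact ContinuousLinearMap.coe_injective hlin

end CLMAux

/-- **Halmos unitary 1-dilation.** If `T` is a contraction on a finite-dimensional complex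
Hilbert space `H`, and `D = (I - T*T)^{1/2}`, `D' = (I - TT*)^{1/2}` (characterized as the
positive square roots), then the block operator `U = [[T, D'], [D, -T*]]` on `H ⊕ H`
(with the ℓ²-product inner product) is unitary, and its `(1,1)` block is `T`,
i.e. `P_H U P_H = T`. -/
theorem halmos_one_dilation
    (H : Type) [NormedAddCommGroup H] [InnerProductSpace ℂ H] [FiniteDimensional ℂ H]
    (T D D' : H →L[ℂ] H) (hT : ‖T‖ ≤ 1)
    (hD_pos : D.IsPositive) (hD_sq : D * D = 1 - adjoint T * T)
    (hD'_pos : D'.IsPositive) (hD'_sq : D' * D' = 1 - T * adjoint T) :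
    ∃ U : WithLp 2 (H × H) →L[ℂ] WithLp 2 (H × H),
      (∀ x : WithLp 2 (H × H),
        WithLp.equiv 2 (H × H) (U x) =
          (T (WithLp.equiv 2 (H × H) x).1 + D' (WithLp.equiv 2 (H × H) x).2,
           D (WithLp.equiv 2 (H × H) x).1 - adjoint T (WithLp.equiv 2 (H × H) x).2)) ∧
      U ∈ unitary (WithLp 2 (H × H) →L[ℂ] WithLp 2 (H × H)) ∧
      (∀ h : H,
        (WithLp.equiv 2 (H × H) (U ((WithLp.equiv 2 (H × H)).symm (h, 0)))).1 = T h) := by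
  have intertwine : T * D = D' * T := clm_intertwine T D D' hD_pos hD_sq hD'_pos hD'_sq
  have intertwine' : D ∘L adjoint T = adjoint T ∘L D' := by
    have h := congrArg ContinuousLinearMap.adjoint intertwine
    rw [show T * D = T ∘L D from rfl, show D' * T = D' ∘L T from rfl,
      ContinuousLinearMap.adjoint_comp, ContinuousLinearMap.adjoint_comp,
      hD_pos.isSelfAdjoint.adjoint_eq, hD'_pos.isSelfAdjoint.adjoint_eq] at h
    exact h
  have hDD : ∀ a : H, D (D a) = a - adjoint T (T a) := fun a => by
    have h := congrArg (fun f : H →L[ℂ] H => f a) hD_sq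
    simpa [ContinuousLinearMap.mul_apply, ContinuousLinearMap.sub_apply,
      ContinuousLinearMap.one_apply] using h
  have hD'D' : ∀ a : H, D' (D' a) = a - T (adjoint T a) := fun a => by
    have h := congrArg (fun f : H →L[ℂ] H => f a) hD'_sq
    simpa [ContinuousLinearMap.mul_apply, ContinuousLinearMap.sub_apply,
      ContinuousLinearMap.one_apply] using h
  have hTD : ∀ a : H, T (D a) = D' (T a) := fun a => by
    have h := congrArg (fun f : H →L[ℂ] H => f a) intertwine
    simpa [ContinuousLinearMap.mul_apply] using h
  have hDT' : ∀ a : H, D (adjoint T a) = adjoint T (D' a) := fun a => by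
    have h := congrArg (fun f : H →L[ℂ] H => f a) intertwine'
    simpa [ContinuousLinearMap.comp_apply] using h
  let e : WithLp 2 (H × H) ≃L[ℂ] H × H := WithLp.prodContinuousLinearEquiv 2 ℂ H H
  let f1 := ContinuousLinearMap.fst ℂ H H
  let s1 := ContinuousLinearMap.snd ℂ H H
  let Bop : (H × H) →L[ℂ] (H × H) :=
    (T.comp f1 + D'.comp s1).prod (D.comp f1 - (adjoint T).comp s1)
  let Cop : (H × H) →L[ℂ] (H × H) :=
    ((adjoint T).comp f1 + D.comp s1).prod (D'.comp f1 - T.comp s1)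
  let U : WithLp 2 (H × H) →L[ℂ] WithLp 2 (H × H) :=
    (e.symm : (H × H) →L[ℂ] WithLp 2 (H × H)).comp
      (Bop.comp (e : WithLp 2 (H × H) →L[ℂ] (H × H)))
  let V : WithLp 2 (H × H) →L[ℂ] WithLp 2 (H × H) :=
    (e.symm : (H × H) →L[ℂ] WithLp 2 (H × H)).comp
      (Cop.comp (e : WithLp 2 (H × H) →L[ℂ] (H × H)))
  have hBop : ∀ y : H × H, Bop y = (T y.1 + D' y.2, D y.1 - adjoint T y.2) := fun y => rfl
  have hCop : ∀ y : H × H, Cop y = (adjoint T y.1 + D y.2, D' y.1 - T y.2) := fun y => rfl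
  have hUapp : ∀ x : WithLp 2 (H × H),
      WithLp.equiv 2 (H × H) (U x) =
        (T (WithLp.equiv 2 (H × H) x).1 + D' (WithLp.equiv 2 (H × H) x).2,
         D (WithLp.equiv 2 (H × H) x).1 - adjoint T (WithLp.equiv 2 (H × H) x).2) :=
    fun x => rfl
  have hVapp : ∀ x : WithLp 2 (H × H),
      WithLp.equiv 2 (H × H) (V x) =
        (adjoint T (WithLp.equiv 2 (H × H) x).1 + D (WithLp.equiv 2 (H × H) x).2,
         D' (WithLp.equiv 2 (H × H) x).1 - T (WithLp.equiv 2 (H × H) x).2) :=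
    fun x => rfl
  have hDsym : ∀ a c : H, (inner ℂ (D a) c : ℂ) = inner ℂ a (D c) := fun a c =>
    hD_pos.isSelfAdjoint.isSymmetric a c
  have hD'sym : ∀ a c : H, (inner ℂ (D' a) c : ℂ) = inner ℂ a (D' c) := fun a c =>
    hD'_pos.isSelfAdjoint.isSymmetric a c
  have hadj : V = ContinuousLinearMap.adjoint U := by
    rw [ContinuousLinearMap.eq_adjoint_iff]
    intro x y
    rw [WithLp.prod_inner_apply, WithLp.prod_inner_apply]
    show (inner ℂ (adjoint T x.fst + D x.snd) y.fst : ℂ)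
          + inner ℂ (D' x.fst - T x.snd) y.snd
        = (inner ℂ x.fst (T y.fst + D' y.snd) : ℂ)
          + inner ℂ x.snd (D y.fst - adjoint T y.snd)
    simp only [inner_add_left, inner_sub_left, inner_add_right, inner_sub_right,
      ContinuousLinearMap.adjoint_inner_left, ContinuousLinearMap.adjoint_inner_right,
      hDsym, hD'sym]
    ring
  have hCB : ∀ y : H × H, Cop (Bop y) = y := by
    intro y
    rw [hBop, hCop]
    have h1 : adjoint T (T y.1 + D' y.2) + D (D y.1 - adjoint T y.2) = y.1 := by
      rw [map_add, map_sub, hDD, hDT']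
      abel
    have h2 : D' (T y.1 + D' y.2) - T (D y.1 - adjoint T y.2) = y.2 := by
      rw [map_add, map_sub, hD'D', ← hTD]
      abel
    exact Prod.ext h1 h2
  have hBC : ∀ y : H × H, Bop (Cop y) = y := by
    intro y
    rw [hCop, hBop]
    have h1 : T (adjoint T y.1 + D y.2) + D' (D' y.1 - T y.2) = y.1 := by
      rw [map_add, map_sub, hD'D', hTD]
      abel
    have h2 : D (adjoint T y.1 + D y.2) - adjoint T (D' y.1 - T y.2) = y.2 := by
      rw [map_add, map_sub, hDD, hDT']
      abel
    exact Prod.ext h1 h2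
  have hVU : V * U = 1 := by
    refine ContinuousLinearMap.ext fun x => ?_
    calc (V * U) x = e.symm (Cop (e (e.symm (Bop (e x))))) := rfl
      _ = e.symm (Cop (Bop (e x))) := by rw [e.apply_symm_apply]
      _ = e.symm (e x) := by rw [hCB]
      _ = x := e.symm_apply_apply x
  have hUV : U * V = 1 := by
    refine ContinuousLinearMap.ext fun x => ?_
    calc (U * V) x = e.symm (Bop (e (e.symm (Cop (e x))))) := rfl
      _ = e.symm (Bop (Cop (e x))) := by rw [e.apply_symm_apply]
      _ = e.symm (e x) := by rw [hBC]
      _ = x := e.symm_apply_apply x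
  refine ⟨U, hUapp, ?_, ?_⟩
  · refine Unitary.mem_iff.mpr ⟨?_, ?_⟩
    · rw [ContinuousLinearMap.star_eq_adjoint, ← hadj]; exact hVU
    · rw [ContinuousLinearMap.star_eq_adjoint, ← hadj]; exact hUV
  · intro h
    rw [hUapp]
    simp
end

section
/- Let T be a contraction on an n-dimensional Hilbert space H and p a polynomial of degree at most N. If U is a unitary N-dilation of T on a finite-dimensional space, then ‖p(T)‖ ≤ sup_{|z|=1} |p(z)|. In particular (combining with the existence of N-dilations), von Neumann's inequality ‖p(T)‖ ≤ ‖p‖_∞ holds for every contraction on a finite-dimensional Hilbert space and every polynomial p. -/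
open ContinuousLinearMap
open Polynomial




variable {Hs : Type*} [NormedAddCommGroup Hs] [InnerProductSpace ℂ Hs]

lemma clm_pow_apply_eigen (A : Hs →L[ℂ] Hs) (c : ℂ) (v : Hs) (hv : A v = c • v) :
    ∀ m : ℕ, (A ^ m) v = c ^ m • v := by
  intro m
  induction m with
  | zero => simp
  | succ m ih =>
    rw [pow_succ, ContinuousLinearMap.mul_apply, hv, map_smul, ih, smul_smul, pow_succ]
    ring_nf

lemma clm_aeval_apply_eigen (A : Hs →L[ℂ] Hs) (c : ℂ) (v : Hs) (hv : A v = c • v) (q : ℂ[X]) :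
    (Polynomial.aeval A q) v = q.eval c • v := by
  induction q using Polynomial.induction_on' with
  | add f g hf hg => simp [ContinuousLinearMap.add_apply, hf, hg, add_smul]
  | monomial n a =>
    rw [Polynomial.aeval_monomial, ContinuousLinearMap.mul_apply, clm_pow_apply_eigen A c v hv,
      map_smul, Polynomial.eval_monomial]
    rw [Algebra.algebraMap_eq_smul_one]
    simp [smul_smul, mul_comm]

lemma clm_aeval_eq_zero [FiniteDimensional ℂ Hs] {n : ℕ}
    (A : Hs →L[ℂ] Hs) (e : OrthonormalBasis (Fin n) ℂ Hs) (μ : Fin n → ℂ)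
    (he : ∀ i, A (e i) = μ i • e i) (q : ℂ[X]) (hq : ∀ i, q.eval (μ i) = 0) :
    Polynomial.aeval A q = 0 := by
  apply ContinuousLinearMap.ext
  intro x
  conv_lhs => rw [← e.sum_repr x]
  rw [map_sum]
  simp only [map_smul, ContinuousLinearMap.zero_apply]
  refine Finset.sum_eq_zero fun i _ => ?_
  rw [clm_aeval_apply_eigen A (μ i) (e i) (he i), hq i, zero_smul, smul_zero]

lemma commute_aeval {A : Type*} [Ring A] [Algebra ℂ A] {x y : A} (h : Commute x y) (q : ℂ[X]) :
    Commute x (Polynomial.aeval y q) := by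
  induction q using Polynomial.induction_on' with
  | add f g hf hg => rw [map_add]; exact hf.add_right hg
  | monomial n a =>
    simp only [Polynomial.aeval_monomial, Algebra.algebraMap_eq_smul_one, smul_mul_assoc, one_mul]
    exact (h.pow_right n).smul_right a

lemma star_aeval {A : Type*} [Ring A] [Algebra ℂ A] [StarRing A] [StarModule ℂ A]
    (x : A) (q : ℂ[X]) :
    star (Polynomial.aeval x q) = Polynomial.aeval (star x) (q.map (starRingEnd ℂ)) := by
  induction q using Polynomial.induction_on' with
  | add f g hf hg => rw [Polynomial.map_add, map_add, map_add, star_add, hf, hg]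
  | monomial n a =>
    simp only [Polynomial.map_monomial, Polynomial.aeval_monomial,
      Algebra.algebraMap_eq_smul_one, smul_mul_assoc, one_mul, star_smul, star_pow]
    rfl


open scoped NNReal ENNReal

lemma unitary_aeval_norm_le (K : Type*) [NormedAddCommGroup K] [InnerProductSpace ℂ K]
    [FiniteDimensional ℂ K] (U : K →L[ℂ] K) (hU : U ∈ unitary (K →L[ℂ] K))
    (q : ℂ[X]) (M : ℝ) (hM0 : 0 ≤ M) (hM : ∀ z : ℂ, ‖z‖ = 1 → ‖q.eval z‖ ≤ M) :
    ‖Polynomial.aeval U q‖ ≤ M := by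
  haveI : CompleteSpace K := FiniteDimensional.complete ℂ K
  rcases subsingleton_or_nontrivial K with hK | hK
  · have h0 : Polynomial.aeval U q = 0 := by
      ext x
      have : x = 0 := Subsingleton.elim _ _
      simp [this]
    rw [h0, norm_zero]; exact hM0
  · have hnt : Nontrivial (K →L[ℂ] K) := by
      obtain ⟨x, hx⟩ := exists_ne (0 : K)
      exact ⟨0, 1, fun h => hx (by simpa using (congrArg (fun f : K →L[ℂ] K => f x) h).symm)⟩
    have hc : Commute U (star U) := by
      rcases Unitary.mem_iff.mp hU with ⟨h1, h2⟩
      exact h2.trans h1.symm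
    haveI : IsStarNormal (Polynomial.aeval U q) := by
      constructor
      have c1 : Commute (star U) (Polynomial.aeval U q) := commute_aeval hc.symm q
      have c2 : Commute (Polynomial.aeval U q) (Polynomial.aeval (star U) (q.map (starRingEnd ℂ))) :=
        commute_aeval c1.symm (q.map (starRingEnd ℂ))
      rw [star_aeval]
      exact c2.symm
    have hsr := IsStarNormal.spectralRadius_eq_nnnorm (Polynomial.aeval U q)
    have hle : spectralRadius ℂ (Polynomial.aeval U q) ≤ ENNReal.ofReal M := by
      rw [spectralRadius]
      refine iSup₂_le fun k hk => ?_
      rw [spectrum.map_polynomial_aeval U q] at hk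
      obtain ⟨z, hz, rfl⟩ := hk
      have hz1 : ‖z‖ = 1 := by
        have := spectrum.subset_circle_of_unitary hU hz
        simpa [Metric.mem_sphere, dist_zero_right] using this
      have hb : ‖Polynomial.eval z q‖ ≤ M := hM z hz1
      rw [ENNReal.ofReal, ENNReal.coe_le_coe, Real.le_toNNReal_iff_coe_le hM0]
      simpa using hb
    rw [hsr] at hle
    rw [ENNReal.ofReal, ENNReal.coe_le_coe] at hle
    calc ‖Polynomial.aeval U q‖ = (‖Polynomial.aeval U q‖₊ : ℝ) := by simp
      _ ≤ (M.toNNReal : ℝ) := by exact_mod_cast hle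
      _ = M := Real.coe_toNNReal M hM0


lemma dilation_norm_le {H K : Type*} [NormedAddCommGroup H] [InnerProductSpace ℂ H]
    [FiniteDimensional ℂ H] [NormedAddCommGroup K] [InnerProductSpace ℂ K]
    [FiniteDimensional ℂ K]
    (T : H →L[ℂ] H) (N : ℕ) (p : ℂ[X]) (hdeg : p.natDegree ≤ N)
    (W : H →ₗᵢ[ℂ] K) (U : K →L[ℂ] K)
    (hdil : ∀ k : ℕ, 1 ≤ k → k ≤ N →
      ∀ h : H, adjoint W.toContinuousLinearMap ((U ^ k) (W h)) = (T ^ k) h) :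
    ‖Polynomial.aeval T p‖ ≤ ‖Polynomial.aeval U p‖ := by
  haveI : CompleteSpace H := FiniteDimensional.complete ℂ H
  haveI : CompleteSpace K := FiniteDimensional.complete ℂ K
  set W' := W.toContinuousLinearMap with hW'
  have hW'app : ∀ h : H, W' h = W h := fun _ => rfl
  have hWadj : ∀ h : H, adjoint W' (W h) = h := by
    intro h
    apply ext_inner_right ℂ
    intro v
    rw [adjoint_inner_left]
    rw [hW'app]
    exact W.inner_map_map h v
  have key : ∀ k : ℕ, k ≤ N → ∀ h : H, adjoint W' ((U ^ k) (W h)) = (T ^ k) h := by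
    intro k hk h
    rcases Nat.eq_zero_or_pos k with rfl | hk1
    · simpa using hWadj h
    · exact hdil k hk1 hk h
  have main : ∀ h : H, Polynomial.aeval T p h = adjoint W' (Polynomial.aeval U p (W h)) := by
    intro h
    rw [Polynomial.aeval_eq_sum_range' (lt_of_le_of_lt hdeg (Nat.lt_succ_self N)),
        Polynomial.aeval_eq_sum_range' (lt_of_le_of_lt hdeg (Nat.lt_succ_self N))]
    simp only [ContinuousLinearMap.coe_sum', Finset.sum_apply,
      ContinuousLinearMap.coe_smul', Pi.smul_apply]
    rw [map_sum]
    refine Finset.sum_congr rfl fun i hi => ?_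
    rw [map_smul, key i (Nat.le_of_lt_succ (Finset.mem_range.mp hi)) h]
  have hadjnorm : ‖adjoint W'‖ ≤ 1 := by
    have h1 : ‖adjoint W'‖ = ‖W'‖ := LinearIsometryEquiv.norm_map adjoint W'
    rw [h1]
    refine ContinuousLinearMap.opNorm_le_bound _ zero_le_one fun h => ?_
    rw [hW'app, W.norm_map, one_mul]
  refine ContinuousLinearMap.opNorm_le_bound _ (norm_nonneg _) fun h => ?_
  rw [main h]
  calc ‖adjoint W' (Polynomial.aeval U p (W h))‖
      ≤ ‖adjoint W'‖ * ‖Polynomial.aeval U p (W h)‖ := le_opNorm _ _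
    _ ≤ 1 * (‖Polynomial.aeval U p‖ * ‖W h‖) := by
        refine mul_le_mul hadjnorm (le_opNorm _ _) (norm_nonneg _) zero_le_one
    _ = ‖Polynomial.aeval U p‖ * ‖h‖ := by rw [one_mul, W.norm_map]

lemma isSelfAdjoint_aeval_real {H : Type*} [NormedAddCommGroup H] [InnerProductSpace ℂ H]
    [FiniteDimensional ℂ H] (A : H →L[ℂ] H) (hA : IsSelfAdjoint A) (r : Polynomial ℝ) :
    IsSelfAdjoint (Polynomial.aeval A (r.map (algebraMap ℝ ℂ))) := by
  induction r using Polynomial.induction_on' with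
  | add f g hf hg => rw [Polynomial.map_add, map_add]; exact hf.add hg
  | monomial n a =>
    rw [Polynomial.map_monomial, Polynomial.aeval_monomial]
    rw [Algebra.algebraMap_eq_smul_one, smul_mul_assoc, one_mul]
    refine IsSelfAdjoint.smul ?_ (hA.pow n)
    rw [IsSelfAdjoint, Complex.star_def]
    simp [Complex.conj_ofReal]

section Defect

variable {H : Type*} [NormedAddCommGroup H] [InnerProductSpace ℂ H] [FiniteDimensional ℂ H]

local notation "⟪" x ", " y "⟫" => @inner ℂ _ _ x y

lemma eigenvalue_le_one (T : H →L[ℂ] H) (hT : ‖T‖ ≤ 1) (S : H →L[ℂ] H)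
    (hS : ∀ v : H, ⟪v, S v⟫ = (‖T v‖ : ℂ) ^ 2) (c : ℝ) (v : H) (hv0 : ‖v‖ = 1)
    (hv : S v = (c : ℂ) • v) : c ≤ 1 := by
  haveI : CompleteSpace H := FiniteDimensional.complete ℂ H
  have h1 : ⟪v, S v⟫ = (c : ℂ) := by
    rw [hv, inner_smul_right, inner_self_eq_norm_sq_to_K, hv0]
    simp
  have h2 : (c : ℂ) = (‖T v‖ : ℂ) ^ 2 := by rw [← h1, hS]
  have h3 : c = ‖T v‖ ^ 2 := by exact_mod_cast h2
  have h4 : ‖T v‖ ≤ 1 := by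
    calc ‖T v‖ ≤ ‖T‖ * ‖v‖ := le_opNorm _ _
      _ ≤ 1 := by rw [hv0, mul_one]; exact hT
  rw [h3]
  exact pow_le_one₀ (norm_nonneg _) h4

lemma exists_defect (T : H →L[ℂ] H) (hT : ‖T‖ ≤ 1) :
    ∃ D Ds : H →L[ℂ] H, IsSelfAdjoint D ∧ IsSelfAdjoint Ds ∧
      D * D + star T * T = 1 ∧ Ds * Ds + T * star T = 1 ∧
      T * D = Ds * T := by
  haveI : CompleteSpace H := FiniteDimensional.complete ℂ H
  set A : H →L[ℂ] H := star T * T with hA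
  set B : H →L[ℂ] H := T * star T with hB
  have hAsa : IsSelfAdjoint A := IsSelfAdjoint.star_mul_self T
  have hBsa : IsSelfAdjoint B := IsSelfAdjoint.mul_star_self T
  have hAsym : (A : H →ₗ[ℂ] H).IsSymmetric :=
    (ContinuousLinearMap.isSelfAdjoint_iff_isSymmetric).mp hAsa
  have hBsym : (B : H →ₗ[ℂ] H).IsSymmetric :=
    (ContinuousLinearMap.isSelfAdjoint_iff_isSymmetric).mp hBsa
  -- eigendata
  set n := Module.finrank ℂ H with hn
  have hnn : Module.finrank ℂ H = n := rfl
  set eA := hAsym.eigenvectorBasis hnn with heA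
  set μA := hAsym.eigenvalues hnn with hμA
  set eB := hBsym.eigenvectorBasis hnn with heB
  set μB := hBsym.eigenvalues hnn with hμB
  have heigA : ∀ i, A (eA i) = (μA i : ℂ) • eA i := fun i => hAsym.apply_eigenvectorBasis hnn i
  have heigB : ∀ i, B (eB i) = (μB i : ℂ) • eB i := fun i => hBsym.apply_eigenvectorBasis hnn i
  -- eigenvalue bounds
  have hairs : ∀ v : H, ⟪v, A v⟫ = (‖T v‖ : ℂ) ^ 2 := by
    intro v
    have : A v = adjoint T (T v) := by
      rw [hA, ContinuousLinearMap.mul_apply, star_eq_adjoint]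
    rw [this, adjoint_inner_right, inner_self_eq_norm_sq_to_K]
    norm_cast
  have hbirs : ∀ v : H, ⟪v, B v⟫ = (‖adjoint T v‖ : ℂ) ^ 2 := by
    intro v
    have : B v = T (adjoint T v) := by
      rw [hB, ContinuousLinearMap.mul_apply, star_eq_adjoint]
    rw [this, ← adjoint_inner_left, inner_self_eq_norm_sq_to_K]
    norm_cast
  have hTadj : ‖adjoint T‖ ≤ 1 := by
    rw [LinearIsometryEquiv.norm_map adjoint T]; exact hT
  have hμAle : ∀ i, μA i ≤ 1 := fun i =>
    eigenvalue_le_one T hT A hairs (μA i) (eA i) (eA.orthonormal.1 i) (heigA i)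
  have hμBle : ∀ i, μB i ≤ 1 := fun i =>
    eigenvalue_le_one (adjoint T) hTadj B hbirs (μB i) (eB i) (eB.orthonormal.1 i) (heigB i)
  -- interpolation polynomial
  set s : Finset ℝ := Finset.image μA Finset.univ ∪ Finset.image μB Finset.univ with hs
  set r : Polynomial ℝ := Lagrange.interpolate s id (fun t => Real.sqrt (1 - t)) with hr
  have hreval : ∀ t ∈ s, r.eval t = Real.sqrt (1 - t) := by
    intro t ht
    have := Lagrange.eval_interpolate_at_node (fun t => Real.sqrt (1 - t))
      (Set.injOn_id _) ht
    exact this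
  set rc : ℂ[X] := r.map (algebraMap ℝ ℂ) with hrc
  have hrceval : ∀ t : ℝ, t ∈ s → rc.eval (t : ℂ) = ((Real.sqrt (1 - t) : ℝ) : ℂ) := by
    intro t ht
    have h1 : ((t : ℝ) : ℂ) = algebraMap ℝ ℂ t := rfl
    rw [hrc, h1, Polynomial.eval_map, Polynomial.eval₂_at_apply, hreval t ht]
    rfl
  refine ⟨Polynomial.aeval A rc, Polynomial.aeval B rc, ?_, ?_, ?_, ?_, ?_⟩
  · exact isSelfAdjoint_aeval_real A hAsa r
  · exact isSelfAdjoint_aeval_real B hBsa r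
  · -- D * D + A = 1
    have hq : Polynomial.aeval A (rc * rc + X - 1) = 0 := by
      refine clm_aeval_eq_zero A eA (fun i => (μA i : ℂ)) heigA _ (fun i => ?_)
      have hmem : μA i ∈ s := by
        rw [hs]; exact Finset.mem_union_left _ (Finset.mem_image_of_mem _ (Finset.mem_univ i))
      have h1 : 1 - μA i ≥ 0 := by linarith [hμAle i]
      simp only [Polynomial.eval_sub, Polynomial.eval_add, Polynomial.eval_mul,
        Polynomial.eval_X, Polynomial.eval_one, hrceval _ hmem]
      rw [← Complex.ofReal_mul, Real.mul_self_sqrt h1]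
      push_cast
      ring
    have := hq
    rw [map_sub, map_add, map_mul, Polynomial.aeval_X, map_one, sub_eq_zero] at this
    exact this
  · -- Ds * Ds + B = 1
    have hq : Polynomial.aeval B (rc * rc + X - 1) = 0 := by
      refine clm_aeval_eq_zero B eB (fun i => (μB i : ℂ)) heigB _ (fun i => ?_)
      have hmem : μB i ∈ s := by
        rw [hs]; exact Finset.mem_union_right _ (Finset.mem_image_of_mem _ (Finset.mem_univ i))
      have h1 : 1 - μB i ≥ 0 := by linarith [hμBle i]
      simp only [Polynomial.eval_sub, Polynomial.eval_add, Polynomial.eval_mul,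
        Polynomial.eval_X, Polynomial.eval_one, hrceval _ hmem]
      rw [← Complex.ofReal_mul, Real.mul_self_sqrt h1]
      push_cast
      ring
    have := hq
    rw [map_sub, map_add, map_mul, Polynomial.aeval_X, map_one, sub_eq_zero] at this
    exact this
  · -- intertwining
    have hTA : T * A = B * T := by rw [hA, hB, ← mul_assoc]
    have hpow : ∀ m : ℕ, T * A ^ m = B ^ m * T := by
      intro m
      induction m with
      | zero => simp
      | succ m ih =>
        rw [pow_succ, pow_succ, ← mul_assoc, ih, mul_assoc, hTA, ← mul_assoc]
    induction rc using Polynomial.induction_on' with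
    | add f g hf hg => rw [map_add, map_add, mul_add, add_mul, hf, hg]
    | monomial m a =>
      simp only [Polynomial.aeval_monomial, Algebra.algebraMap_eq_smul_one,
        smul_mul_assoc, one_mul, mul_smul_comm]
      rw [hpow m]

end Defect

section Dilation

local notation "⟪" x ", " y "⟫" => @inner ℂ _ _ x y

set_option maxHeartbeats 1000000 in
lemma exists_dilation {H : Type} [NormedAddCommGroup H] [InnerProductSpace ℂ H]
    [FiniteDimensional ℂ H] (T : H →L[ℂ] H) (hT : ‖T‖ ≤ 1) (N : ℕ) :
    ∃ (K : Type) (_i1 : NormedAddCommGroup K) (_i2 : InnerProductSpace ℂ K)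
      (_i3 : FiniteDimensional ℂ K) (W : H →ₗᵢ[ℂ] K) (U : K →L[ℂ] K),
      U ∈ unitary (K →L[ℂ] K) ∧
      ∀ k : ℕ, 1 ≤ k → k ≤ N → ∀ h : H,
        adjoint W.toContinuousLinearMap ((U ^ k) (W h)) = (T ^ k) h := by
  haveI : CompleteSpace H := FiniteDimensional.complete ℂ H
  obtain ⟨D, Ds, hDsa, hDssa, hD2, hDs2, hint⟩ := exists_defect T hT
  have hD' : adjoint D = D := by rw [← star_eq_adjoint]; exact hDsa
  have hDs' : adjoint Ds = Ds := by rw [← star_eq_adjoint]; exact hDssa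
  set K : Type := PiLp 2 (fun _ : Fin (N + 2) => H) with hK
  haveI : CompleteSpace K := FiniteDimensional.complete ℂ K
  have haddK : ∀ (u v : K) (i : Fin (N + 2)), (u + v) i = u i + v i := fun _ _ _ => rfl
  have hsmulK : ∀ (c : ℂ) (u : K) (i : Fin (N + 2)), (c • u) i = c • u i := fun _ _ _ => rfl
  -- the embedding W
  set W₀ : H →ₗ[ℂ] K :=
    { toFun := fun h => WithLp.toLp 2 (Fin.cons h (fun _ => 0) : ∀ _ : Fin (N + 2), H)
      map_add' := by
        intro a b
        ext i
        refine Fin.cases ?_ (fun j => ?_) i <;>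
          simp [haddK, Fin.cons_zero, Fin.cons_succ]
      map_smul' := by
        intro c a
        ext i
        refine Fin.cases ?_ (fun j => ?_) i <;>
          simp [hsmulK, Fin.cons_zero, Fin.cons_succ] } with hW₀
  have hW₀app : ∀ h : H, W₀ h = (Fin.cons h (fun _ => 0) : ∀ _ : Fin (N + 2), H) :=
    fun _ => rfl
  have hWinner : ∀ a b : H, ⟪W₀ a, W₀ b⟫ = ⟪a, b⟫ := by
    intro a b
    rw [PiLp.inner_apply, Fin.sum_univ_succ]
    simp [hW₀app, Fin.cons_zero, Fin.cons_succ]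
  set W : H →ₗᵢ[ℂ] K := W₀.isometryOfInner hWinner with hW
  have hWapp : ∀ h : H, W h = W₀ h := fun _ => rfl
  have hadjW : ∀ y : K, adjoint W.toContinuousLinearMap y = y 0 := by
    intro y
    apply ext_inner_right ℂ
    intro v
    rw [adjoint_inner_left]
    have h1 : W.toContinuousLinearMap v = W₀ v := rfl
    rw [h1, PiLp.inner_apply, Fin.sum_univ_succ]
    simp [hW₀app, Fin.cons_zero, Fin.cons_succ]
  -- the unitary U
  set U₀ : K →ₗ[ℂ] K :=
    { toFun := fun x => WithLp.toLp 2 (Fin.cons (T (x 0) + Ds (x (Fin.last (N + 1))))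
        (Fin.cons (D (x 0) - adjoint T (x (Fin.last (N + 1))))
          (fun j : Fin N => x j.succ.castSucc)) : ∀ _ : Fin (N + 2), H)
      map_add' := by
        intro x y
        ext i
        refine Fin.cases ?_ (fun j => ?_) i
        · simp only [haddK, PiLp.toLp_apply, Fin.cons_zero, map_add]
          abel
        · refine Fin.cases ?_ (fun j' => ?_) j
          · simp only [haddK, PiLp.toLp_apply, Fin.cons_succ, Fin.cons_zero, map_add]
            abel
          · simp only [haddK, PiLp.toLp_apply, Fin.cons_succ]
      map_smul' := by
        intro c x
        ext i
        refine Fin.cases ?_ (fun j => ?_) i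
        · simp only [hsmulK, PiLp.toLp_apply, Fin.cons_zero, map_smul, RingHom.id_apply, smul_add]
        · refine Fin.cases ?_ (fun j' => ?_) j
          · simp only [hsmulK, PiLp.toLp_apply, Fin.cons_succ, Fin.cons_zero, map_smul,
              RingHom.id_apply, smul_sub]
          · simp only [hsmulK, PiLp.toLp_apply, Fin.cons_succ, RingHom.id_apply] } with hU₀
  have hU₀app : ∀ x : K, U₀ x = (Fin.cons (T (x 0) + Ds (x (Fin.last (N + 1))))
      (Fin.cons (D (x 0) - adjoint T (x (Fin.last (N + 1))))
        (fun j : Fin N => x j.succ.castSucc)) : ∀ _ : Fin (N + 2), H) := fun _ => rfl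
  -- the 2-dimensional key identity
  have key2 : ∀ a b a' b' : H,
      ⟪T a + Ds b, T a' + Ds b'⟫ + ⟪D a - adjoint T b, D a' - adjoint T b'⟫
        = ⟪a, a'⟫ + ⟪b, b'⟫ := by
    intro a b a' b'
    have g1 : ⟪T a, T a'⟫ + ⟪D a, D a'⟫ = ⟪a, a'⟫ := by
      have h1 := adjoint_inner_right T a (T a')
      have h2 := adjoint_inner_right D a (D a')
      rw [hD'] at h2
      rw [← h1, ← h2, ← inner_add_right]
      have h3 : D (D a') + adjoint T (T a') = a' := by
        have h4 := congrArg (fun f : H →L[ℂ] H => f a') hD2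
        simpa [ContinuousLinearMap.mul_apply, star_eq_adjoint] using h4
      rw [add_comm ((adjoint T) (T a')) (D (D a')), h3]
    have g2 : ⟪Ds b, Ds b'⟫ + ⟪adjoint T b, adjoint T b'⟫ = ⟪b, b'⟫ := by
      have h1 := adjoint_inner_right Ds b (Ds b')
      rw [hDs'] at h1
      have h2 := adjoint_inner_left T (adjoint T b') b
      rw [← h1, h2, ← inner_add_right]
      have h3 : Ds (Ds b') + T (adjoint T b') = b' := by
        have h4 := congrArg (fun f : H →L[ℂ] H => f b') hDs2
        simpa [ContinuousLinearMap.mul_apply, star_eq_adjoint] using h4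
      rw [h3]
    have hTD : ∀ u : H, T (D u) = Ds (T u) := by
      intro u
      have := congrArg (fun f : H →L[ℂ] H => f u) hint
      simpa [ContinuousLinearMap.mul_apply] using this
    have g3 : ⟪T a, Ds b'⟫ = ⟪D a, adjoint T b'⟫ := by
      have h1 := adjoint_inner_right Ds (T a) b'
      rw [hDs'] at h1
      have h2 := adjoint_inner_right T (D a) b'
      rw [h1, h2, hTD]
    have g4 : ⟪Ds b, T a'⟫ = ⟪adjoint T b, D a'⟫ := by
      have h1 := adjoint_inner_left Ds (T a') b
      rw [hDs'] at h1
      have h2 := adjoint_inner_left T (D a') b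
      rw [h1, h2, hTD]
    simp only [inner_add_left, inner_add_right, inner_sub_left, inner_sub_right]
    linear_combination g1 + g2 + g3 + g4
  -- inner product preservation
  have hUinner : ∀ x y : K, ⟪U₀ x, U₀ y⟫ = ⟪x, y⟫ := by
    intro x y
    have hdecompL : ∀ f : Fin (N + 2) → ℂ,
        (∑ i, f i) = f 0 + f (0 : Fin (N + 1)).succ + ∑ j : Fin N, f j.succ.succ := by
      intro f
      rw [Fin.sum_univ_succ, Fin.sum_univ_succ]
      ring
    have hdecompR : ∀ f : Fin (N + 2) → ℂ,
        (∑ i, f i) = f 0 + f (Fin.last N).succ + ∑ j : Fin N, f j.castSucc.succ := by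
      intro f
      rw [Fin.sum_univ_succ, Fin.sum_univ_castSucc]
      ring
    rw [PiLp.inner_apply, PiLp.inner_apply, hdecompL, hdecompR]
    simp only [hU₀app, Fin.cons_zero, Fin.cons_succ, Fin.succ_castSucc, Fin.succ_last]
    linear_combination key2 (x 0) (x (Fin.last (N + 1))) (y 0) (y (Fin.last (N + 1)))
  set U : K →L[ℂ] K := LinearMap.toContinuousLinearMap U₀ with hU
  have hUapp : ∀ x : K, U x = U₀ x := fun _ => rfl
  have hUU : star U * U = 1 := by
    apply ContinuousLinearMap.ext
    intro x
    apply ext_inner_right ℂ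
    intro v
    rw [ContinuousLinearMap.mul_apply, star_eq_adjoint, adjoint_inner_left,
      ContinuousLinearMap.one_apply]
    exact hUinner x v
  have hUnorm : ∀ x : K, ‖U x‖ = ‖x‖ := by
    intro x
    have h1 : ⟪U x, U x⟫ = ⟪x, x⟫ := hUinner x x
    have h2 : ‖U x‖ * ‖U x‖ = ‖x‖ * ‖x‖ := by
      rw [← @inner_self_eq_norm_mul_norm ℂ K _ _ _, ← @inner_self_eq_norm_mul_norm ℂ K _ _ _, h1]
    have h3 := congrArg Real.sqrt h2
    rwa [Real.sqrt_mul_self (norm_nonneg _), Real.sqrt_mul_self (norm_nonneg _)] at h3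
  have hUinj : Function.Injective U₀ := by
    intro a b hab
    have h1 : U a = U b := hab
    have : ‖a - b‖ = 0 := by
      rw [← hUnorm (a - b), map_sub, h1, sub_self, norm_zero]
    simpa [sub_eq_zero] using norm_eq_zero.mp this
  have hUsurj : Function.Surjective U₀ := LinearMap.injective_iff_surjective.mp hUinj
  have hUUs : U * star U = 1 := by
    apply ContinuousLinearMap.ext
    intro x
    obtain ⟨z, rfl⟩ := hUsurj x
    have hz : adjoint U (U z) = z := by
      have := congrArg (fun f : K →L[ℂ] K => f z) hUU
      simpa [ContinuousLinearMap.mul_apply, star_eq_adjoint] using this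
    have hz' : U₀ z = U z := rfl
    rw [hz', ContinuousLinearMap.mul_apply, star_eq_adjoint, ContinuousLinearMap.one_apply, hz]
  have hUmem : U ∈ unitary (K →L[ℂ] K) := Unitary.mem_iff.mpr ⟨hUU, hUUs⟩
  -- compression identity
  have hcomp : ∀ k : ℕ, k ≤ N + 1 → ∀ h : H, (U ^ k) (W h) =
      (fun i : Fin (N + 2) => if (i : ℕ) = 0 then (T ^ k) h
        else if (i : ℕ) ≤ k then D ((T ^ (k - (i : ℕ))) h) else 0 : ∀ _ : Fin (N + 2), H) := by
    intro k
    induction k with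
    | zero =>
      intro _ h
      rw [pow_zero, ContinuousLinearMap.one_apply]
      funext i
      refine Fin.cases ?_ (fun j => ?_) i
      · simp [hWapp, hW₀app, Fin.cons_zero]
      · simp [hWapp, hW₀app, Fin.cons_succ, Fin.val_succ]
    | succ k ih =>
      intro hk h
      have hk' : k ≤ N + 1 := Nat.le_of_succ_le hk
      have hkN : k ≤ N := Nat.lt_succ_iff.mp hk
      have ih' : (U ^ k) (W h) = WithLp.toLp 2 (fun i : Fin (N + 2) => if (i : ℕ) = 0 then (T ^ k) h
          else if (i : ℕ) ≤ k then D ((T ^ (k - (i : ℕ))) h) else 0 : ∀ _ : Fin (N + 2), H) :=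
        PiLp.ext fun i => congrFun (ih hk' h) i
      rw [pow_succ', ContinuousLinearMap.mul_apply, ih']
      set Fk : K := WithLp.toLp 2 (fun i : Fin (N + 2) => if (i : ℕ) = 0 then (T ^ k) h
        else if (i : ℕ) ≤ k then D ((T ^ (k - (i : ℕ))) h) else 0 : ∀ _ : Fin (N + 2), H)
        with hFk
      have hFk0 : Fk 0 = (T ^ k) h := by rw [hFk]; simp
      have hFklast : Fk (Fin.last (N + 1)) = 0 := by
        rw [hFk]
        have h1 : ((Fin.last (N + 1) : Fin (N + 2)) : ℕ) = N + 1 := Fin.val_last _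
        simp only [h1]
        have h2 : ¬(N + 1 = 0) := Nat.succ_ne_zero N
        have h3 : ¬(N + 1 ≤ k) := by omega
        simp [h2, h3]
      rw [hUapp, hU₀app]
      funext i
      refine Fin.cases ?_ (fun j => ?_) i
      · rw [Fin.cons_zero, hFk0, hFklast, map_zero, add_zero]
        have : (T ^ (k + 1)) h = T ((T ^ k) h) := by
          rw [pow_succ', ContinuousLinearMap.mul_apply]
        simp [this]
      · refine Fin.cases ?_ (fun j' => ?_) j
        · rw [Fin.cons_succ, Fin.cons_zero, hFk0, hFklast, map_zero, sub_zero]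
          have h1 : (((0 : Fin (N + 1)).succ : Fin (N + 2)) : ℕ) = 1 := rfl
          simp only [h1]
          norm_num
        · rw [Fin.cons_succ, Fin.cons_succ]
          have h1 : ((j'.succ.castSucc : Fin (N + 2)) : ℕ) = (j' : ℕ) + 1 := by
            simp [Fin.coe_castSucc, Fin.val_succ]
          have h2 : ((j'.succ.succ : Fin (N + 2)) : ℕ) = (j' : ℕ) + 2 := by
            simp [Fin.val_succ]
          rw [hFk]
          simp only [h1, h2]
          have h3 : ¬((j' : ℕ) + 1 = 0) := Nat.succ_ne_zero _
          have h4 : ¬((j' : ℕ) + 2 = 0) := Nat.succ_ne_zero _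
          simp only [h3, h4, if_false]
          by_cases h5 : (j' : ℕ) + 1 ≤ k
          · have h6 : (j' : ℕ) + 2 ≤ k + 1 := by omega
            have h7 : k + 1 - ((j' : ℕ) + 2) = k - ((j' : ℕ) + 1) := by omega
            simp [h5, h6, h7]
          · have h6 : ¬((j' : ℕ) + 2 ≤ k + 1) := by omega
            simp [h5, h6]
  refine ⟨K, inferInstance, inferInstance, inferInstance, W, U, hUmem, ?_⟩
  intro k hk1 hkN h
  rw [hadjW, hcomp k (by omega) h]
  simp

end Dilation


/-- **Von Neumann's inequality via N-dilations.** Let `T` be a contraction on a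
finite-dimensional complex Hilbert space `H` and `p` a polynomial of degree at most `N`.
(1) If `U` is a unitary `N`-dilation of `T` on a finite-dimensional space `K` (embedded
via an isometry `W`), then `‖p(T)‖ ≤ sup_{|z|=1} |p(z)|`.
(2) In particular, `‖p(T)‖ ≤ ‖p‖_∞` holds for every contraction on a finite-dimensional
Hilbert space. -/
theorem von_neumann_inequality_via_N_dilations
    (H : Type) [NormedAddCommGroup H] [InnerProductSpace ℂ H] [FiniteDimensional ℂ H]
    (T : H →L[ℂ] H) (hT : ‖T‖ ≤ 1)
    (N : ℕ) (p : Polynomial ℂ) (hdeg : p.natDegree ≤ N) :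
    (∀ (K : Type) (_i1 : NormedAddCommGroup K) (_i2 : InnerProductSpace ℂ K)
        (_i3 : FiniteDimensional ℂ K) (W : H →ₗᵢ[ℂ] K) (U : K →L[ℂ] K),
        U ∈ unitary (K →L[ℂ] K) →
        (∀ k : ℕ, 1 ≤ k → k ≤ N →
          ∀ h : H, adjoint W.toContinuousLinearMap ((U ^ k) (W h)) = (T ^ k) h) →
        ‖Polynomial.aeval T p‖ ≤ sSup {x : ℝ | ∃ z : ℂ, ‖z‖ = 1 ∧ x = ‖p.eval z‖}) ∧
    ‖Polynomial.aeval T p‖ ≤ sSup {x : ℝ | ∃ z : ℂ, ‖z‖ = 1 ∧ x = ‖p.eval z‖} := by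
  set S : Set ℝ := {x : ℝ | ∃ z : ℂ, ‖z‖ = 1 ∧ x = ‖p.eval z‖} with hS
  have hBdd : BddAbove S := by
    refine ⟨∑ i ∈ Finset.range (p.natDegree + 1), ‖p.coeff i‖, ?_⟩
    rintro x ⟨z, hz, rfl⟩
    rw [Polynomial.eval_eq_sum_range]
    calc ‖∑ i ∈ Finset.range (p.natDegree + 1), p.coeff i * z ^ i‖
        ≤ ∑ i ∈ Finset.range (p.natDegree + 1), ‖p.coeff i * z ^ i‖ := norm_sum_le _ _
      _ ≤ ∑ i ∈ Finset.range (p.natDegree + 1), ‖p.coeff i‖ := by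
          refine Finset.sum_le_sum fun i _ => ?_
          rw [norm_mul, norm_pow, hz, one_pow, mul_one]
    
  have hmem1 : ‖p.eval 1‖ ∈ S := ⟨1, by simp, rfl⟩
  have hsup0 : 0 ≤ sSup S := le_trans (norm_nonneg _) (le_csSup hBdd hmem1)
  have hM : ∀ z : ℂ, ‖z‖ = 1 → ‖p.eval z‖ ≤ sSup S := fun z hz => le_csSup hBdd ⟨z, hz, rfl⟩
  have part1 : ∀ (K : Type) (_i1 : NormedAddCommGroup K) (_i2 : InnerProductSpace ℂ K)
      (_i3 : FiniteDimensional ℂ K) (W : H →ₗᵢ[ℂ] K) (U : K →L[ℂ] K),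
      U ∈ unitary (K →L[ℂ] K) →
      (∀ k : ℕ, 1 ≤ k → k ≤ N →
        ∀ h : H, adjoint W.toContinuousLinearMap ((U ^ k) (W h)) = (T ^ k) h) →
      ‖Polynomial.aeval T p‖ ≤ sSup S := by
    intro K _i1 _i2 _i3 W U hU hdil
    calc ‖Polynomial.aeval T p‖ ≤ ‖Polynomial.aeval U p‖ :=
          dilation_norm_le T N p hdeg W U hdil
      _ ≤ sSup S := unitary_aeval_norm_le K U hU p (sSup S) hsup0 hM
  refine ⟨part1, ?_⟩
  obtain ⟨K, i1, i2, i3, W, U, hUmem, hdil⟩ := exists_dilation T hT N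
  exact part1 K i1 i2 i3 W U hUmem hdil
end

section
/- If T acts on an n-dimensional Hilbert space H, the minimal dimension of a space on which a unitary N-dilation of T can act is n + N·d_T, where d_T = rank(I - T*T). Moreover, a unitary N-dilation is N-minimal if and only if it acts on a space of dimension exactly n + N·d_T. -/
open ContinuousLinearMap

noncomputable section MDN

local notation "⟪" x ", " y "⟫" => @inner ℂ _ _ x y

noncomputable section MDN

/-- Isometric equivalence of two finite-dimensional complex inner product spaces
of equal dimension. -/
def MDN.iso (X Y : Type*) [NormedAddCommGroup X] [InnerProductSpace ℂ X]
    [NormedAddCommGroup Y] [InnerProductSpace ℂ Y] [FiniteDimensional ℂ X]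
    [FiniteDimensional ℂ Y]
    (h : Module.finrank ℂ X = Module.finrank ℂ Y) : X ≃ₗᵢ[ℂ] Y :=
  (stdOrthonormalBasis ℂ X).repr.trans
    ((stdOrthonormalBasis ℂ Y).reindex (finCongr h.symm)).repr.symm

lemma MDN.unitary_mem {X : Type*} [NormedAddCommGroup X] [InnerProductSpace ℂ X]
    [FiniteDimensional ℂ X] (U : X →L[ℂ] X)
    (h : ∀ x y : X, ⟪U x, U y⟫ = ⟪x, y⟫) : U ∈ unitary (X →L[ℂ] X) := by
  have hsa : star U * U = 1 := by
    ext x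
    refine ext_inner_left ℂ fun v => ?_
    rw [ContinuousLinearMap.mul_apply, ContinuousLinearMap.star_eq_adjoint,
      ContinuousLinearMap.adjoint_inner_right, h]
    simp
  have hinj : Function.Injective U := by
    intro a b hab
    have h2 : ⟪a - b, a - b⟫ = 0 := by
      rw [← h]; simp only [map_sub, hab, sub_self]; simp
    have := inner_self_eq_zero.mp h2
    rwa [sub_eq_zero] at this
  have hsurj : Function.Surjective U := by
    have := (LinearMap.injective_iff_surjective (f := (U : X →ₗ[ℂ] X))).mp hinj
    exact this
  refine ⟨hsa, ?_⟩
  ext y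
  obtain ⟨x, rfl⟩ := hsurj y
  calc (U * star U) (U x) = U ((star U * U) x) := rfl
  _ = U x := by rw [hsa]; simp
  _ = (1 : X →L[ℂ] X) (U x) := by simp

lemma MDN.inner_of_unitary {X : Type*} [NormedAddCommGroup X] [InnerProductSpace ℂ X]
    [FiniteDimensional ℂ X] (U : X →L[ℂ] X) (hU : U ∈ unitary (X →L[ℂ] X)) :
    ∀ x y : X, ⟪U x, U y⟫ = ⟪x, y⟫ := by
  intro x y
  have h1 : ContinuousLinearMap.adjoint U (U x) = x := by
    have h2 := hU.1
    calc ContinuousLinearMap.adjoint U (U x) = (star U * U) x := by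
          rw [ContinuousLinearMap.star_eq_adjoint, ContinuousLinearMap.mul_apply]
    _ = x := by rw [h2]; simp
  rw [← ContinuousLinearMap.adjoint_inner_left, h1]

lemma MDN.exists_unitary_ext {X : Type*} [NormedAddCommGroup X] [InnerProductSpace ℂ X]
    [FiniteDimensional ℂ X] (S : Submodule ℂ X) (J : X →ₗ[ℂ] X)
    (hJ : ∀ x ∈ S, ∀ y ∈ S, ⟪J x, J y⟫ = ⟪x, y⟫) :
    ∃ U : X →L[ℂ] X, U ∈ unitary (X →L[ℂ] X) ∧ ∀ x ∈ S, U x = J x := by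
  classical
  set R : Submodule ℂ X := S.map J with hR
  have hfr : Module.finrank ℂ R = Module.finrank ℂ S := by
    have hinj : Function.Injective (J.domRestrict S) := by
      rw [← LinearMap.ker_eq_bot, Submodule.eq_bot_iff]
      rintro ⟨a, ha⟩ ha0
      have ha0' : J a = 0 := ha0
      have h2 : ⟪a, a⟫ = 0 := by rw [← hJ a ha a ha]; simp [ha0']
      ext; simpa using inner_self_eq_zero.mp h2
    have h3 := LinearMap.finrank_range_of_inj hinj
    rw [LinearMap.range_domRestrict] at h3
    exact h3
  have h2 : Module.finrank ℂ (Sᗮ : Submodule ℂ X) = Module.finrank ℂ (Rᗮ : Submodule ℂ X) := by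
    have e1 := Submodule.finrank_add_finrank_orthogonal (K := S)
    have e2 := Submodule.finrank_add_finrank_orthogonal (K := R)
    omega
  let e2 : (Sᗮ : Submodule ℂ X) ≃ₗᵢ[ℂ] (Rᗮ : Submodule ℂ X) := MDN.iso _ _ h2
  let P := Submodule.orthogonalProjectionOnto S
  let Q := Submodule.orthogonalProjectionOnto (Sᗮ)
  let Ul : X →ₗ[ℂ] X :=
    (J.comp (S.subtype.comp P.toLinearMap))
      + ((Rᗮ).subtype.comp (e2.toLinearIsometry.toLinearMap.comp Q.toLinearMap))
  let U : X →L[ℂ] X := LinearMap.toContinuousLinearMap Ul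
  have hUx : ∀ x : X, U x = J (P x : X) + ((e2 (Q x) : (Rᗮ : Submodule ℂ X)) : X) := by
    intro x; rfl
  have hJPR : ∀ z : X, J (P z : X) ∈ R := fun z => ⟨(P z : X), (P z).2, rfl⟩
  have horthR : ∀ (u : X) (_ : u ∈ R) (w : (Rᗮ : Submodule ℂ X)), ⟪u, (w : X)⟫ = 0 :=
    fun u hu w => (Submodule.mem_orthogonal R (w : X)).mp w.2 u hu
  have horthS : ∀ (u : X) (_ : u ∈ S) (w : (Sᗮ : Submodule ℂ X)), ⟪u, (w : X)⟫ = 0 :=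
    fun u hu w => (Submodule.mem_orthogonal S (w : X)).mp w.2 u hu
  have hinner : ∀ x y : X, ⟪U x, U y⟫ = ⟪x, y⟫ := by
    intro x y
    have hdx : (P x : X) + (Q x : X) = x :=
      Submodule.starProjection_add_starProjection_orthogonal (K := S) x
    have hdy : (P y : X) + (Q y : X) = y :=
      Submodule.starProjection_add_starProjection_orthogonal (K := S) y
    rw [hUx, hUx]
    rw [inner_add_left, inner_add_right, inner_add_right]
    have t2 : ⟪J (P x : X), ((e2 (Q y) : (Rᗮ : Submodule ℂ X)) : X)⟫ = 0 :=
      horthR _ (hJPR x) _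
    have t3 : ⟪((e2 (Q x) : (Rᗮ : Submodule ℂ X)) : X), J (P y : X)⟫ = 0 := by
      rw [← inner_conj_symm, horthR _ (hJPR y) _]; simp
    have t1 : ⟪J (P x : X), J (P y : X)⟫ = ⟪(P x : X), (P y : X)⟫ :=
      hJ _ (P x).2 _ (P y).2
    have t4 : ⟪((e2 (Q x) : (Rᗮ : Submodule ℂ X)) : X), ((e2 (Q y) : (Rᗮ : Submodule ℂ X)) : X)⟫
        = ⟪((Q x : X)), ((Q y : X))⟫ := by
      rw [← Submodule.coe_inner, e2.inner_map_map, Submodule.coe_inner]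
    rw [t1, t2, t3, t4]
    conv_rhs => rw [← hdx, ← hdy]
    rw [inner_add_left, inner_add_right, inner_add_right]
    have s2 : ⟪(P x : X), ((Q y : X))⟫ = 0 := horthS _ (P x).2 _
    have s3 : ⟪((Q x : X)), (P y : X)⟫ = 0 := by
      rw [← inner_conj_symm, horthS _ (P y).2 _]; simp
    rw [s2, s3]
  have hag : ∀ x ∈ S, U x = J x := by
    intro x hx
    have h1 : (P x : X) = x := Submodule.starProjection_eq_self_iff.mpr hx
    have h0 : Q x = 0 := Submodule.orthogonalProjectionOnto_apply_of_mem_orthogonal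
      (Submodule.le_orthogonal_orthogonal S hx)
    rw [hUx, h1, h0]
    simp
  exact ⟨U, MDN.unitary_mem U hinner, hag⟩



lemma MDN.core {H K : Type*} [NormedAddCommGroup H] [InnerProductSpace ℂ H]
    [FiniteDimensional ℂ H] [NormedAddCommGroup K] [InnerProductSpace ℂ K]
    [FiniteDimensional ℂ K]
    (T : H →L[ℂ] H) (N : ℕ) (hN : 0 < N)
    (D : H →L[ℂ] H) (hDsa : IsSelfAdjoint D) (hD2 : D * D = 1 - adjoint T * T)
    (W : H →ₗᵢ[ℂ] K) (U : K →L[ℂ] K) (hU : U ∈ unitary (K →L[ℂ] K))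
    (hdil : ∀ k : ℕ, 1 ≤ k → k ≤ N →
      ∀ h : H, adjoint W.toContinuousLinearMap ((U ^ k) (W h)) = (T ^ k) h) :
    Module.finrank ℂ
        (Submodule.span ℂ {x : K | ∃ (h : H) (k : ℕ), k ≤ N ∧ x = (U ^ k) (W h)})
      = Module.finrank ℂ H
        + N * Module.finrank ℂ (LinearMap.range (1 - adjoint T * T).toLinearMap) := by
  classical
  have hU1 : ∀ x y : K, ⟪U x, U y⟫ = ⟪x, y⟫ := MDN.inner_of_unitary U hU
  have hUk : ∀ (m : ℕ) (x y : K), ⟪(U ^ m) x, (U ^ m) y⟫ = ⟪x, y⟫ := by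
    intro m
    induction m with
    | zero => intro x y; simp
    | succ m ih =>
      intro x y
      have h1 : ∀ z : K, (U ^ (m + 1)) z = (U ^ m) (U z) := by
        intro z; rw [pow_succ, ContinuousLinearMap.mul_apply]
      rw [h1, h1, ih, hU1]
  have happly1 : ∀ (a : ℕ) (y : K), (U ^ (a + 1)) y = U ((U ^ a) y) := by
    intro a y; rw [pow_succ', ContinuousLinearMap.mul_apply]
  have happly2 : ∀ (a : ℕ) (y : K), (U ^ a) (U y) = (U ^ (a + 1)) y := by
    intro a y; rw [pow_succ, ContinuousLinearMap.mul_apply]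
  have hTsucc : ∀ (a : ℕ) (h : H), (T ^ a) (T h) = (T ^ (a + 1)) h := by
    intro a h; rw [pow_succ, ContinuousLinearMap.mul_apply]
  have hip : ∀ k : ℕ, k ≤ N → ∀ g h : H, ⟪(W g : K), (U ^ k) (W h)⟫ = ⟪g, (T ^ k) h⟫ := by
    intro k hk g h
    rcases Nat.eq_zero_or_pos k with hk0 | hk1
    · subst hk0; simp [W.inner_map_map]
    · have h1 := hdil k hk1 hk h
      calc ⟪(W g : K), (U ^ k) (W h)⟫
          = ⟪W.toContinuousLinearMap g, (U ^ k) (W h)⟫ := by simp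
      _ = ⟪g, adjoint W.toContinuousLinearMap ((U ^ k) (W h))⟫ := by
            rw [ContinuousLinearMap.adjoint_inner_right]
      _ = ⟪g, (T ^ k) h⟫ := by rw [h1]
  set Z : H →L[ℂ] K := U.comp W.toContinuousLinearMap
      - W.toContinuousLinearMap.comp T with hZdef
  have hZ : ∀ h : H, Z h = U (W h) - W (T h) := by
    intro h; simp [hZdef]
  set A : H →L[ℂ] H := 1 - adjoint T * T with hAdef
  have hAh : ∀ h : H, A h = h - adjoint T (T h) := by
    intro h; simp [hAdef]
  have hDA : ∀ h : H, D (D h) = A h := by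
    intro h; rw [← ContinuousLinearMap.mul_apply, hD2]
  have hAinner : ∀ g h : H, ⟪A g, h⟫ = ⟪g, h⟫ - ⟪T g, T h⟫ := by
    intro g h
    rw [hAh, inner_sub_left, ContinuousLinearMap.adjoint_inner_left]
  have hZnorm : ∀ h : H, ⟪Z h, Z h⟫ = ⟪A h, h⟫ := by
    intro h
    have e1 : ⟪U (W h), U (W h)⟫ = ⟪h, h⟫ := by rw [hU1, W.inner_map_map]
    have e2 : ⟪(W (T h) : K), U (W h)⟫ = ⟪T h, T h⟫ := by
      have h3 := hip 1 hN (T h) h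
      simpa using h3
    have e3 : ⟪U (W h), (W (T h) : K)⟫ = ⟪T h, T h⟫ := by
      rw [← inner_conj_symm, e2, inner_conj_symm]
    have e4 : ⟪(W (T h) : K), (W (T h) : K)⟫ = ⟪T h, T h⟫ := W.inner_map_map _ _
    rw [hZ, inner_sub_left, inner_sub_right, inner_sub_right, e1, e2, e3, e4, hAinner]
    ring
  have hDadj : adjoint D = D := by
    rw [← ContinuousLinearMap.star_eq_adjoint]; exact hDsa
  have hDD : ∀ h : H, ⟪D h, D h⟫ = ⟪h, A h⟫ := by
    intro h
    have step : ⟪h, adjoint D (D h)⟫ = ⟪D h, D h⟫ :=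
      ContinuousLinearMap.adjoint_inner_right _ _ _
    rw [← step, hDadj, hDA]
  have hker : ∀ h : H, Z h = 0 ↔ A h = 0 := by
    intro h
    constructor
    · intro h0
      have h1 : ⟪A h, h⟫ = 0 := by rw [← hZnorm, h0]; simp
      have h1' : ⟪h, A h⟫ = 0 := by rw [← inner_conj_symm, h1, map_zero]
      have h2 : D h = 0 := inner_self_eq_zero.mp (by rw [hDD, h1'])
      rw [← hDA, h2, map_zero]
    · intro h0
      have h1 : ⟪Z h, Z h⟫ = 0 := by rw [hZnorm, h0]; simp
      exact inner_self_eq_zero.mp h1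
  set d : ℕ := Module.finrank ℂ (LinearMap.range (1 - adjoint T * T).toLinearMap) with hd
  have hrankZ : Module.finrank ℂ (LinearMap.range (Z : H →ₗ[ℂ] K)) = d := by
    have hkZ := LinearMap.finrank_range_add_finrank_ker (Z : H →ₗ[ℂ] K)
    have hkA := LinearMap.finrank_range_add_finrank_ker (1 - adjoint T * T).toLinearMap
    have hkereq : LinearMap.ker (Z : H →ₗ[ℂ] K)
        = LinearMap.ker (1 - adjoint T * T).toLinearMap := by
      ext h
      simp only [LinearMap.mem_ker]
      have h1 : (Z : H →ₗ[ℂ] K) h = Z h := rfl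
      have h2 : (1 - adjoint T * T).toLinearMap h = A h := rfl
      rw [h1, h2]
      exact hker h
    rw [hkereq] at hkZ
    omega
  set V : ℕ → Submodule ℂ K := fun m =>
    Nat.casesOn m (LinearMap.range W.toLinearMap)
      (fun m' => LinearMap.range (((U ^ m').comp Z : H →L[ℂ] K) : H →ₗ[ℂ] K)) with hV
  have hV0 : V 0 = LinearMap.range W.toLinearMap := rfl
  have hVs : ∀ m : ℕ,
      V (m + 1) = LinearMap.range (((U ^ m).comp Z : H →L[ℂ] K) : H →ₗ[ℂ] K) := fun m => rfl
  have hmemV0 : ∀ h : H, (W h : K) ∈ V 0 := fun h => ⟨h, rfl⟩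
  have hmemVs : ∀ (m : ℕ) (h : H), (U ^ m) (Z h) ∈ V (m + 1) := fun m h => ⟨h, rfl⟩
  have hVsmem : ∀ (m : ℕ) (x : K), x ∈ V (m + 1) → ∃ h : H, x = (U ^ m) (Z h) := by
    intro m x hx
    obtain ⟨h, rfl⟩ := hx
    exact ⟨h, rfl⟩
  have hV0mem : ∀ x : K, x ∈ V 0 → ∃ h : H, x = (W h : K) := by
    intro x hx
    obtain ⟨h, rfl⟩ := hx
    exact ⟨h, rfl⟩
  have hfrV0 : Module.finrank ℂ (V 0) = Module.finrank ℂ H := by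
    rw [hV0]
    exact LinearMap.finrank_range_of_inj W.injective
  have hUminj : ∀ m : ℕ, Function.Injective (U ^ m) := by
    intro m a b hab
    have h1 : ⟪a - b, a - b⟫ = 0 := by
      rw [← hUk m]; simp only [map_sub, hab, sub_self]; simp
    have h2 := inner_self_eq_zero.mp h1
    rwa [sub_eq_zero] at h2
  have hfrVs : ∀ m : ℕ, Module.finrank ℂ (V (m + 1)) = d := by
    intro m
    rw [hVs]
    have hcomp : (((U ^ m).comp Z : H →L[ℂ] K) : H →ₗ[ℂ] K)
        = ((U ^ m : K →L[ℂ] K) : K →ₗ[ℂ] K).comp (Z : H →ₗ[ℂ] K) := rfl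
    rw [hcomp, LinearMap.range_comp]
    have hinj : Function.Injective ((U ^ m : K →L[ℂ] K) : K →ₗ[ℂ] K) := hUminj m
    rw [← hrankZ]
    exact (LinearEquiv.finrank_eq
      (Submodule.equivMapOfInjective _ hinj (LinearMap.range (Z : H →ₗ[ℂ] K)))).symm
  -- orthogonality
  have hWZ : ∀ (m : ℕ), m < N → ∀ g h : H, ⟪(W g : K), (U ^ m) (Z h)⟫ = 0 := by
    intro m hm g h
    have h1 : (U ^ m) (Z h) = (U ^ (m + 1)) (W h) - (U ^ m) (W (T h)) := by
      rw [hZ, map_sub, happly2]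
    rw [h1, inner_sub_right, hip (m + 1) hm g h, hip m (le_of_lt hm) g (T h), hTsucc, sub_self]
  have hZZ : ∀ (s : ℕ), s + 2 ≤ N → ∀ g h : H, ⟪Z g, (U ^ (s + 1)) (Z h)⟫ = 0 := by
    intro s hs g h
    have t1 : ⟪U (W g), (U ^ (s + 1)) (U (W h))⟫ = ⟪g, (T ^ (s + 1)) h⟫ := by
      rw [happly1 s (U (W h)), hU1, happly2, hip (s + 1) (by omega) g h]
    have t2 : ⟪U (W g), (U ^ (s + 1)) (W (T h) : K)⟫ = ⟪g, (T ^ (s + 1)) h⟫ := by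
      rw [happly1 s (W (T h) : K), hU1, hip s (by omega) g (T h), hTsucc]
    have t3 : ⟪(W (T g) : K), (U ^ (s + 1)) (U (W h))⟫ = ⟪T g, (T ^ (s + 2)) h⟫ := by
      rw [happly2, hip (s + 2) hs (T g) h]
    have t4 : ⟪(W (T g) : K), (U ^ (s + 1)) (W (T h) : K)⟫ = ⟪T g, (T ^ (s + 2)) h⟫ := by
      rw [hip (s + 1) (by omega) (T g) (T h), hTsucc]
    rw [hZ g, hZ h, map_sub, inner_sub_left, inner_sub_right, inner_sub_right,
      t1, t2, t3, t4]
    ring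
  have horth : ∀ i j : ℕ, i < j → j ≤ N → ∀ x ∈ V i, ∀ y ∈ V j, ⟪x, y⟫ = 0 := by
    intro i j hij hjN x hx y hy
    match i, j, hij, hjN with
    | 0, (m+1), hij, hjN =>
      rcases hV0mem x hx with ⟨g, rfl⟩
      rcases hVsmem m y hy with ⟨h, rfl⟩
      exact hWZ m (by omega) g h
    | (i'+1), (j'+1), hij, hjN =>
      rcases hVsmem i' x hx with ⟨g, rfl⟩
      rcases hVsmem j' y hy with ⟨h, rfl⟩
      obtain ⟨s, rfl⟩ : ∃ s, j' = i' + (s + 1) := ⟨j' - i' - 1, by omega⟩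
      have hexp : (U ^ (i' + (s + 1))) (Z h) = (U ^ i') ((U ^ (s + 1)) (Z h)) := by
        rw [pow_add, ContinuousLinearMap.mul_apply]
      rw [hexp, hUk i']
      exact hZZ s (by omega) g h
  -- the chain of sups
  set SS : ℕ → Submodule ℂ K := fun m => (Finset.range (m + 1)).sup V with hSS
  have hSS0 : SS 0 = V 0 := by simp [hSS]
  have hSSsucc : ∀ m : ℕ, SS (m + 1) = V (m + 1) ⊔ SS m := by
    intro m
    rw [hSS]
    simp only []
    rw [Finset.range_add_one, Finset.sup_insert]
  have hVleSS : ∀ j m : ℕ, j ≤ m → V j ≤ SS m := by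
    intro j m hjm
    exact Finset.le_sup (Finset.mem_range.mpr (by omega))
  have hSSorth : ∀ m j : ℕ, m < j → j ≤ N → ∀ x ∈ SS m, ∀ y ∈ V j, ⟪x, y⟫ = 0 := by
    intro m
    induction m with
    | zero =>
      intro j h1 h2 x hx y hy
      exact horth 0 j h1 h2 x (hSS0 ▸ hx) y hy
    | succ m ih =>
      intro j h1 h2 x hx y hy
      rw [hSSsucc] at hx
      rcases Submodule.mem_sup.mp hx with ⟨a, ha, b, hb, rfl⟩
      rw [inner_add_left, horth (m + 1) j h1 h2 a ha y hy, ih j (by omega) h2 b hb y hy,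
        add_zero]
  have hfrSS : ∀ m : ℕ, m ≤ N →
      Module.finrank ℂ (SS m) = Module.finrank ℂ H + m * d := by
    intro m
    induction m with
    | zero => intro _; rw [hSS0, hfrV0]; simp
    | succ m ih =>
      intro hm
      have hdisj : V (m + 1) ⊓ SS m = ⊥ := by
        rw [Submodule.eq_bot_iff]
        intro x hx
        have h0 : ⟪x, x⟫ = 0 := hSSorth m (m + 1) (by omega) hm x hx.2 x hx.1
        exact inner_self_eq_zero.mp h0
      have hsum := Submodule.finrank_sup_add_finrank_inf_eq (V (m + 1)) (SS m)
      rw [hdisj, finrank_bot, add_zero] at hsum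
      rw [hSSsucc, hsum, hfrVs m, ih (by omega)]
      ring
  -- identification of the span
  have hgen : ∀ k : ℕ, k ≤ N → ∀ h : H, (U ^ k) (W h : K) ∈ SS N := by
    intro k
    induction k with
    | zero =>
      intro _ h
      have h1 : (U ^ 0) (W h : K) = (W h : K) := by simp
      rw [h1]
      exact hVleSS 0 N (by omega) (hmemV0 h)
    | succ k ih =>
      intro hk h
      have hdec : (U ^ (k + 1)) (W h : K) = (U ^ k) (W (T h) : K) + (U ^ k) (Z h) := by
        rw [hZ, map_sub, happly2]
        abel
      rw [hdec]
      exact Submodule.add_mem _ (ih (by omega) (T h)) (hVleSS (k + 1) N hk (hmemVs k h))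
  have hspan : Submodule.span ℂ {x : K | ∃ (h : H) (k : ℕ), k ≤ N ∧ x = (U ^ k) (W h)}
      = SS N := by
    apply le_antisymm
    · rw [Submodule.span_le]
      rintro x ⟨h, k, hk, rfl⟩
      exact hgen k hk h
    · refine Finset.sup_le ?_
      intro j hj
      rw [Finset.mem_range] at hj
      match j, hj with
      | 0, hj =>
        rintro x hx
        rcases hV0mem x hx with ⟨h, rfl⟩
        exact Submodule.subset_span ⟨h, 0, by omega, by simp⟩
      | (m+1), hj =>
        rintro x hx
        rcases hVsmem m x hx with ⟨h, rfl⟩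
        have hdec : (U ^ m) (Z h) = (U ^ (m + 1)) (W h : K) - (U ^ m) (W (T h) : K) := by
          rw [hZ, map_sub, happly2]
        rw [hdec]
        exact Submodule.sub_mem _
          (Submodule.subset_span ⟨h, m + 1, by omega, rfl⟩)
          (Submodule.subset_span ⟨T h, m, by omega, rfl⟩)
  rw [hspan]
  exact hfrSS N le_rfl



set_option maxHeartbeats 1000000 in
lemma MDN.construct {H : Type} [NormedAddCommGroup H] [InnerProductSpace ℂ H]
    [FiniteDimensional ℂ H] (T : H →L[ℂ] H) (M : ℕ)
    (D : H →L[ℂ] H) (hDsa : IsSelfAdjoint D) (hD2 : D * D = 1 - adjoint T * T)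
    (n dT : ℕ) (hn : Module.finrank ℂ H = n)
    (hdT : Module.finrank ℂ (LinearMap.range (D : H →ₗ[ℂ] H)) = dT) :
    ∃ (W : H →ₗᵢ[ℂ] EuclideanSpace ℂ (Fin (n + (M + 1) * dT)))
      (U : EuclideanSpace ℂ (Fin (n + (M + 1) * dT)) →L[ℂ]
        EuclideanSpace ℂ (Fin (n + (M + 1) * dT))),
      U ∈ unitary _ ∧
      ∀ k : ℕ, k ≤ M + 1 → ∀ h : H,
        adjoint W.toContinuousLinearMap ((U ^ k) (W h)) = (T ^ k) h := by
  classical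
  set Dl : Submodule ℂ H := LinearMap.range (D : H →ₗ[ℂ] H) with hDl
  let G := PiLp 2 (fun _ : Fin (M + 1) => Dl)
  let F := WithLp 2 (H × G)
  let eF : F ≃ₗ[ℂ] H × G := WithLp.linearEquiv 2 ℂ (H × G)
  let eG : G ≃ₗ[ℂ] (Fin (M + 1) → Dl) := WithLp.linearEquiv 2 ℂ (Fin (M + 1) → Dl)
  let DD : H →ₗ[ℂ] Dl := LinearMap.codRestrict Dl (D : H →ₗ[ℂ] H)
    (fun h => LinearMap.mem_range_self _ h)
  have hDDcoe : ∀ a : H, (DD a : H) = D a := fun a => rfl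
  -- key inner product identity
  have hDadj : adjoint D = D := by
    rw [← ContinuousLinearMap.star_eq_adjoint]; exact hDsa
  have hkey : ∀ a b : H, ⟪T a, T b⟫ + ⟪D a, D b⟫ = ⟪a, b⟫ := by
    intro a b
    have h1 : ⟪a, adjoint D (D b)⟫ = ⟪D a, D b⟫ :=
      ContinuousLinearMap.adjoint_inner_right _ _ _
    have h2 : ⟪D a, D b⟫ = ⟪a, D (D b)⟫ := by rw [← h1, hDadj]
    have h3 : D (D b) = b - adjoint T (T b) := by
      rw [← ContinuousLinearMap.mul_apply, hD2]; simp
    have h4 : ⟪a, adjoint T (T b)⟫ = ⟪T a, T b⟫ :=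
      ContinuousLinearMap.adjoint_inner_right _ _ _
    rw [h2, h3, inner_sub_right, h4]
    ring
  -- the model maps
  let f1 : H × G →ₗ[ℂ] H := T.toLinearMap.comp (LinearMap.fst ℂ H G)
  let c : ∀ _ : Fin (M + 1), H × G →ₗ[ℂ] Dl := fun i =>
    Fin.cases (DD.comp (LinearMap.fst ℂ H G))
      (fun j => (LinearMap.proj j.castSucc).comp
        (eG.toLinearMap.comp (LinearMap.snd ℂ H G))) i
  let f2 : H × G →ₗ[ℂ] G := eG.symm.toLinearMap.comp (LinearMap.pi c)
  let J : F →ₗ[ℂ] F := eF.symm.toLinearMap.comp ((LinearMap.prod f1 f2).comp eF.toLinearMap)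
  have hJfst : ∀ x : F, (J x).fst = T x.fst := fun x => rfl
  have hJsnd : ∀ (x : F) (i : Fin (M + 1)), (J x).snd i = c i (x.fst, x.snd) := fun x i => rfl
  have hcdef : ∀ i : Fin (M + 1), c i = Fin.cases (DD.comp (LinearMap.fst ℂ H G))
      (fun j => (LinearMap.proj j.castSucc).comp
        (eG.toLinearMap.comp (LinearMap.snd ℂ H G))) i := fun i => rfl
  have hc0 : c 0 = DD.comp (LinearMap.fst ℂ H G) := by
    rw [hcdef, Fin.cases_zero]
  have hcs : ∀ j : Fin M, c j.succ = (LinearMap.proj j.castSucc).comp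
      (eG.toLinearMap.comp (LinearMap.snd ℂ H G)) := by
    intro j
    rw [hcdef, Fin.cases_succ]
  have hJsnd0 : ∀ x : F, (J x).snd 0 = DD x.fst := by
    intro x
    rw [hJsnd, hc0]
    rfl
  have hJsndsucc : ∀ (x : F) (j : Fin M), (J x).snd j.succ = x.snd j.castSucc := by
    intro x j
    rw [hJsnd, hcs]
    rfl
  -- the embedding of H
  let ι : H →ₗᵢ[ℂ] F :=
    { toLinearMap := eF.symm.toLinearMap.comp (LinearMap.inl ℂ H G)
      norm_map' := fun h => by
        show ‖(WithLp.equiv 2 (H × G)).symm (h, 0)‖ = ‖h‖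
        exact WithLp.norm_toLp_fst 2 H G h }
  have hιfst : ∀ h : H, (ι h : F).fst = h := fun h => rfl
  have hιsnd : ∀ (h : H) (i : Fin (M + 1)), (ι h : F).snd i = 0 := fun h i => rfl
  -- the subspace on which J is isometric
  let S : Submodule ℂ F := LinearMap.ker
    ((LinearMap.proj (Fin.last M) : (Fin (M + 1) → Dl) →ₗ[ℂ] Dl).comp
      ((eG.toLinearMap.comp (LinearMap.snd ℂ H G)).comp eF.toLinearMap))
  have hSmem : ∀ x : F, x ∈ S ↔ x.snd (Fin.last M) = 0 := by
    intro x
    constructor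
    · intro hx; exact hx
    · intro hx; exact hx
  -- inner products on F
  have hinnF : ∀ x y : F, ⟪x, y⟫ = ⟪x.fst, y.fst⟫
      + ∑ i : Fin (M + 1), ⟪x.snd i, y.snd i⟫ := by
    intro x y
    have h1 : (⟪x.snd, y.snd⟫ : ℂ) = ∑ i : Fin (M + 1), ⟪x.snd i, y.snd i⟫ :=
      PiLp.inner_apply x.snd y.snd
    rw [WithLp.prod_inner_apply, ← h1]
    rfl
  have hJinner : ∀ x ∈ S, ∀ y ∈ S, ⟪J x, J y⟫ = ⟪x, y⟫ := by
    intro x hx y hy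
    rw [hinnF (J x) (J y), hinnF x y, hJfst, hJfst]
    rw [Fin.sum_univ_succ]
    simp only [hJsnd0, hJsndsucc]
    conv_rhs => rw [Fin.sum_univ_castSucc]
    rw [(hSmem x).mp hx, (hSmem y).mp hy, inner_zero_left, add_zero]
    have hDDi : (⟪DD x.fst, DD y.fst⟫ : ℂ) = ⟪D x.fst, D y.fst⟫ := by
      rw [Submodule.coe_inner]
      rfl
    rw [hDDi, ← hkey x.fst y.fst]
    ring
  obtain ⟨U0, hU0, hU0S⟩ := MDN.exists_unitary_ext S J hJinner
  -- iterates of U0 on the embedded copy of H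
  let xk : ℕ → H → F := fun k h => eF.symm ((T ^ k) h,
    eG.symm (fun i : Fin (M + 1) =>
      if (i : ℕ) < k then DD ((T ^ (k - 1 - (i : ℕ))) h) else 0))
  have hxkfst : ∀ (k : ℕ) (h : H), (xk k h).fst = (T ^ k) h := fun k h => rfl
  have hxksnd : ∀ (k : ℕ) (h : H) (i : Fin (M + 1)),
      (xk k h).snd i = if (i : ℕ) < k then DD ((T ^ (k - 1 - (i : ℕ))) h) else 0 :=
    fun k h i => rfl
  have hxk0 : ∀ h : H, xk 0 h = ι h := by
    intro h
    apply (WithLp.equiv 2 (H × G)).injective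
    apply Prod.ext
    · show (xk 0 h).fst = (ι h : F).fst
      rw [hxkfst, hιfst]
      simp
    · show (xk 0 h).snd = (ι h : F).snd
      refine PiLp.ext fun i => ?_
      rw [hxksnd, hιsnd, if_neg (Nat.not_lt_zero _)]
  have hxkS : ∀ k : ℕ, k ≤ M → ∀ h : H, xk k h ∈ S := by
    intro k hk h
    rw [hSmem, hxksnd]
    rw [if_neg]
    rw [Fin.val_last]
    omega
  have hJxk : ∀ (k : ℕ) (h : H), J (xk k h) = xk (k + 1) h := by
    intro k h
    apply (WithLp.equiv 2 (H × G)).injective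
    apply Prod.ext
    · show (J (xk k h)).fst = (xk (k + 1) h).fst
      rw [hJfst, hxkfst, hxkfst, pow_succ', ContinuousLinearMap.mul_apply]
    · show (J (xk k h)).snd = (xk (k + 1) h).snd
      refine PiLp.ext fun i => ?_
      induction i using Fin.cases with
      | zero =>
        rw [hJsnd0, hxkfst, hxksnd]
        have h0 : ((0 : Fin (M + 1)) : ℕ) = 0 := rfl
        rw [h0, if_pos (by omega : 0 < k + 1)]
        have h3 : k + 1 - 1 - 0 = k := by omega
        rw [h3]
      | succ j =>
        rw [hJsndsucc, hxksnd, hxksnd]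
        simp only [Fin.coe_castSucc, Fin.val_succ]
        by_cases hc : (j : ℕ) < k
        · rw [if_pos hc, if_pos (Nat.succ_lt_succ hc)]
          have hexp : k + 1 - 1 - ((j : ℕ) + 1) = k - 1 - (j : ℕ) := by omega
          rw [hexp]
        · rw [if_neg hc, if_neg (fun hcc => hc (Nat.lt_of_succ_lt_succ hcc))]
  have hU0k : ∀ k : ℕ, k ≤ M + 1 → ∀ h : H, (U0 ^ k) (ι h) = xk k h := by
    intro k
    induction k with
    | zero => intro _ h; rw [pow_zero, ContinuousLinearMap.one_apply, hxk0]
    | succ k ih =>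
      intro hk h
      rw [pow_succ', ContinuousLinearMap.mul_apply, ih (by omega) h,
        hU0S _ (hxkS k (by omega) h), hJxk]
  have hdilF : ∀ k : ℕ, k ≤ M + 1 → ∀ g h : H,
      ⟪(ι g : F), (U0 ^ k) (ι h)⟫ = ⟪g, (T ^ k) h⟫ := by
    intro k hk g h
    rw [hU0k k hk h, hinnF, hιfst, hxkfst]
    have hz : ∀ i : Fin (M + 1), (⟪(ι g : F).snd i, (xk k h).snd i⟫ : ℂ) = 0 := by
      intro i
      rw [hιsnd, inner_zero_left]
    rw [Finset.sum_congr rfl (fun i _ => hz i), Finset.sum_const, smul_zero, add_zero]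
  -- dimension count and transport to Euclidean space
  have hfrF : Module.finrank ℂ F = n + (M + 1) * dT := by
    have h1 : Module.finrank ℂ F = Module.finrank ℂ (H × G) := LinearEquiv.finrank_eq eF
    have h2 : Module.finrank ℂ G = Module.finrank ℂ (Fin (M + 1) → Dl) :=
      LinearEquiv.finrank_eq eG
    rw [h1, Module.finrank_prod, h2, Module.finrank_pi_fintype, hn]
    simp only [Finset.sum_const, Finset.card_univ, Fintype.card_fin, smul_eq_mul, hdT]
  let E := EuclideanSpace ℂ (Fin (n + (M + 1) * dT))
  have hfrE : Module.finrank ℂ F = Module.finrank ℂ E := by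
    rw [hfrF, finrank_euclideanSpace_fin]
  let Φ : F ≃ₗᵢ[ℂ] E := MDN.iso F E hfrE
  let W : H →ₗᵢ[ℂ] E := Φ.toLinearIsometry.comp ι
  let U : E →L[ℂ] E := (Φ.toLinearIsometry.toContinuousLinearMap).comp
    (U0.comp (Φ.symm.toLinearIsometry.toContinuousLinearMap))
  have hconj : ∀ z : F, U (Φ z) = Φ (U0 z) := by
    intro z
    show Φ (U0 (Φ.symm (Φ z))) = Φ (U0 z)
    rw [Φ.symm_apply_apply]
  have hpow : ∀ (k : ℕ) (z : F), (U ^ k) (Φ z) = Φ ((U0 ^ k) z) := by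
    intro k
    induction k with
    | zero => intro z; simp
    | succ k ih =>
      intro z
      rw [pow_succ, ContinuousLinearMap.mul_apply, hconj, ih (U0 z), pow_succ,
        ContinuousLinearMap.mul_apply]
  have hUinner : ∀ x y : E, ⟪U x, U y⟫ = ⟪x, y⟫ := by
    intro x y
    have hx : x = Φ (Φ.symm x) := (Φ.apply_symm_apply x).symm
    have hy : y = Φ (Φ.symm y) := (Φ.apply_symm_apply y).symm
    rw [hx, hy, hconj, hconj, Φ.inner_map_map, Φ.inner_map_map]
    exact MDN.inner_of_unitary U0 hU0 _ _
  refine ⟨W, U, MDN.unitary_mem U hUinner, ?_⟩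
  intro k hk h
  refine ext_inner_left ℂ fun g => ?_
  rw [ContinuousLinearMap.adjoint_inner_right]
  have hWg : W.toContinuousLinearMap g = Φ (ι g) := rfl
  have hWh : (W h : E) = Φ (ι h) := rfl
  rw [hWg, hWh, hpow k (ι h), Φ.inner_map_map]
  exact hdilF k hk g h

set_option maxHeartbeats 1000000 in
set_option synthInstance.maxHeartbeats 400000 in
/-- **Minimal dimension of unitary N-dilations.** Let `T` be a contraction on an
`n`-dimensional complex Hilbert space `H`, and `d_T = rank (I - T*T)`. Then:
(1) `T` has a unitary `N`-dilation on a space of dimension `n + N·d_T`;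
(2) every finite-dimensional unitary `N`-dilation of `T` acts on a space of dimension at
least `n + N·d_T`;
(3) a finite-dimensional unitary `N`-dilation is `N`-minimal (the span of
`{U^k h : h ∈ H, 0 ≤ k ≤ N}` is everything) iff its space has dimension exactly
`n + N·d_T`. -/
theorem minimal_dimension_of_N_dilations
    (H : Type) [NormedAddCommGroup H] [InnerProductSpace ℂ H] [FiniteDimensional ℂ H]
    (n : ℕ) (hn : Module.finrank ℂ H = n)
    (T : H →L[ℂ] H) (hT : ‖T‖ ≤ 1) (N : ℕ) (hN : 0 < N)
    (dT : ℕ) (hdT : dT = Module.finrank ℂ (LinearMap.range (1 - adjoint T * T).toLinearMap)) :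
    (∃ (W : H →ₗᵢ[ℂ] EuclideanSpace ℂ (Fin (n + N * dT)))
        (U : EuclideanSpace ℂ (Fin (n + N * dT)) →L[ℂ] EuclideanSpace ℂ (Fin (n + N * dT))),
        U ∈ unitary _ ∧
        ∀ k : ℕ, 1 ≤ k → k ≤ N →
          ∀ h : H, adjoint W.toContinuousLinearMap ((U ^ k) (W h)) = (T ^ k) h) ∧
    (∀ (K : Type) (_i1 : NormedAddCommGroup K) (_i2 : InnerProductSpace ℂ K)
        (_i3 : FiniteDimensional ℂ K) (W : H →ₗᵢ[ℂ] K) (U : K →L[ℂ] K),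
        U ∈ unitary (K →L[ℂ] K) →
        (∀ k : ℕ, 1 ≤ k → k ≤ N →
          ∀ h : H, adjoint W.toContinuousLinearMap ((U ^ k) (W h)) = (T ^ k) h) →
        n + N * dT ≤ Module.finrank ℂ K) ∧
    (∀ (K : Type) (_i1 : NormedAddCommGroup K) (_i2 : InnerProductSpace ℂ K)
        (_i3 : FiniteDimensional ℂ K) (W : H →ₗᵢ[ℂ] K) (U : K →L[ℂ] K),
        U ∈ unitary (K →L[ℂ] K) →
        (∀ k : ℕ, 1 ≤ k → k ≤ N →
          ∀ h : H, adjoint W.toContinuousLinearMap ((U ^ k) (W h)) = (T ^ k) h) →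
        ((Submodule.span ℂ {x : K | ∃ (h : H) (k : ℕ), k ≤ N ∧ x = (U ^ k) (W h)} = ⊤) ↔
          Module.finrank ℂ K = n + N * dT)) := by
  -- self-adjointness and positivity of the defect operator
  have hsa : IsSelfAdjoint (1 - adjoint T * T) := by
    rw [IsSelfAdjoint, star_sub, star_one, star_mul, ContinuousLinearMap.star_eq_adjoint,
      ContinuousLinearMap.star_eq_adjoint, adjoint_adjoint]
  have hA : (0 : H →L[ℂ] H) ≤ 1 - adjoint T * T := by
    rw [ContinuousLinearMap.nonneg_iff_isPositive]
    refine ⟨ContinuousLinearMap.isSelfAdjoint_iff_isSymmetric.mp hsa, fun x => ?_⟩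
    have hTx : ‖T x‖ ≤ ‖x‖ := by
      calc ‖T x‖ ≤ ‖T‖ * ‖x‖ := T.le_opNorm x
      _ ≤ 1 * ‖x‖ := mul_le_mul_of_nonneg_right hT (norm_nonneg x)
      _ = ‖x‖ := one_mul _
    have h2 : ContinuousLinearMap.reApplyInnerSelf (1 - adjoint T * T) x
        = ‖x‖ ^ 2 - ‖T x‖ ^ 2 := by
      rw [ContinuousLinearMap.reApplyInnerSelf_apply, ContinuousLinearMap.sub_apply,
        ContinuousLinearMap.one_apply, ContinuousLinearMap.mul_apply, inner_sub_left,
        ContinuousLinearMap.adjoint_inner_left, map_sub]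
      rw [← norm_sq_eq_re_inner (𝕜 := ℂ), ← norm_sq_eq_re_inner (𝕜 := ℂ)]
    rw [h2]
    have := pow_le_pow_left₀ (norm_nonneg (T x)) hTx 2
    linarith
  set D : H →L[ℂ] H := CFC.sqrt (1 - adjoint T * T) with hDdef
  have hDnn : (0 : H →L[ℂ] H) ≤ D := CFC.sqrt_nonneg _
  have hDsa : IsSelfAdjoint D := IsSelfAdjoint.of_nonneg hDnn
  have hD2 : D * D = 1 - adjoint T * T := by
    have h1 := CFC.sq_sqrt (1 - adjoint T * T) hA
    rw [sq] at h1
    exact h1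
  have hDadj : adjoint D = D := by
    rw [← ContinuousLinearMap.star_eq_adjoint]; exact hDsa
  have hDA : ∀ h : H, D (D h) = (1 - adjoint T * T) h := by
    intro h; rw [← ContinuousLinearMap.mul_apply, hD2]
  have hrank : Module.finrank ℂ (LinearMap.range (D : H →ₗ[ℂ] H)) = dT := by
    have hDD : ∀ h : H, ⟪D h, D h⟫ = ⟪h, (1 - adjoint T * T) h⟫ := by
      intro h
      have step : ⟪h, adjoint D (D h)⟫ = ⟪D h, D h⟫ :=
        ContinuousLinearMap.adjoint_inner_right _ _ _
      rw [← step, hDadj, hDA]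
    have hkereq : LinearMap.ker (D : H →ₗ[ℂ] H)
        = LinearMap.ker (1 - adjoint T * T).toLinearMap := by
      ext h
      simp only [LinearMap.mem_ker]
      have e1 : (D : H →ₗ[ℂ] H) h = D h := rfl
      have e2 : (1 - adjoint T * T).toLinearMap h = (1 - adjoint T * T) h := rfl
      rw [e1, e2]
      constructor
      · intro h0
        rw [← hDA, h0, map_zero]
      · intro h0
        have h1 : ⟪D h, D h⟫ = 0 := by rw [hDD, h0, inner_zero_right]
        exact inner_self_eq_zero.mp h1
    have hkD := LinearMap.finrank_range_add_finrank_ker (D : H →ₗ[ℂ] H)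
    have hkA := LinearMap.finrank_range_add_finrank_ker (1 - adjoint T * T).toLinearMap
    rw [hkereq] at hkD
    omega
  refine ⟨?_, ?_, ?_⟩
  · -- existence
    obtain ⟨M, rfl⟩ : ∃ M, N = M + 1 := ⟨N - 1, by omega⟩
    obtain ⟨W, U, hU, hdil⟩ := MDN.construct T M D hDsa hD2 n dT hn hrank
    exact ⟨W, U, hU, fun k _ hk2 h => hdil k hk2 h⟩
  · -- lower bound
    intro K i1 i2 i3 W U hU hdil
    have hcore := MDN.core T N hN D hDsa hD2 W U hU hdil
    calc n + N * dT
        = Module.finrank ℂ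
            (Submodule.span ℂ {x : K | ∃ (h : H) (k : ℕ), k ≤ N ∧ x = (U ^ k) (W h)}) := by
          rw [hcore, hn, hdT]
    _ ≤ Module.finrank ℂ K := Submodule.finrank_le _
  · -- minimality characterization
    intro K i1 i2 i3 W U hU hdil
    have hcore := MDN.core T N hN D hDsa hD2 W U hU hdil
    constructor
    · intro htop
      rw [htop, finrank_top] at hcore
      rw [hcore, hn, hdT]
    · intro hdim
      refine Submodule.eq_top_of_finrank_eq ?_
      rw [hcore, hn, ← hdT, hdim]


end MDN
end MDN
end

section
/- Let T_1, ..., T_k be commuting contractions on a finite-dimensional Hilbert space H that admit a unitary N-dilation U_1, ..., U_k acting on a finite-dimensional space K of dimension m. Then there exist m points w^1, ..., w^m on the k-torus 𝕋^k such that for every polynomial p in k variables of total degree at most N, ‖p(T_1, ..., T_k)‖ ≤ max_i |p(w^i)|. In particular ‖p(T_1,...,T_k)‖ ≤ sup{|p(z)| : z ∈ 𝕋^k}. -/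
open ContinuousLinearMap

/-- Evaluation of a multivariate polynomial at a commuting tuple of operators. -/
noncomputable def mvPolyEvalCLM {H : Type} [NormedAddCommGroup H] [InnerProductSpace ℂ H]
    {k : ℕ} (T : Fin k → (H →L[ℂ] H)) (hT : ∀ i j, Commute (T i) (T j))
    (p : MvPolynomial (Fin k) ℂ) : H →L[ℂ] H :=
  ∑ d ∈ p.support, p.coeff d •
    Finset.univ.noncommProd (fun i => (T i) ^ (d i))
      (fun i _ j _ _ => (hT i j).pow_pow (d i) (d j))

section Helpers

variable {E : Type} [NormedAddCommGroup E] [InnerProductSpace ℂ E]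

lemma noncommProd_apply_eigen {α : Type*} (s : Finset α) (f : α → (E →L[ℂ] E))
    (hcomm : (s : Set α).Pairwise (Function.onFun Commute f)) (x : E) (c : α → ℂ)
    (hx : ∀ i ∈ s, f i x = c i • x) :
    (s.noncommProd f hcomm) x = (∏ i ∈ s, c i) • x := by
  classical
  induction s using Finset.induction_on with
  | empty => simp
  | @insert a s ha ih =>
    rw [Finset.noncommProd_insert_of_notMem _ _ _ _ ha]
    rw [ContinuousLinearMap.mul_apply,
      ih (hcomm.mono (by simp [Finset.subset_insert])) (fun i hi => hx i (Finset.mem_insert_of_mem hi)),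
      map_smul, hx a (Finset.mem_insert_self a s), Finset.prod_insert ha, smul_smul]
    exact congrArg (· • x) (mul_comm _ _)
    

lemma pow_apply_eigen (f : E →L[ℂ] E) (x : E) (c : ℂ) (hx : f x = c • x) (n : ℕ) :
    (f ^ n) x = (c ^ n) • x := by
  induction n with
  | zero => simp
  | succ n ih => rw [pow_succ, ContinuousLinearMap.mul_apply, hx, map_smul, ih, smul_smul, pow_succ, mul_comm]

lemma mvPolyEvalCLM_apply_eigen {k : ℕ} (U : Fin k → (E →L[ℂ] E))
    (hUcomm : ∀ i j, Commute (U i) (U j)) (p : MvPolynomial (Fin k) ℂ) (x : E) (c : Fin k → ℂ)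
    (hx : ∀ i, U i x = c i • x) :
    mvPolyEvalCLM U hUcomm p x = (MvPolynomial.eval c p) • x := by
  rw [mvPolyEvalCLM, ContinuousLinearMap.sum_apply, MvPolynomial.eval_eq']
  rw [Finset.sum_smul]
  refine Finset.sum_congr rfl fun d _ => ?_
  erw [ContinuousLinearMap.smul_apply,
    noncommProd_apply_eigen _ _ _ x (fun i => c i ^ d i)
      (fun i _ => pow_apply_eigen (U i) x (c i) (hx i) (d i)),
    smul_smul]

end Helpers

section Helpers2

variable {E : Type} [NormedAddCommGroup E] [InnerProductSpace ℂ E]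

lemma commute_star_left_of_unitary {M : Type*} [Monoid M] [StarMul M] {u v : M}
    (hu : u ∈ unitary M) (h : Commute u v) : Commute (star u) v := by
  have h1 : star u * u = 1 := hu.1
  have h2 : u * star u = 1 := hu.2
  calc star u * v = star u * v * (u * star u) := by rw [h2, mul_one]
    _ = star u * (v * u) * star u := by noncomm_ring
    _ = star u * (u * v) * star u := by rw [← h.eq]
    _ = v * star u := by rw [← mul_assoc, h1, one_mul]

lemma opNorm_le_of_eigenbasis [FiniteDimensional ℂ E] {m : ℕ}
    (b : OrthonormalBasis (Fin m) ℂ E) (S : E →L[ℂ] E) (c : Fin m → ℂ)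
    (hS : ∀ a, S (b a) = c a • b a) (M : ℝ) (hM0 : 0 ≤ M) (hM : ∀ a, ‖c a‖ ≤ M) :
    ‖S‖ ≤ M := by
  classical
  refine ContinuousLinearMap.opNorm_le_bound _ hM0 fun x => ?_
  have hx : S x = ∑ a, (c a * b.repr x a) • b a := by
    conv_lhs => rw [← b.sum_repr x]
    rw [map_sum]
    refine Finset.sum_congr rfl fun a _ => ?_
    rw [map_smul, hS a, smul_smul, mul_comm]
  have hrepr : ∀ j, b.repr (S x) j = c j * b.repr x j := by
    intro j
    rw [hx, map_sum, WithLp.ofLp_sum, Finset.sum_apply]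
    simp only [map_smul, PiLp.smul_apply, OrthonormalBasis.repr_self,
      EuclideanSpace.single_apply, smul_eq_mul, mul_ite, mul_one, mul_zero]
    simp
  have h1 : ‖S x‖ = Real.sqrt (∑ j, ‖c j * b.repr x j‖ ^ 2) := by
    rw [← b.repr.norm_map (S x), EuclideanSpace.norm_eq]
    congr 1
    exact Finset.sum_congr rfl fun j _ => by rw [hrepr j]
  have h2 : ‖x‖ = Real.sqrt (∑ j, ‖b.repr x j‖ ^ 2) := by
    rw [← b.repr.norm_map x, EuclideanSpace.norm_eq]
  rw [h1, h2]
  rw [← Real.sqrt_sq hM0, ← Real.sqrt_mul (by positivity)]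
  refine Real.sqrt_le_sqrt ?_
  rw [Finset.mul_sum]
  refine Finset.sum_le_sum fun j _ => ?_
  rw [norm_mul, mul_pow]
  have h3 : ‖c j‖ ^ 2 ≤ M ^ 2 := by
    have := sq_le_sq' (by linarith [norm_nonneg (c j)]) (hM j)
    simpa using this
  nlinarith [sq_nonneg (‖b.repr x j‖), norm_nonneg (b.repr x j)]

end Helpers2
open ContinuousLinearMap

set_option maxHeartbeats 1000000 in
lemma exists_joint_eigenbasis {K : Type} [NormedAddCommGroup K] [InnerProductSpace ℂ K]
    [FiniteDimensional ℂ K] {k : ℕ} (U : Fin k → (K →L[ℂ] K))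
    (hU : ∀ i, U i ∈ unitary (K →L[ℂ] K)) (hUcomm : ∀ i j, Commute (U i) (U j)) :
    ∃ (b : OrthonormalBasis (Fin (Module.finrank ℂ K)) ℂ K)
      (w : Fin (Module.finrank ℂ K) → Fin k → ℂ),
      (∀ a i, ‖w a i‖ = 1) ∧ ∀ a i, U i (b a) = w a i • b a := by
  classical
  set A : Fin k ⊕ Fin k → (K →L[ℂ] K) :=
    Sum.elim (fun i => ((2:ℂ)⁻¹) • (U i + star (U i)))
      (fun i => ((-Complex.I/2)) • (U i - star (U i))) with hA
  -- commutation relations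
  have hsU : ∀ i j, Commute (star (U i)) (U j) := fun i j =>
    commute_star_left_of_unitary (hU i) (hUcomm i j)
  have hUs : ∀ i j, Commute (U i) (star (U j)) := fun i j => (hsU j i).symm
  have hss : ∀ i j, Commute (star (U i)) (star (U j)) := fun i j => ((hUcomm j i).star_star).symm
  have hcore1 : ∀ i j, Commute (U i + star (U i)) (U j + star (U j)) := fun i j =>
    (((hUcomm i j).add_right (hUs i j)).add_left (((hsU i j).add_right (hss i j))))
  have hcore2 : ∀ i j, Commute (U i + star (U i)) (U j - star (U j)) := fun i j =>
    (((hUcomm i j).sub_right (hUs i j)).add_left (((hsU i j).sub_right (hss i j))))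
  have hcore3 : ∀ i j, Commute (U i - star (U i)) (U j + star (U j)) := fun i j =>
    (hcore2 j i).symm
  have hcore4 : ∀ i j, Commute (U i - star (U i)) (U j - star (U j)) := fun i j =>
    (((hUcomm i j).sub_right (hUs i j)).sub_left (((hsU i j).sub_right (hss i j))))
  have hAcomm : ∀ s t, Commute (A s) (A t) := by
    rintro (i | i) (j | j) <;>
      simp only [hA, Sum.elim_inl, Sum.elim_inr]
    · exact ((hcore1 i j).smul_right _).smul_left _
    · exact ((hcore2 i j).smul_right _).smul_left _
    · exact ((hcore3 i j).smul_right _).smul_left _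
    · exact ((hcore4 i j).smul_right _).smul_left _
  -- self-adjointness
  have hsa : ∀ s, IsSelfAdjoint (A s) := by
    rintro (i | i) <;> simp only [hA, Sum.elim_inl, Sum.elim_inr]
    · rw [IsSelfAdjoint, star_smul, star_add, star_star]
      congr 1
      · simp [Complex.star_def, map_inv₀]
      · rw [add_comm]
    · have hstar : star (U i - star (U i)) = -(U i - star (U i)) := by
        rw [star_sub, star_star]; abel
      rw [IsSelfAdjoint, star_smul, hstar, smul_neg, ← neg_smul]
      congr 1
      · simp [Complex.star_def, map_div₀, Complex.conj_I]
        ring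
  -- symmetric linear maps
  have hF : ∀ s, LinearMap.IsSymmetric ((A s : K →ₗ[ℂ] K)) := fun s =>
    isSelfAdjoint_iff_isSymmetric.mp (hsa s)
  have hFcomm : Pairwise (Function.onFun Commute fun s => ((A s : K →ₗ[ℂ] K))) := by
    intro s t _
    have h := hAcomm s t
    refine LinearMap.ext fun x => ?_
    have := congrArg (fun (T : K →L[ℂ] K) => T x) h.eq
    simpa [ContinuousLinearMap.mul_apply, Module.End.mul_apply] using this
  set V : (Fin k ⊕ Fin k → ℂ) → Submodule ℂ K :=
    fun χ => ⨅ s, Module.End.eigenspace ((A s : K →ₗ[ℂ] K)) (χ s) with hV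
  have hInternal : DirectSum.IsInternal V :=
    LinearMap.IsSymmetric.LinearMap.IsSymmetric.directSum_isInternal_of_pairwise_commute hF hFcomm
  have hOF : OrthogonalFamily ℂ (fun χ => (V χ : Submodule ℂ K)) (fun χ => (V χ).subtypeₗᵢ) :=
    LinearMap.IsSymmetric.orthogonalFamily_iInf_eigenspaces hF
  haveI : Fintype {χ // V χ ≠ ⊥} :=
    (hInternal.submodule_iSupIndep).fintypeNeBotOfFiniteDimensional
  have hOF' : OrthogonalFamily ℂ (fun χ' : {χ // V χ ≠ ⊥} => (V χ'.val : Submodule ℂ K))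
      (fun χ' => (V χ'.val).subtypeₗᵢ) := hOF.comp Subtype.val_injective
  have hsup : (⨆ χ' : {χ // V χ ≠ ⊥}, V χ'.val) = ⊤ := by
    rw [eq_top_iff, ← hInternal.submodule_iSup_eq_top]
    refine iSup_le fun χ => ?_
    by_cases h : V χ = ⊥
    · simp [h]
    · exact le_iSup_of_le (⟨χ, h⟩ : {χ // V χ ≠ ⊥}) le_rfl
  have hInternal' : DirectSum.IsInternal (fun χ' : {χ // V χ ≠ ⊥} => V χ'.val) :=
    (hOF'.isInternal_iff).mpr (by rw [hsup, Submodule.top_orthogonal_eq_bot])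
  set b := hInternal'.subordinateOrthonormalBasis rfl hOF' with hb
  set χa : Fin (Module.finrank ℂ K) → {χ // V χ ≠ ⊥} :=
    fun a => hInternal'.subordinateOrthonormalBasisIndex rfl a hOF' with hχa
  have hmem : ∀ a, b a ∈ V (χa a).val := fun a =>
    hInternal'.subordinateOrthonormalBasis_subordinate rfl a hOF'
  have heig : ∀ a s, (A s) (b a) = ((χa a).val s) • b a := by
    intro a s
    have h1 : b a ∈ ⨅ s, Module.End.eigenspace ((A s : K →ₗ[ℂ] K)) (((χa a).val) s) := hmem a
    rw [Submodule.mem_iInf] at h1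
    have h2 := (Module.End.mem_eigenspace_iff).mp (h1 s)
    simpa using h2
  have hUeq : ∀ i, U i = A (Sum.inl i) + Complex.I • A (Sum.inr i) := by
    intro i
    simp only [hA, Sum.elim_inl, Sum.elim_inr, smul_smul]
    have hc : Complex.I * (-Complex.I/2) = (2:ℂ)⁻¹ := by
      linear_combination (-(1:ℂ)/2) * Complex.I_mul_I
    rw [hc]
    module
  refine ⟨b, fun a i => (χa a).val (Sum.inl i) + Complex.I * (χa a).val (Sum.inr i), ?_, ?_⟩
  · intro a i
    have hb1 : ‖b a‖ = 1 := b.orthonormal.1 a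
    have hni := ContinuousLinearMap.norm_map_of_mem_unitary (hU i) (b a)
    have heigU : U i (b a) =
        ((χa a).val (Sum.inl i) + Complex.I * (χa a).val (Sum.inr i)) • b a := by
      rw [hUeq i, ContinuousLinearMap.add_apply, ContinuousLinearMap.smul_apply,
        heig a (Sum.inl i), heig a (Sum.inr i), smul_smul, ← add_smul]
    rw [heigU, norm_smul, hb1, mul_one] at hni
    exact hni
  · intro a i
    rw [hUeq i, ContinuousLinearMap.add_apply, ContinuousLinearMap.smul_apply,
      heig a (Sum.inl i), heig a (Sum.inr i), smul_smul, ← add_smul]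
/-- **Sharpened von Neumann inequality.** Let `T₁, …, T_k` be commuting contractions on a
finite-dimensional Hilbert space `H` admitting a unitary `N`-dilation `U₁, …, U_k` on a
finite-dimensional space `K` with `dim K = m`. Then there are `m` points `w¹, …, wᵐ` on
the `k`-torus such that `‖p(T₁, …, T_k)‖ ≤ max_i |p(wⁱ)|` for every polynomial `p` of
total degree at most `N`; in particular `‖p(T₁, …, T_k)‖ ≤ sup_{𝕋^k} |p|`. -/
theorem sharpened_von_neumann
    (H K : Type)
    [NormedAddCommGroup H] [InnerProductSpace ℂ H] [FiniteDimensional ℂ H]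
    [NormedAddCommGroup K] [InnerProductSpace ℂ K] [FiniteDimensional ℂ K]
    (k N : ℕ) (T : Fin k → (H →L[ℂ] H)) (hT : ∀ i, ‖T i‖ ≤ 1)
    (hTcomm : ∀ i j, Commute (T i) (T j))
    (W : H →ₗᵢ[ℂ] K)
    (U : Fin k → (K →L[ℂ] K)) (hU : ∀ i, U i ∈ unitary (K →L[ℂ] K))
    (hUcomm : ∀ i j, Commute (U i) (U j))
    (hdil : ∀ m : Fin k → ℕ, (∑ i, m i) ≤ N →
      ∀ h : H,
        adjoint W.toContinuousLinearMap
          ((Finset.univ.noncommProd (fun i => (U i) ^ (m i))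
              (fun i _ j _ _ => (hUcomm i j).pow_pow (m i) (m j))) (W h)) =
        (Finset.univ.noncommProd (fun i => (T i) ^ (m i))
            (fun i _ j _ _ => (hTcomm i j).pow_pow (m i) (m j))) h) :
    ∃ w : Fin (Module.finrank ℂ K) → Fin k → ℂ,
      (∀ i j, ‖w i j‖ = 1) ∧
      ∀ p : MvPolynomial (Fin k) ℂ, p.totalDegree ≤ N →
        ‖mvPolyEvalCLM T hTcomm p‖ ≤
          sSup (Set.range fun i => ‖MvPolynomial.eval (w i) p‖) ∧
        ‖mvPolyEvalCLM T hTcomm p‖ ≤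
          sSup {x : ℝ | ∃ z : Fin k → ℂ, (∀ j, ‖z j‖ = 1) ∧ x = ‖MvPolynomial.eval z p‖} := by
  classical
  obtain ⟨b, w, hw1, hweig⟩ := exists_joint_eigenbasis U hU hUcomm
  refine ⟨w, hw1, fun p hp => ?_⟩
  set pU := mvPolyEvalCLM U hUcomm p with hpUdef
  have hpUb : ∀ a, pU (b a) = (MvPolynomial.eval (w a) p) • b a := fun a =>
    mvPolyEvalCLM_apply_eigen U hUcomm p (b a) (w a) (fun i => hweig a i)
  set M := sSup (Set.range fun a => ‖MvPolynomial.eval (w a) p‖) with hM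
  have hbddR : BddAbove (Set.range fun a => ‖MvPolynomial.eval (w a) p‖) :=
    (Set.finite_range _).bddAbove
  have hMa : ∀ a, ‖MvPolynomial.eval (w a) p‖ ≤ M := fun a => le_csSup hbddR ⟨a, rfl⟩
  have hM0 : 0 ≤ M := by
    rcases isEmpty_or_nonempty (Fin (Module.finrank ℂ K)) with hmE | hmN
    · rw [hM, Set.range_eq_empty, Real.sSup_empty]
    · exact le_trans (norm_nonneg _) (hMa (Classical.arbitrary _))
  have hpU : ‖pU‖ ≤ M :=
    opNorm_le_of_eigenbasis b pU _ hpUb M hM0 hMa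
  -- dilation step
  have hTU : ∀ h : H, mvPolyEvalCLM T hTcomm p h = adjoint W.toContinuousLinearMap (pU (W h)) := by
    intro h
    rw [hpUdef]
    simp only [mvPolyEvalCLM, ContinuousLinearMap.sum_apply, ContinuousLinearMap.smul_apply,
      map_sum, map_smul]
    refine Finset.sum_congr rfl fun d hd => ?_
    have hdN : (∑ i, d i) ≤ N := by
      have h1 := MvPolynomial.le_totalDegree hd
      rw [Finsupp.sum_fintype _ _ (fun _ => rfl)] at h1
      exact le_trans h1 hp
    rw [hdil d hdN h]
  have hPT : ‖mvPolyEvalCLM T hTcomm p‖ ≤ ‖pU‖ := by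
    refine ContinuousLinearMap.opNorm_le_bound _ (norm_nonneg _) fun h => ?_
    rw [hTU h]
    have h1 : ‖adjoint W.toContinuousLinearMap‖ ≤ 1 := by
      have h2 : ‖adjoint W.toContinuousLinearMap‖ = ‖W.toContinuousLinearMap‖ :=
        LinearIsometryEquiv.norm_map
          (ContinuousLinearMap.adjoint : (H →L[ℂ] K) ≃ₗᵢ⋆[ℂ] (K →L[ℂ] H)) W.toContinuousLinearMap
      rw [h2]
      exact W.norm_toContinuousLinearMap_le
    have h3 : ‖pU (W h)‖ ≤ ‖pU‖ * ‖h‖ := by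
      have h4 := pU.le_opNorm (W h)
      rwa [W.norm_map] at h4
    calc ‖adjoint W.toContinuousLinearMap (pU (W h))‖
        ≤ ‖adjoint W.toContinuousLinearMap‖ * ‖pU (W h)‖ := le_opNorm _ _
      _ ≤ 1 * (‖pU‖ * ‖h‖) :=
          mul_le_mul h1 h3 (norm_nonneg _) zero_le_one
      _ = ‖pU‖ * ‖h‖ := one_mul _
  have hfirst : ‖mvPolyEvalCLM T hTcomm p‖ ≤ M := le_trans hPT hpU
  refine ⟨hfirst, ?_⟩
  have hbdd2 : BddAbove {x : ℝ | ∃ z : Fin k → ℂ, (∀ j, ‖z j‖ = 1) ∧ x = ‖MvPolynomial.eval z p‖} := by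
    refine ⟨∑ d ∈ p.support, ‖p.coeff d‖, fun x hx => ?_⟩
    obtain ⟨z, hz, rfl⟩ := hx
    rw [MvPolynomial.eval_eq]
    refine le_trans (norm_sum_le _ _) (Finset.sum_le_sum fun d _ => ?_)
    rw [norm_mul]
    have hone : ‖∏ i ∈ d.support, z i ^ d i‖ = 1 := by
      rw [norm_prod]
      exact Finset.prod_eq_one fun i _ => by rw [norm_pow, hz i, one_pow]
    rw [hone, mul_one]
  have hS2nonneg : (0:ℝ) ≤ sSup {x : ℝ | ∃ z : Fin k → ℂ, (∀ j, ‖z j‖ = 1) ∧ x = ‖MvPolynomial.eval z p‖} := by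
    have hmem : ‖MvPolynomial.eval (fun _ => (1:ℂ)) p‖ ∈
        {x : ℝ | ∃ z : Fin k → ℂ, (∀ j, ‖z j‖ = 1) ∧ x = ‖MvPolynomial.eval z p‖} :=
      ⟨fun _ => 1, fun _ => norm_one, rfl⟩
    exact le_trans (norm_nonneg _) (le_csSup hbdd2 hmem)
  have hMS2 : M ≤ sSup {x : ℝ | ∃ z : Fin k → ℂ, (∀ j, ‖z j‖ = 1) ∧ x = ‖MvPolynomial.eval z p‖} := by
    rcases isEmpty_or_nonempty (Fin (Module.finrank ℂ K)) with hmE | hmN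
    · rw [hM, Set.range_eq_empty, Real.sSup_empty]; exact hS2nonneg
    · refine csSup_le (Set.range_nonempty _) ?_
      rintro x ⟨a, rfl⟩
      exact le_csSup hbdd2 ⟨w a, fun j => hw1 a j, rfl⟩
  exact le_trans hfirst hMS2
end

section
/- Let ζ be a point in the open unit disc 𝔻 ⊂ ℂ and N a positive integer. Then there exist N+1 points w_0, ..., w_N on the unit circle 𝕋 such that for every polynomial p of degree at most N, |p(ζ)| ≤ max_i |p(w_i)|. -/
open Polynomial Complex Finset

private lemma vn_normSq_key (z w : ℂ) :
    Complex.normSq (1 - (starRingEnd ℂ) z * w) =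
      Complex.normSq (w - z) + (1 - Complex.normSq w) * (1 - Complex.normSq z) := by
  simp only [Complex.normSq_apply, Complex.sub_re, Complex.sub_im, Complex.mul_re, Complex.mul_im,
    Complex.one_re, Complex.one_im, Complex.conj_re, Complex.conj_im]
  ring

/-- For every `ζ` in the open unit disc and every `N ≥ 1` there are `N+1` points
`w₀, …, w_N` on the unit circle such that `|p(ζ)| ≤ max_i |p(w_i)|` for every polynomial
`p` of degree at most `N`. -/
theorem scalar_von_neumann_points
    (ζ : ℂ) (hζ : ‖ζ‖ < 1) (N : ℕ) (hN : 0 < N) :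
    ∃ w : Fin (N + 1) → ℂ,
      (∀ i, ‖w i‖ = 1) ∧
      ∀ p : Polynomial ℂ, p.natDegree ≤ N →
        ∃ i, ‖p.eval ζ‖ ≤ ‖p.eval (w i)‖ := by
  obtain ⟨M, rfl⟩ := Nat.exists_eq_succ_of_ne_zero hN.ne'
  -- the "para-orthogonal" polynomial
  set Q : ℂ[X] := X ^ (M + 2) - C ζ * X ^ (M + 1) + C ((starRingEnd ℂ) ζ) * X - 1 with hQdef
  have hQm : Q.Monic := by
    have h : Q = X ^ (M + 2) + (-(C ζ * X ^ (M + 1)) + C ((starRingEnd ℂ) ζ) * X - 1) := by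
      rw [hQdef]; ring
    rw [h]
    apply monic_X_pow_add
    have h2 : (-(C ζ * X ^ (M + 1)) + C ((starRingEnd ℂ) ζ) * X - 1 : ℂ[X]).degree
        ≤ (M + 1 : ℕ) := by
      compute_degree
      · push_cast
        refine sup_le le_rfl ?_
        exact_mod_cast Nat.one_le_iff_ne_zero.mpr (Nat.succ_ne_zero M)
    refine h2.trans_lt ?_
    exact_mod_cast Nat.lt_succ_self (M + 1)
  have hQ0 : Q ≠ 0 := hQm.ne_zero
  have hQd : Q.natDegree = M + 2 := by
    rw [hQdef]
    compute_degree!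
    simp [Nat.succ_ne_zero]
  have hQeval : ∀ z : ℂ, Q.eval z
      = z ^ (M + 2) - ζ * z ^ (M + 1) + (starRingEnd ℂ) ζ * z - 1 := by
    intro z; simp [hQdef]
  have hQ'eval : ∀ z : ℂ, (derivative Q).eval z
      = ((M : ℂ) + 2) * z ^ (M + 1) - ((M : ℂ) + 1) * ζ * z ^ M + (starRingEnd ℂ) ζ := by
    intro z
    rw [hQdef]
    simp [derivative_X_pow]
    ring
  have hs1 : Complex.normSq ζ < 1 := by
    have : Complex.normSq ζ = ‖ζ‖ ^ 2 := (Complex.sq_norm ζ).symm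
    nlinarith [norm_nonneg ζ]
  have hQζ : Q.eval ζ = ((Complex.normSq ζ - 1 : ℝ) : ℂ) := by
    rw [hQeval]
    have : ((Complex.normSq ζ : ℝ) : ℂ) = ζ * (starRingEnd ℂ) ζ := (Complex.mul_conj ζ).symm
    push_cast
    rw [this]; ring
  have hQζ0 : Q.eval ζ ≠ 0 := by
    rw [hQζ]
    intro h
    have := Complex.ofReal_eq_zero.mp h
    linarith
  -- every root lies on the unit circle
  have hroot_norm : ∀ w : ℂ, Q.eval w = 0 → ‖w‖ = 1 := by
    intro w hw
    have h1 : w ^ (M + 2) - ζ * w ^ (M + 1) + (starRingEnd ℂ) ζ * w - 1 = 0 := by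
      rw [← hQeval]; exact hw
    have hA : w ^ (M + 1) * (w - ζ) = 1 - (starRingEnd ℂ) ζ * w := by linear_combination h1
    have hwζ : w ≠ ζ := by
      rintro rfl; exact hQζ0 hw
    have hm : 0 < Complex.normSq (w - ζ) := Complex.normSq_pos.mpr (sub_ne_zero.mpr hwζ)
    have hNS : Complex.normSq w ^ (M + 1) * Complex.normSq (w - ζ)
        = Complex.normSq (w - ζ)
          + (1 - Complex.normSq w) * (1 - Complex.normSq ζ) := by
      rw [← vn_normSq_key ζ w, ← map_pow, ← map_mul, hA]
    have ht : Complex.normSq w = 1 := by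
      rcases lt_trichotomy (Complex.normSq w) 1 with h | h | h
      · exfalso
        have hp : Complex.normSq w ^ (M + 1) < 1 :=
          pow_lt_one₀ (Complex.normSq_nonneg w) h (Nat.succ_ne_zero M)
        have h4 := mul_lt_mul_of_pos_right hp hm
        have h5 : 0 < (1 - Complex.normSq w) * (1 - Complex.normSq ζ) := by nlinarith
        nlinarith
      · exact h
      · exfalso
        have hp : 1 < Complex.normSq w ^ (M + 1) := one_lt_pow₀ h (Nat.succ_ne_zero M)
        have h4 := mul_lt_mul_of_pos_right hp hm
        have h5 : (1 - Complex.normSq w) * (1 - Complex.normSq ζ) < 0 := by nlinarith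
        nlinarith
    have h2 : ‖w‖ ^ 2 = 1 := by rw [Complex.sq_norm]; exact ht
    have h3 : (‖w‖ - 1) * (‖w‖ + 1) = 0 := by linear_combination h2
    rcases mul_eq_zero.mp h3 with h4 | h4
    · linarith
    · nlinarith [norm_nonneg w]
  -- the key derivative identity at each root
  have hkey : ∀ w : ℂ, Q.eval w = 0 → (ζ - w) * (derivative Q).eval w
      = ((-(((M : ℝ) + 1) * Complex.normSq (w - ζ) + 1 - Complex.normSq ζ) : ℝ) : ℂ) := by
    intro w hw
    have h1 : w ^ (M + 2) - ζ * w ^ (M + 1) + (starRingEnd ℂ) ζ * w - 1 = 0 := by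
      rw [← hQeval]; exact hw
    have hA : w ^ (M + 1) * (w - ζ) = 1 - (starRingEnd ℂ) ζ * w := by linear_combination h1
    have hn1 : ‖w‖ = 1 := hroot_norm w hw
    have h2 : (starRingEnd ℂ) w * w = 1 := by
      have : w * (starRingEnd ℂ) w = ((Complex.normSq w : ℝ) : ℂ) := Complex.mul_conj w
      have hnw : Complex.normSq w = 1 := by
        rw [← Complex.sq_norm, hn1]; norm_num
      rw [mul_comm, this, hnw]; norm_num
    have hB : w ^ M * (w - ζ) = (starRingEnd ℂ) w - (starRingEnd ℂ) ζ := by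
      linear_combination (starRingEnd ℂ) w * hA + (-(w ^ M * (w - ζ)) - (starRingEnd ℂ) ζ) * h2
    have hc1 : ((Complex.normSq (w - ζ) : ℝ) : ℂ)
        = (w - ζ) * ((starRingEnd ℂ) w - (starRingEnd ℂ) ζ) := by
      rw [← map_sub]; exact (Complex.mul_conj (w - ζ)).symm
    have hc2 : ((Complex.normSq ζ : ℝ) : ℂ) = ζ * (starRingEnd ℂ) ζ := (Complex.mul_conj ζ).symm
    rw [hQ'eval]
    push_cast
    rw [hc1, hc2]
    linear_combination (-((M : ℂ) + 1) * (w - ζ)) * hB - hA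
  have hden_pos : ∀ w : ℂ, 0 < ((M : ℝ) + 1) * Complex.normSq (w - ζ) + 1 - Complex.normSq ζ := by
    intro w
    have := Complex.normSq_nonneg (w - ζ)
    nlinarith
  have hQ'0 : ∀ w : ℂ, Q.eval w = 0 → (derivative Q).eval w ≠ 0 := by
    intro w hw h
    have := hkey w hw
    rw [h, mul_zero] at this
    have h2 : (-(((M : ℝ) + 1) * Complex.normSq (w - ζ) + 1 - Complex.normSq ζ) : ℝ) = 0 :=
      Complex.ofReal_eq_zero.mp this.symm
    have := hden_pos w
    linarith
  -- roots: all simple, M+2 of them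
  have hsplits : Q.Splits := IsAlgClosed.splits Q
  have hcard : Multiset.card Q.roots = M + 2 := by
    rw [← hQd]; exact (splits_iff_card_roots).mp hsplits
  have hnodup : Q.roots.Nodup := by
    rw [Multiset.nodup_iff_count_le_one]
    intro w
    rw [count_roots]
    by_contra h
    push_neg at h
    rw [one_lt_rootMultiplicity_iff_isRoot hQ0] at h
    exact hQ'0 w h.1 h.2
  set t : Finset ℂ := Q.roots.toFinset with htdef
  have htval : t.val = Q.roots := Multiset.dedup_eq_self.mpr hnodup
  have htcard : t.card = M + 1 + 1 := by
    show t.val.card = M + 1 + 1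
    rw [htval, hcard]
  have htmem : ∀ x ∈ t, Q.eval x = 0 := by
    intro x hx
    have : x ∈ Q.roots := Multiset.mem_toFinset.mp hx
    exact (isRoot_of_mem_roots this)
  have hζt : ∀ x ∈ t, ζ ≠ x := by
    intro x hx h
    exact hQζ0 (h ▸ htmem x hx)
  have hne : t.Nonempty := Finset.card_pos.mp (by omega)
  -- Q is the nodal polynomial of its root set
  have hnodal : Lagrange.nodal t id = Q := by
    have hprod : Q = (Q.roots.map fun a => X - C a).prod :=
      hsplits.eq_prod_roots_of_monic hQm
    rw [Lagrange.nodal_eq, Finset.prod_eq_multiset_prod, htval]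
    exact hprod.symm
  have hinj : Set.InjOn id (t : Set ℂ) := Function.injective_id.injOn
  -- enumeration of the roots
  let E : Fin (M + 1 + 1) ≃ {x // x ∈ t} := (t.equivFin.trans (finCongr htcard)).symm
  refine ⟨fun i => (E i : ℂ), ?_, ?_⟩
  · intro i
    exact hroot_norm _ (htmem _ (E i).2)
  · intro p hp
    -- the interpolation weights at ζ
    set c : ℂ → ℂ := fun x => (Lagrange.basis t id x).eval ζ with hcdef
    set ρ : ℂ → ℝ := fun x =>
      (Complex.normSq ζ - 1) /
        (-(((M : ℝ) + 1) * Complex.normSq (x - ζ) + 1 - Complex.normSq ζ)) with hρdef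
    have hcρ : ∀ x ∈ t, c x = ((ρ x : ℝ) : ℂ) := by
      intro x hx
      have hx0 := htmem x hx
      have hbasis := Lagrange.eval_basis_not_at_node (s := t) (v := id) (x := ζ) hx (hζt x hx)
      have hweight := Lagrange.nodalWeight_eq_eval_derivative_nodal (s := t) (v := id) hx
      simp only [hcdef]
      simp only [id_eq] at hbasis hweight
      rw [hbasis, hweight, hnodal, hQζ]
      have hkx := hkey x hx0
      have hd0 : ((-(((M : ℝ) + 1) * Complex.normSq (x - ζ) + 1 - Complex.normSq ζ) : ℝ) : ℂ)
          ≠ 0 := by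
        rw [Complex.ofReal_ne_zero]
        have := hden_pos x
        linarith
      have hQ'x : (derivative Q).eval x ≠ 0 := hQ'0 x hx0
      have hζx : ζ - x ≠ 0 := sub_ne_zero.mpr (hζt x hx)
      have hkx' : (eval x (derivative Q))⁻¹ * (ζ - x)⁻¹
          = (((-(((M : ℝ) + 1) * Complex.normSq (x - ζ) + 1 - Complex.normSq ζ) : ℝ) : ℂ))⁻¹ := by
        rw [← mul_inv, mul_comm, hkx]
      simp only [hρdef]
      rw [hkx']
      push_cast
      ring
    have hρ0 : ∀ x, 0 ≤ ρ x := by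
      intro x
      rw [hρdef]
      exact div_nonneg_of_nonpos (by linarith) (by linarith [hden_pos x])
    have hdeg : p.degree < (t.card : ℕ) := by
      rw [htcard]
      refine degree_le_natDegree.trans_lt ?_
      exact_mod_cast Nat.lt_succ_of_le hp
    have hI := Lagrange.eq_interpolate (s := t) (v := id) hinj hdeg
    have hIev : p.eval ζ = ∑ x ∈ t, p.eval x * c x := by
      conv_lhs => rw [hI]
      rw [Lagrange.interpolate_apply, eval_finset_sum]
      refine Finset.sum_congr rfl fun x hx => ?_
      simp [hcdef]
    have hsum1 : ∑ x ∈ t, c x = 1 := by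
      have h := congrArg (eval ζ) (Lagrange.sum_basis (s := t) (v := id) hinj hne)
      simpa [hcdef, eval_finset_sum] using h
    have hρsum : ∑ x ∈ t, ρ x = 1 := by
      have h : ((∑ x ∈ t, ρ x : ℝ) : ℂ) = 1 := by
        push_cast
        rw [← hsum1]
        exact Finset.sum_congr rfl fun x hx => (hcρ x hx).symm
      exact_mod_cast h
    obtain ⟨x0, hx0t, hx0max⟩ := t.exists_max_image (fun x => ‖p.eval x‖) hne
    refine ⟨E.symm ⟨x0, hx0t⟩, ?_⟩
    have hfinal : ‖p.eval ζ‖ ≤ ‖p.eval x0‖ := calc ‖p.eval ζ‖ = ‖∑ x ∈ t, p.eval x * c x‖ := by rw [hIev]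
      _ ≤ ∑ x ∈ t, ‖p.eval x * c x‖ := norm_sum_le _ _
      _ = ∑ x ∈ t, ρ x * ‖p.eval x‖ := by
          refine Finset.sum_congr rfl fun x hx => ?_
          rw [hcρ x hx, norm_mul, Complex.norm_real, Real.norm_of_nonneg (hρ0 x), mul_comm]
      _ ≤ ∑ x ∈ t, ρ x * ‖p.eval x0‖ := by
          refine Finset.sum_le_sum fun x hx => ?_
          exact mul_le_mul_of_nonneg_left (hx0max x hx) (hρ0 x)
      _ = ‖p.eval x0‖ := by rw [← Finset.sum_mul, hρsum, one_mul]
    simpa only [Equiv.apply_symm_apply] using hfinal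
end

section
/- Let N be a positive integer and t_1, ..., t_k complex numbers in the open unit disc. Put m = (N+1)^k. Then there exist m points w^1, ..., w^m on the k-torus 𝕋^k and nonnegative reals a_1, ..., a_m with ∑ a_i = 1 such that p(t_1, ..., t_k) = ∑_{i=1}^m a_i p(w^i_1, ..., w^i_k) for every polynomial p in k variables of total degree at most N. -/
open Polynomial Complex Finset

noncomputable def qpoly (M : ℕ) (t : ℂ) : ℂ[X] :=
  X ^ (M + 2) - C t * X ^ (M + 1) + C (starRingEnd ℂ t) * X - C 1

lemma qpoly_natDegree (M : ℕ) (t : ℂ) : (qpoly M t).natDegree = M + 2 := by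
  unfold qpoly; compute_degree!; rw [if_neg (by omega)]; norm_num

lemma qpoly_monic (M : ℕ) (t : ℂ) : (qpoly M t).Monic := by
  unfold qpoly; monicity!; exact fun h => absurd h (by omega)

lemma qpoly_eval (M : ℕ) (t w : ℂ) :
    (qpoly M t).eval w = w ^ (M + 2) - t * w ^ (M + 1) + (starRingEnd ℂ t) * w - 1 := by
  simp [qpoly]

lemma qpoly_deriv (M : ℕ) (t w : ℂ) :
    (derivative (qpoly M t)).eval w
      = (M + 2) * w ^ (M + 1) - (M + 1) * t * w ^ M + (starRingEnd ℂ t) := by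
  simp [qpoly]; ring

lemma nsq_id (t w : ℂ) :
    normSq (1 - (starRingEnd ℂ t) * w) = normSq (w - t) + (1 - normSq t) * (1 - normSq w) := by
  simp [normSq_apply, Complex.sub_re, Complex.sub_im, Complex.mul_re, Complex.mul_im]
  ring

lemma root_normSq {M : ℕ} {t w : ℂ} (ht : normSq t < 1) (hw : (qpoly M t).IsRoot w) :
    normSq w = 1 := by
  have hroot : w ^ (M + 1) * (w - t) = 1 - (starRingEnd ℂ t) * w := by
    have := hw
    rw [IsRoot, qpoly_eval] at this
    linear_combination this
  have h1 : normSq (w ^ (M + 1)) * normSq (w - t) = normSq (1 - (starRingEnd ℂ t) * w) := by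
    rw [← map_mul, hroot]
  rw [map_pow, nsq_id] at h1
  set x := normSq w with hx
  have hx0 : 0 ≤ x := normSq_nonneg w
  rcases lt_trichotomy x 1 with h | h | h
  · exfalso
    have hp : x ^ (M + 1) ≤ 1 := pow_le_one₀ hx0 h.le
    nlinarith [normSq_nonneg (w - t)]
  · exact h
  · exfalso
    have hp : 1 < x ^ (M + 1) := one_lt_pow₀ h (by omega)
    nlinarith [normSq_nonneg (w - t)]

lemma deriv_key {M : ℕ} {t w : ℂ} (hw : (qpoly M t).IsRoot w) (hn : normSq w = 1) :
    (derivative (qpoly M t)).eval w * (w - t)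
      = (((M + 1) * normSq (1 - (starRingEnd ℂ t) * w) + (1 - normSq t) : ℝ) : ℂ) := by
  have h1 : w ^ (M + 2) - t * w ^ (M + 1) + (starRingEnd ℂ t) * w - 1 = 0 := by
    have := hw; rwa [IsRoot, qpoly_eval] at this
  have h2 : w * (starRingEnd ℂ w) = 1 := by
    rw [Complex.mul_conj, hn]; norm_num
  rw [qpoly_deriv]
  push_cast
  rw [Complex.normSq_eq_conj_mul_self, Complex.normSq_eq_conj_mul_self]
  simp only [map_sub, map_mul, map_one, Complex.conj_conj]
  linear_combination (((M:ℂ)+2) - ((M:ℂ)+1)*t*(starRingEnd ℂ w)) * h1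
    + (((M:ℂ)+1)*t*(w^(M+1) - t*w^M)) * h2

/-- weight function -/
noncomputable def wt (M : ℕ) (t x : ℂ) : ℝ :=
  (1 - normSq t) / ((M + 1) * normSq (1 - (starRingEnd ℂ t) * x) + (1 - normSq t))

lemma onevar (M : ℕ) (t : ℂ) (ht : ‖t‖ < 1) :
    ∃ (w : Fin (M + 2) → ℂ) (a : Fin (M + 2) → ℝ),
      (∀ s, ‖w s‖ = 1) ∧ (∀ s, 0 ≤ a s) ∧
      ∀ d : ℕ, d ≤ M + 1 → (∑ s, (a s : ℂ) * (w s) ^ d) = t ^ d := by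
  have htn : normSq t < 1 := by
    have h1 : normSq t = ‖t‖ ^ 2 := by rw [normSq_eq_norm_sq]
    rw [h1]
    nlinarith [norm_nonneg t]
  set q : ℂ[X] := qpoly M t with hqdef
  have hq0 : q ≠ 0 := (qpoly_monic M t).ne_zero
  have hcard : Multiset.card q.roots = M + 2 := by
    rw [splits_iff_card_roots.mp (IsAlgClosed.splits q), qpoly_natDegree]
  -- derivative nonzero at roots, and positivity of denominator
  have hRpos : ∀ x : ℂ, (0:ℝ) < (M + 1) * normSq (1 - (starRingEnd ℂ t) * x) + (1 - normSq t) := by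
    intro x
    have := normSq_nonneg (1 - (starRingEnd ℂ t) * x)
    nlinarith
  have hdne : ∀ x : ℂ, q.IsRoot x → (derivative q).eval x ≠ 0 := by
    intro x hx
    have hn := root_normSq htn hx
    have hk := deriv_key hx hn
    intro h0
    rw [h0, zero_mul] at hk
    have := hRpos x
    rw [← Complex.ofReal_zero] at hk
    have := Complex.ofReal_injective hk.symm
    linarith
  -- roots are distinct
  have hnodup : q.roots.Nodup := by
    rw [Multiset.nodup_iff_count_le_one]
    intro x
    by_contra hcnt
    push_neg at hcnt
    rw [count_roots] at hcnt
    have hxr : q.IsRoot x := by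
      have : 0 < rootMultiplicity x q := by omega
      exact (rootMultiplicity_pos hq0).mp this
    have hder : 0 < rootMultiplicity x (derivative q) := by
      rw [derivative_rootMultiplicity_of_root hxr]; omega
    have hd0 : derivative q ≠ 0 := by
      intro h; exact hdne x hxr (by rw [h, eval_zero])
    exact hdne x hxr ((rootMultiplicity_pos hd0).mp hder)
  set S : Finset ℂ := q.roots.toFinset with hSdef
  have hSval : S.val = q.roots := Multiset.dedup_eq_self.mpr hnodup
  have hScard : S.card = M + 2 := by
    rw [Finset.card_def, hSval]; exact hcard
  have hmemroot : ∀ x ∈ S, q.IsRoot x := by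
    intro x hx
    exact isRoot_of_mem_roots (Multiset.mem_toFinset.mp hx)
  -- q is the nodal polynomial of S
  have hnodal : Lagrange.nodal S id = q := by
    have h1 := prod_multiset_X_sub_C_of_monic_of_roots_card_eq (qpoly_monic M t)
      (by rw [hcard, qpoly_natDegree])
    rw [Lagrange.nodal_eq]
    calc ∏ x ∈ S, (X - C (id x)) = (S.val.map fun x => X - C x).prod := by
          rw [Finset.prod_eq_multiset_prod]; simp only [id_eq]
      _ = q := by rw [hSval]; exact h1
  -- evaluate Lagrange basis
  have hbasis : ∀ x ∈ S, eval t (Lagrange.basis S id x) = ((wt M t x : ℝ) : ℂ) := by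
    intro x hx
    have hxr := hmemroot x hx
    have hxn := root_normSq htn hxr
    have htx : t - x ≠ 0 := by
      intro h
      rw [sub_eq_zero] at h
      rw [← h] at hxn
      linarith
    have hk := deriv_key hxr hxn
    have hd := hdne x hxr
    -- basis as product
    have hb : eval t (Lagrange.basis S id x)
        = (∏ y ∈ S.erase x, (t - y)) * (∏ y ∈ S.erase x, (x - y))⁻¹ := by
      rw [Lagrange.basis, eval_prod]
      rw [← Finset.prod_inv_distrib, ← Finset.prod_mul_distrib]
      refine Finset.prod_congr rfl fun y hy => ?_
      simp [Lagrange.basisDivisor]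
      ring
    have hprod1 : (t - x) * ∏ y ∈ S.erase x, (t - y) = q.eval t := by
      rw [← hnodal, Lagrange.eval_nodal]
      rw [← Finset.mul_prod_erase S _ hx]
      simp only [id_eq]
    have hprod2 : ∏ y ∈ S.erase x, (x - y) = (derivative q).eval x := by
      have h2 := Lagrange.eval_nodal_derivative_eval_node_eq (s := S) (v := id) (i := x) hx
      rw [hnodal, Lagrange.eval_nodal] at h2
      simp only [id_eq] at h2
      exact h2.symm
    have hqt : q.eval t = ((normSq t - 1 : ℝ) : ℂ) := by
      rw [qpoly_eval]
      push_cast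
      rw [Complex.normSq_eq_conj_mul_self]
      ring
    have hR := hRpos x
    have hxt : x - t ≠ 0 := sub_ne_zero.mpr (fun h => by rw [h] at hxn; linarith)
    have hwtc : ((wt M t x : ℝ) : ℂ)
        * (((M + 1) * normSq (1 - (starRingEnd ℂ t) * x) + (1 - normSq t) : ℝ) : ℂ)
        = ((1 - normSq t : ℝ) : ℂ) := by
      rw [wt, ← Complex.ofReal_mul, div_mul_cancel₀ _ (ne_of_gt hR)]
    rw [← hqdef] at hk
    rw [hb, hprod2, ← div_eq_mul_inv, div_eq_iff hd]
    refine mul_right_cancel₀ hxt ?_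
    rw [mul_assoc, hk, hwtc]
    rw [hqt] at hprod1
    push_cast at hprod1 ⊢
    linear_combination -hprod1
  -- interpolation identity
  have hinj : Set.InjOn id (S : Set ℂ) := Function.injective_id.injOn
  set e := S.equivFinOfCardEq hScard with hedef
  refine ⟨fun i => ((e.symm i : ℂ)), fun i => wt M t (e.symm i : ℂ), ?_, ?_, ?_⟩
  · intro s
    have hn := root_normSq htn (hmemroot _ (e.symm s).2)
    rw [Complex.norm_def, hn, Real.sqrt_one]
  · intro s
    have := hRpos ((e.symm s : ℂ))
    unfold wt
    have h1 : (0:ℝ) < 1 - normSq t := by linarith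
    exact le_of_lt (div_pos h1 this)
  · intro d hd
    have hdeg : (X ^ d : ℂ[X]).degree < S.card := by
      rw [degree_X_pow, hScard]
      exact_mod_cast Nat.lt_succ_of_le hd
    have hint := Lagrange.eq_interpolate (f := (X ^ d : ℂ[X])) hinj hdeg
    calc (∑ s : Fin (M + 2), ((wt M t (e.symm s : ℂ) : ℝ) : ℂ) * ((e.symm s : ℂ)) ^ d)
        = ∑ x : {y // y ∈ S}, ((wt M t (x : ℂ) : ℝ) : ℂ) * (x : ℂ) ^ d := by
          exact Equiv.sum_comp e.symm (fun x : {y // y ∈ S} => ((wt M t (x : ℂ) : ℝ) : ℂ) * (x : ℂ) ^ d)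
      _ = ∑ x ∈ S, ((wt M t x : ℝ) : ℂ) * x ^ d := by
          rw [← Finset.sum_coe_sort S (fun x => ((wt M t x : ℝ) : ℂ) * x ^ d)]
      _ = eval t ((Lagrange.interpolate S id) fun i => eval (id i) (X ^ d)) := by
          rw [Lagrange.interpolate_apply, eval_finset_sum]
          refine Finset.sum_congr rfl fun x hx => ?_
          rw [eval_mul, eval_C, hbasis x hx]
          simp only [id_eq, eval_pow, eval_X]
          ring
      _ = eval t (X ^ d) := by rw [← hint]
      _ = t ^ d := by simp


/-- **Cubature on the torus.** Let `N ≥ 1` and `t₁, …, t_k` points of the open unit disc,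
and put `m = (N+1)^k`. Then there exist `m` points `w¹, …, wᵐ` on the `k`-torus and
nonnegative weights `a₁, …, a_m` summing to `1` such that
`p(t₁, …, t_k) = ∑ᵢ aᵢ p(wⁱ)` for every polynomial `p` in `k` variables of total degree
at most `N`. -/
theorem cubature_on_torus
    (N : ℕ) (hN : 0 < N) (k : ℕ) (t : Fin k → ℂ) (ht : ∀ j, ‖t j‖ < 1) :
    ∃ (w : Fin ((N + 1) ^ k) → Fin k → ℂ) (a : Fin ((N + 1) ^ k) → ℝ),
      (∀ i j, ‖w i j‖ = 1) ∧
      (∀ i, 0 ≤ a i) ∧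
      (∑ i, a i) = 1 ∧
      ∀ p : MvPolynomial (Fin k) ℂ, p.totalDegree ≤ N →
        MvPolynomial.eval t p = ∑ i, (a i : ℂ) * MvPolynomial.eval (w i) p := by
  obtain ⟨M, rfl⟩ : ∃ M, N = M + 1 := ⟨N - 1, by omega⟩
  choose w a hw ha hmom using fun j => onevar M (t j) (ht j)
  have hsum1 : ∀ j, ∑ s, a j s = 1 := by
    intro j
    have h0 := hmom j 0 (Nat.zero_le _)
    simp only [pow_zero, mul_one] at h0
    exact_mod_cast h0
  set e : (Fin k → Fin (M + 2)) ≃ Fin ((M + 2) ^ k) := finFunctionFinEquiv with hedef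
  have hdj : ∀ (p : MvPolynomial (Fin k) ℂ), p.totalDegree ≤ M + 1 →
      ∀ d ∈ p.support, ∀ j, d j ≤ M + 1 := by
    intro p hp d hd j
    have h1 : (d.sum fun _ e => e) ≤ p.totalDegree := MvPolynomial.le_totalDegree hd
    have h2 : d j ≤ d.sum fun _ e => e := by
      rw [Finsupp.sum]
      by_cases hj : j ∈ d.support
      · exact Finset.single_le_sum (fun _ _ => Nat.zero_le _) hj
      · simp [Finsupp.notMem_support_iff.mp hj]
    omega
  refine ⟨fun i j => w j (e.symm i j), fun i => ∏ j, a j (e.symm i j), ?_, ?_, ?_, ?_⟩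
  · intro i j; exact hw j (e.symm i j)
  · intro i; exact Finset.prod_nonneg fun j _ => ha j (e.symm i j)
  · calc ∑ i, ∏ j, a j (e.symm i j)
        = ∑ f : Fin k → Fin (M + 2), ∏ j, a j (f j) := by
          rw [← Equiv.sum_comp e (fun i => ∏ j, a j (e.symm i j))]
          simp
      _ = ∏ j, ∑ s, a j s := by
          rw [Finset.prod_univ_sum]
          simp
      _ = 1 := by simp [hsum1]
  · intro p hp
    have hmono : ∀ d ∈ p.support,
        (∏ j, t j ^ d j)
          = ∑ i, ((∏ j, a j (e.symm i j) : ℝ) : ℂ) * ∏ j, (w j (e.symm i j)) ^ d j := by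
      intro d hd
      calc ∏ j, t j ^ d j
          = ∏ j, ∑ s, (a j s : ℂ) * w j s ^ d j := by
            refine Finset.prod_congr rfl fun j _ => (hmom j (d j) (hdj p hp d hd j)).symm
        _ = ∑ f : Fin k → Fin (M + 2), ∏ j, ((a j (f j) : ℂ) * w j (f j) ^ d j) := by
            rw [Finset.prod_univ_sum]
            simp
        _ = ∑ i, ((∏ j, a j (e.symm i j) : ℝ) : ℂ) * ∏ j, (w j (e.symm i j)) ^ d j := by
            rw [← Equiv.sum_comp e (fun i =>
              ((∏ j, a j (e.symm i j) : ℝ) : ℂ) * ∏ j, (w j (e.symm i j)) ^ d j)]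
            refine Finset.sum_congr rfl fun f _ => ?_
            simp only [Equiv.symm_apply_apply]
            rw [Finset.prod_mul_distrib]
            push_cast
            ring
    rw [MvPolynomial.eval_eq']
    calc ∑ d ∈ p.support, p.coeff d * ∏ j, t j ^ d j
        = ∑ d ∈ p.support, ∑ i, p.coeff d *
            (((∏ j, a j (e.symm i j) : ℝ) : ℂ) * ∏ j, (w j (e.symm i j)) ^ d j) := by
          refine Finset.sum_congr rfl fun d hd => ?_
          rw [hmono d hd, Finset.mul_sum]
      _ = ∑ i, ∑ d ∈ p.support, p.coeff d *
            (((∏ j, a j (e.symm i j) : ℝ) : ℂ) * ∏ j, (w j (e.symm i j)) ^ d j) := by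
          rw [Finset.sum_comm]
      _ = ∑ i, ((∏ j, a j (e.symm i j) : ℝ) : ℂ)
            * MvPolynomial.eval (fun j => w j (e.symm i j)) p := by
          refine Finset.sum_congr rfl fun i _ => ?_
          rw [MvPolynomial.eval_eq', Finset.mul_sum]
          refine Finset.sum_congr rfl fun d _ => ?_
          ring
end

section
/- Let A and B be commuting contractions on a finite-dimensional Hilbert space H. Suppose U is a unitary N-dilation of A on a finite-dimensional space K, and there exists a contraction V on K commuting with U such that the pair (U, V) is an N-dilation of (A, B), i.e., A^{n_1} B^{n_2} = P_H U^{n_1} V^{n_2} P_H whenever n_1 + n_2 ≤ N. Then the pair (A, B) has a unitary N-dilation on a finite-dimensional space (i.e., there exist commuting unitaries on a finite-dimensional space K' ⊇ H dilating all products A^{n_1}B^{n_2} with n_1+n_2 ≤ N). -/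
open ContinuousLinearMap Polynomial
open scoped InnerProductSpace

noncomputable section CommutantLiftingAux

variable {K : Type} [NormedAddCommGroup K] [InnerProductSpace ℂ K] [FiniteDimensional ℂ K]

namespace CommutantLiftingAux

lemma intertwine_pow (v a b : K →L[ℂ] K) (hv : v * a = b * v) (n : ℕ) :
    v * a ^ n = b ^ n * v := by
  induction n with
  | zero => simp
  | succ n ih =>
    rw [pow_succ, pow_succ, ← mul_assoc, ih, mul_assoc, mul_assoc, hv]

lemma intertwine_aeval (v a b : K →L[ℂ] K) (hv : v * a = b * v) (p : ℝ[X]) :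
    v * aeval a p = aeval b p * v := by
  induction p using Polynomial.induction_on' with
  | add p q hp hq => rw [map_add, map_add, mul_add, add_mul, hp, hq]
  | monomial n r =>
    rw [aeval_monomial, aeval_monomial]
    calc v * (algebraMap ℝ (K →L[ℂ] K) r * a ^ n)
        = (v * algebraMap ℝ (K →L[ℂ] K) r) * a ^ n := by rw [mul_assoc]
      _ = (algebraMap ℝ (K →L[ℂ] K) r * v) * a ^ n := by rw [Algebra.commutes]
      _ = algebraMap ℝ (K →L[ℂ] K) r * (v * a ^ n) := by rw [mul_assoc]
      _ = algebraMap ℝ (K →L[ℂ] K) r * (b ^ n * v) := by rw [intertwine_pow v a b hv]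
      _ = algebraMap ℝ (K →L[ℂ] K) r * b ^ n * v := by rw [mul_assoc]

lemma intertwine_cfc [CompleteSpace K] (v a b : K →L[ℂ] K)
    (ha : IsSelfAdjoint a) (hb : IsSelfAdjoint b)
    (hv : v * a = b * v) (f : ℝ → ℝ) (hf : Continuous f) :
    v * cfc f a = cfc f b * v := by
  rcases subsingleton_or_nontrivial K with hK | hK
  · have : Subsingleton (K →L[ℂ] K) := by
      constructor; intro x y; ext k; exact Subsingleton.elim _ _
    exact Subsingleton.elim _ _
  set M : ℝ := max ‖a‖ ‖b‖ with hM
  set s : Set ℝ := Set.Icc (-M) M with hs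
  have hsa : spectrum ℝ a ⊆ s := by
    intro t ht
    have := spectrum.norm_le_norm_of_mem ht
    rw [Real.norm_eq_abs, abs_le] at this
    exact ⟨by linarith [this.1, le_max_left ‖a‖ ‖b‖], by linarith [this.2, le_max_left ‖a‖ ‖b‖]⟩
  have hsb : spectrum ℝ b ⊆ s := by
    intro t ht
    have := spectrum.norm_le_norm_of_mem ht
    rw [Real.norm_eq_abs, abs_le] at this
    exact ⟨by linarith [this.1, le_max_right ‖a‖ ‖b‖], by linarith [this.2, le_max_right ‖a‖ ‖b‖]⟩
  rw [← sub_eq_zero, ← norm_eq_zero]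
  by_contra hne
  have hpos : 0 < ‖v * cfc f a - cfc f b * v‖ := lt_of_le_of_ne (norm_nonneg _) (Ne.symm hne)
  set D := ‖v * cfc f a - cfc f b * v‖ with hD
  set ε : ℝ := D / (4 * (‖v‖ + 1)) with hε'
  have hε : 0 < ε := by positivity
  have hεv : 2 * ε * ‖v‖ < D := by
    have h1 : 2 * ε * ‖v‖ ≤ 2 * ε * (‖v‖ + 1) := by nlinarith [norm_nonneg v]
    have h2 : 2 * ε * (‖v‖ + 1) = D / 2 := by
      rw [hε']; field_simp <;> ring
    linarith
  -- Weierstrass approximation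
  have hcl := polynomialFunctions_closure_eq_top (-M) M
  have hfs : (ContinuousMap.mk f hf).restrict s ∈
      closure (polynomialFunctions s : Set C(s, ℝ)) := by
    have : (ContinuousMap.mk f hf).restrict s ∈
        (polynomialFunctions (Set.Icc (-M) M)).topologicalClosure := by
      rw [hcl]; trivial
    exact this
  rw [Metric.mem_closure_iff] at hfs
  obtain ⟨g, hg, hdist⟩ := hfs ε hε
  rw [polynomialFunctions_coe] at hg
  obtain ⟨p, hp⟩ := hg
  have happrox : ∀ t ∈ s, |f t - p.eval t| < ε := by
    intro t ht
    have := ContinuousMap.dist_apply_le_dist (f := (ContinuousMap.mk f hf).restrict s) (g := g) ⟨t, ht⟩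
    have h2 : g ⟨t, ht⟩ = p.eval t := by rw [← hp]; rfl
    have h3 : ((ContinuousMap.mk f hf).restrict s) ⟨t, ht⟩ = f t := rfl
    rw [h2, h3, Real.dist_eq] at this
    exact lt_of_le_of_lt this hdist
  -- norm estimates
  have key : ∀ (c : K →L[ℂ] K), IsSelfAdjoint c → spectrum ℝ c ⊆ s →
      ‖cfc f c - cfc (fun t => p.eval t) c‖ ≤ ε := by
    intro c hc hcs
    rw [← cfc_sub f (fun t => p.eval t) c]
    exact norm_cfc_le hε.le (fun t ht => by
      rw [Real.norm_eq_abs]; exact (happrox t (hcs ht)).le)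
  have hpa : cfc (fun t => p.eval t) a = aeval a p := cfc_polynomial p a
  have hpb : cfc (fun t => p.eval t) b = aeval b p := cfc_polynomial p b
  have hcomm : v * cfc (fun t => p.eval t) a = cfc (fun t => p.eval t) b * v := by
    rw [hpa, hpb]; exact intertwine_aeval v a b hv p
  have expand : v * cfc f a - cfc f b * v =
      v * (cfc f a - cfc (fun t => p.eval t) a)
        + (cfc (fun t => p.eval t) b - cfc f b) * v
        + (v * cfc (fun t => p.eval t) a - cfc (fun t => p.eval t) b * v) := by
    noncomm_ring
  have : D < D := by
    calc D = ‖v * cfc f a - cfc f b * v‖ := hD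
      _ ≤ ‖v * (cfc f a - cfc (fun t => p.eval t) a)‖
          + ‖(cfc (fun t => p.eval t) b - cfc f b) * v‖
          + ‖v * cfc (fun t => p.eval t) a - cfc (fun t => p.eval t) b * v‖ := by
          rw [expand]; exact norm_add₃_le
      _ ≤ ‖v‖ * ε + ε * ‖v‖ + 0 := by
          gcongr ?_ + ?_ + ?_
          · calc ‖v * (cfc f a - cfc (fun t => p.eval t) a)‖
                ≤ ‖v‖ * ‖cfc f a - cfc (fun t => p.eval t) a‖ := norm_mul_le _ _
              _ ≤ ‖v‖ * ε := by gcongr; exact key a ha hsa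
          · calc ‖(cfc (fun t => p.eval t) b - cfc f b) * v‖
                ≤ ‖cfc (fun t => p.eval t) b - cfc f b‖ * ‖v‖ := norm_mul_le _ _
              _ ≤ ε * ‖v‖ := by
                  gcongr
                  rw [norm_sub_rev]; exact key b hb hsb
          · rw [hcomm]; simp
      _ = 2 * ε * ‖v‖ := by ring
      _ < D := hεv
  exact absurd this (lt_irrefl D)

variable [CompleteSpace K]

lemma contraction_defect_nonneg (V : K →L[ℂ] K) (hV : ‖V‖ ≤ 1) :
    (0:K →L[ℂ] K) ≤ 1 - star V * V := by
  rw [ContinuousLinearMap.nonneg_iff_isPositive]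
  constructor
  · exact ((IsSelfAdjoint.one _).sub (IsSelfAdjoint.star_mul_self V)).isSymmetric
  · intro k
    rw [reApplyInnerSelf]
    have : (1 - star V * V) k = k - adjoint V (V k) := by
      simp [ContinuousLinearMap.sub_apply, ContinuousLinearMap.mul_apply,
        ContinuousLinearMap.star_eq_adjoint]
    rw [this, inner_sub_left, map_sub, adjoint_inner_left]
    have h1 : RCLike.re (⟪V k, V k⟫_ℂ) = ‖V k‖ ^ 2 := by
      rw [inner_self_eq_norm_sq]
    have h2 : RCLike.re (⟪k, k⟫_ℂ) = ‖k‖ ^ 2 := by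
      rw [inner_self_eq_norm_sq]
    rw [h1, h2]
    have : ‖V k‖ ≤ ‖k‖ := by
      calc ‖V k‖ ≤ ‖V‖ * ‖k‖ := V.le_opNorm k
        _ ≤ 1 * ‖k‖ := by gcongr
        _ = ‖k‖ := one_mul _
    nlinarith [norm_nonneg (V k), norm_nonneg k]

lemma sqrt_mul_sqrt (x : K →L[ℂ] K) (hx : IsSelfAdjoint x) (hx0 : (0:K →L[ℂ] K) ≤ x) :
    cfc Real.sqrt x * cfc Real.sqrt x = x := by
  rw [← cfc_mul Real.sqrt Real.sqrt x]
  have : ∀ t ∈ spectrum ℝ x, Real.sqrt t * Real.sqrt t = t := fun t ht =>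
    Real.mul_self_sqrt (spectrum_nonneg_of_nonneg hx0 ht)
  rw [cfc_congr this, cfc_id' ℝ x]

/-- The block operator on `K^{N+2}`. Row 0: `V k₀ + Q k_last`; row 1: `P k₀ - V* k_last`;
row `i ≥ 2`: `k_{i-1}`. -/
def blockV (N : ℕ) (V P Q : K →L[ℂ] K) :
    PiLp 2 (fun _ : Fin (N+2) => K) →L[ℂ] PiLp 2 (fun _ : Fin (N+2) => K) :=
  LinearMap.toContinuousLinearMap
  { toFun := fun k => WithLp.toLp 2 fun i =>
      if (i:ℕ) = 0 then V (k 0) + Q (k (Fin.last (N+1)))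
      else if (i:ℕ) = 1 then P (k 0) - adjoint V (k (Fin.last (N+1)))
      else k ⟨(i:ℕ) - 1, Nat.lt_of_le_of_lt (Nat.sub_le _ _) i.isLt⟩
    map_add' := by
      intro a b
      ext i
      by_cases h0 : (i:ℕ) = 0 <;> by_cases h1 : (i:ℕ) = 1 <;>
        simp_all [PiLp.add_apply, map_add, -Fin.val_eq_zero_iff] <;> abel
    map_smul' := by
      intro c a
      ext i
      by_cases h0 : (i:ℕ) = 0 <;> by_cases h1 : (i:ℕ) = 1 <;>
        simp_all [PiLp.smul_apply, map_smul, smul_sub, -Fin.val_eq_zero_iff] }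

lemma blockV_apply (N : ℕ) (V P Q : K →L[ℂ] K) (k : PiLp 2 (fun _ : Fin (N+2) => K))
    (i : Fin (N+2)) :
    blockV N V P Q k i =
      if (i:ℕ) = 0 then V (k 0) + Q (k (Fin.last (N+1)))
      else if (i:ℕ) = 1 then P (k 0) - adjoint V (k (Fin.last (N+1)))
      else k ⟨(i:ℕ) - 1, Nat.lt_of_le_of_lt (Nat.sub_le _ _) i.isLt⟩ := rfl

/-- The adjoint block: row 0: `V* k₀ + P k₁`; row last: `Q k₀ - V k₁`; rows `1 ≤ i ≤ N`: `k_{i+1}`. -/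
def blockVstar (N : ℕ) (V P Q : K →L[ℂ] K) :
    PiLp 2 (fun _ : Fin (N+2) => K) →L[ℂ] PiLp 2 (fun _ : Fin (N+2) => K) :=
  LinearMap.toContinuousLinearMap
  { toFun := fun k => WithLp.toLp 2 fun i =>
      if (i:ℕ) = 0 then adjoint V (k 0) + P (k 1)
      else if (i:ℕ) = N+1 then Q (k 0) - V (k 1)
      else k ⟨min ((i:ℕ) + 1) (N+1), by omega⟩
    map_add' := by
      intro a b
      ext i
      by_cases h0 : (i:ℕ) = 0 <;> by_cases h1 : (i:ℕ) = N+1 <;>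
        simp_all [PiLp.add_apply, map_add, -Fin.val_eq_zero_iff] <;> abel
    map_smul' := by
      intro c a
      ext i
      by_cases h0 : (i:ℕ) = 0 <;> by_cases h1 : (i:ℕ) = N+1 <;>
        simp_all [PiLp.smul_apply, map_smul, smul_sub, -Fin.val_eq_zero_iff] }

lemma blockVstar_apply (N : ℕ) (V P Q : K →L[ℂ] K) (k : PiLp 2 (fun _ : Fin (N+2) => K))
    (i : Fin (N+2)) :
    blockVstar N V P Q k i =
      if (i:ℕ) = 0 then adjoint V (k 0) + P (k 1)
      else if (i:ℕ) = N+1 then Q (k 0) - V (k 1)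
      else k ⟨min ((i:ℕ) + 1) (N+1), by omega⟩ := rfl

/-- Diagonal (ampliation) operator. -/
def blockDiag (N : ℕ) (U : K →L[ℂ] K) :
    PiLp 2 (fun _ : Fin (N+2) => K) →L[ℂ] PiLp 2 (fun _ : Fin (N+2) => K) :=
  LinearMap.toContinuousLinearMap
  { toFun := fun k => WithLp.toLp 2 fun i => U (k i)
    map_add' := by intro a b; ext i; simp [PiLp.add_apply]
    map_smul' := by intro c a; ext i; simp [PiLp.smul_apply] }

lemma blockDiag_apply (N : ℕ) (U : K →L[ℂ] K) (k : PiLp 2 (fun _ : Fin (N+2) => K))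
    (i : Fin (N+2)) : blockDiag N U k i = U (k i) := rfl

/-- Embedding of `K` as coordinate `0`. -/
def embed0 (N : ℕ) : K →ₗᵢ[ℂ] PiLp 2 (fun _ : Fin (N+2) => K) where
  toLinearMap :=
    { toFun := fun x => WithLp.toLp 2 fun i => if (i:ℕ) = 0 then x else 0
      map_add' := by intro a b; ext i; by_cases h : (i:ℕ) = 0 <;> simp_all [PiLp.add_apply]
      map_smul' := by intro c a; ext i; by_cases h : (i:ℕ) = 0 <;> simp_all [PiLp.smul_apply] }
  norm_map' := by
    intro x
    rw [PiLp.norm_eq_of_L2]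
    have key : ∀ i : Fin (N+2), ‖(if (i:ℕ) = 0 then x else 0 : K)‖ ^ 2
        = if i = 0 then ‖x‖ ^ 2 else 0 := by
      intro i
      by_cases h : i = 0
      · simp [h]
      · have h' : (i:ℕ) ≠ 0 := fun hc => h (Fin.ext hc)
        simp [h', h]
    have hsum : (∑ i : Fin (N+2), ‖(if (i:ℕ) = 0 then x else 0 : K)‖ ^ 2) = ‖x‖ ^ 2 := by
      rw [Finset.sum_congr rfl (fun i _ => key i),
        Finset.sum_ite_eq' Finset.univ (0 : Fin (N+2))]
      simp
    show √(∑ i : Fin (N + 2), ‖(if (i:ℕ) = 0 then x else 0 : K)‖ ^ 2) = ‖x‖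
    rw [hsum, Real.sqrt_sq (norm_nonneg x)]

lemma embed0_apply (N : ℕ) (x : K) (i : Fin (N+2)) :
    embed0 N x i = if (i:ℕ) = 0 then x else 0 := rfl


lemma blockVstar_eq_adjoint (N : ℕ) (V P Q : K →L[ℂ] K)
    (hP : IsSelfAdjoint P) (hQ : IsSelfAdjoint Q) :
    blockVstar N V P Q = adjoint (blockV N V P Q) := by
  rw [ContinuousLinearMap.eq_adjoint_iff]
  intro x y
  rw [PiLp.inner_apply, PiLp.inner_apply]
  set F : Fin (N+2) → ℂ := fun i => ⟪blockVstar N V P Q x i, y i⟫_ℂ with hF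
  set G : Fin (N+2) → ℂ := fun i => ⟪x i, blockV N V P Q y i⟫_ℂ with hG
  have hlast : ((Fin.last N).succ : Fin (N+2)) = Fin.last (N+1) := by
    ext; simp
  have hone : ((0 : Fin (N+1)).succ : Fin (N+2)) = 1 := rfl
  -- expand sums
  rw [Fin.sum_univ_succ F, Fin.sum_univ_castSucc (fun i : Fin (N+1) => F i.succ)]
  rw [Fin.sum_univ_succ G, Fin.sum_univ_succ (fun i : Fin (N+1) => G i.succ)]
  have hmid : ∀ i : Fin N, F (i.castSucc.succ) = G (i.succ.succ) := by
    intro i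
    have hiv : ((i.castSucc.succ : Fin (N+2)) : ℕ) = (i:ℕ) + 1 := by simp
    have hiv2 : ((i.succ.succ : Fin (N+2)) : ℕ) = (i:ℕ) + 2 := by simp
    have h1 : (i:ℕ) + 1 ≠ 0 := by omega
    have h2 : (i:ℕ) + 1 ≠ N + 1 := by omega
    have h3 : (i:ℕ) + 2 ≠ 0 := by omega
    have h4 : (i:ℕ) + 2 ≠ 1 := by omega
    rw [hF, hG]
    simp only [blockVstar_apply, blockV_apply, hiv, hiv2, if_neg h1, if_neg h2,
      if_neg h3, if_neg h4]
    congr 1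
    all_goals first
      | rfl
      | (refine congrArg (WithLp.ofLp _) ?_; apply Fin.ext; simp; omega)
      | (refine congrArg (WithLp.ofLp _) ?_; apply Fin.ext; simp)
  have hbdry : F 0 + F (Fin.last N).succ = G 0 + G (0 : Fin (N+1)).succ := by
    rw [hF, hG, hlast, hone]
    simp only [blockVstar_apply, blockV_apply]
    norm_num
    have a1 : ⟪adjoint V (x 0), y 0⟫_ℂ = ⟪x 0, V (y 0)⟫_ℂ := adjoint_inner_left V _ _
    have a2 : ⟪P (x 1), y 0⟫_ℂ = ⟪x 1, P (y 0)⟫_ℂ := by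
      conv_lhs => rw [← hP.adjoint_eq]
      exact adjoint_inner_left P _ _
    have a3 : ⟪Q (x 0), y (Fin.last (N+1))⟫_ℂ = ⟪x 0, Q (y (Fin.last (N+1)))⟫_ℂ := by
      conv_lhs => rw [← hQ.adjoint_eq]
      exact adjoint_inner_left Q _ _
    have a4 : ⟪V (x 1), y (Fin.last (N+1))⟫_ℂ = ⟪x 1, adjoint V (y (Fin.last (N+1)))⟫_ℂ := by
      conv_lhs => rw [show V = adjoint (adjoint V) from (adjoint_adjoint V).symm]
      exact adjoint_inner_left (adjoint V) _ _
    rw [a1, a2, a3, a4]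
    ring
  calc F 0 + (∑ i : Fin N, F ((i.castSucc).succ) + F (Fin.last N).succ)
      = (F 0 + F (Fin.last N).succ) + ∑ i : Fin N, F ((i.castSucc).succ) := by ring
    _ = (G 0 + G (0 : Fin (N+1)).succ) + ∑ i : Fin N, G (i.succ.succ) := by
        rw [hbdry, Finset.sum_congr rfl (fun i _ => hmid i)]
    _ = G 0 + (G (0 : Fin (N+1)).succ + ∑ i : Fin N, G (i.succ.succ)) := by ring

section evals
variable (N : ℕ) (V P Q : K →L[ℂ] K) (x : PiLp 2 (fun _ : Fin (N+2) => K))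

lemma blockV_apply_zero : blockV N V P Q x 0 = V (x 0) + Q (x (Fin.last (N+1))) := rfl

lemma blockV_apply_one : blockV N V P Q x 1 = P (x 0) - adjoint V (x (Fin.last (N+1))) := by
  rw [blockV_apply]
  norm_num

lemma blockV_apply_mk (j : ℕ) (h2 : 2 ≤ j) (hlt : j < N+2) :
    blockV N V P Q x ⟨j, hlt⟩ = x ⟨j - 1, by omega⟩ := by
  rw [blockV_apply]
  rw [if_neg (by simp; omega), if_neg (by simp; omega)]

lemma blockVstar_apply_zero : blockVstar N V P Q x 0 = adjoint V (x 0) + P (x 1) := rfl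

lemma blockVstar_apply_last :
    blockVstar N V P Q x (Fin.last (N+1)) = Q (x 0) - V (x 1) := by
  rw [blockVstar_apply]
  simp

lemma blockVstar_apply_mk (j : ℕ) (h1 : 1 ≤ j) (hN : j ≤ N) :
    blockVstar N V P Q x ⟨j, by omega⟩ = x ⟨j + 1, by omega⟩ := by
  rw [blockVstar_apply]
  rw [if_neg (by simp; omega), if_neg (by simp; omega)]
  refine congrArg (WithLp.ofLp _) ?_
  apply Fin.ext
  simp
  omega

end evals

variable {N : ℕ} {V P Q U : K →L[ℂ] K}

lemma pt (c : K →L[ℂ] K) (d : K →L[ℂ] K) (h : c = d) (k : K) : c k = d k := by rw [h]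

lemma app_add_mul (S T : K →L[ℂ] K) (k : K) : (S * T) k = S (T k) := rfl

lemma blockVstar_mul_blockV
    (c1 : adjoint V * V + P * P = 1) (c2 : V * adjoint V + Q * Q = 1)
    (c3 : V * P = Q * V) (c4 : P * adjoint V = adjoint V * Q) :
    blockVstar N V P Q * blockV N V P Q = 1 := by
  ext x : 1
  rw [ContinuousLinearMap.mul_apply, ContinuousLinearMap.one_apply]
  ext i
  rcases i with ⟨iv, hlt⟩
  set xl := x (Fin.last (N+1)) with hxl
  rcases Nat.lt_or_ge iv 1 with hiv | hiv
  · -- iv = 0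
    have h0 : (⟨iv, hlt⟩ : Fin (N+2)) = 0 := Fin.ext (by simpa using by omega)
    rw [h0, blockVstar_apply_zero, blockV_apply_zero, blockV_apply_one]
    calc adjoint V (V (x 0) + Q xl) + P (P (x 0) - adjoint V xl)
        = (adjoint V (V (x 0)) + P (P (x 0)))
          + (adjoint V (Q xl) - P (adjoint V xl)) := by
          rw [map_add, map_sub]; abel
      _ = (adjoint V * V + P * P) (x 0)
          + ((adjoint V * Q) xl - (P * adjoint V) xl) := rfl
      _ = x 0 := by rw [c1, c4]; simp
  rcases Nat.lt_or_ge iv (N+1) with hiv2 | hiv2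
  · -- middle : 1 ≤ iv ≤ N
    rw [blockVstar_apply_mk N V P Q _ iv hiv (by omega)]
    rw [blockV_apply_mk N V P Q x (iv+1) (by omega) (by omega)]
    exact congrArg (WithLp.ofLp _) (Fin.ext (by simp))
  · -- iv = N+1
    have h0 : (⟨iv, hlt⟩ : Fin (N+2)) = Fin.last (N+1) := Fin.ext (by simp; omega)
    rw [h0, blockVstar_apply_last, blockV_apply_zero, blockV_apply_one]
    calc Q (V (x 0) + Q xl) - V (P (x 0) - adjoint V xl)
        = ((Q * V) (x 0) - (V * P) (x 0))
          + ((V * adjoint V + Q * Q) xl) := by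
          rw [map_add, map_sub]
          simp only [ContinuousLinearMap.mul_apply, ContinuousLinearMap.add_apply]
          abel
      _ = xl := by rw [← c3, c2]; simp

lemma blockV_mul_blockVstar
    (c1 : adjoint V * V + P * P = 1) (c2 : V * adjoint V + Q * Q = 1)
    (c3 : V * P = Q * V) (c4 : P * adjoint V = adjoint V * Q) :
    blockV N V P Q * blockVstar N V P Q = 1 := by
  ext x : 1
  rw [ContinuousLinearMap.mul_apply, ContinuousLinearMap.one_apply]
  ext i
  rcases i with ⟨iv, hlt⟩
  rcases Nat.lt_or_ge iv 1 with hiv | hiv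
  · have h0 : (⟨iv, hlt⟩ : Fin (N+2)) = 0 := Fin.ext (by simpa using by omega)
    rw [h0, blockV_apply_zero, blockVstar_apply_zero, blockVstar_apply_last]
    calc V (adjoint V (x 0) + P (x 1)) + Q (Q (x 0) - V (x 1))
        = ((V * adjoint V + Q * Q) (x 0))
          + ((V * P) (x 1) - (Q * V) (x 1)) := by
          rw [map_add, map_sub]
          simp only [ContinuousLinearMap.mul_apply, ContinuousLinearMap.add_apply]
          abel
      _ = x 0 := by rw [c2, c3]; simp
  rcases Nat.lt_or_ge iv 2 with hiv2 | hiv2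
  · -- iv = 1
    have h0 : (⟨iv, hlt⟩ : Fin (N+2)) = 1 := Fin.ext (by simp; omega)
    rw [h0, blockV_apply_one, blockVstar_apply_zero, blockVstar_apply_last]
    calc P (adjoint V (x 0) + P (x 1)) - adjoint V (Q (x 0) - V (x 1))
        = ((P * adjoint V) (x 0) - (adjoint V * Q) (x 0))
          + ((adjoint V * V + P * P) (x 1)) := by
          rw [map_add, map_sub]
          simp only [ContinuousLinearMap.mul_apply, ContinuousLinearMap.add_apply]
          abel
      _ = x 1 := by rw [c4, c1]; simp
  · -- 2 ≤ iv ≤ N+1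
    rw [blockV_apply_mk N V P Q _ iv hiv2 (by omega)]
    rw [blockVstar_apply_mk N V P Q x (iv - 1) (by omega) (by omega)]
    refine congrArg (WithLp.ofLp _) ?_
    apply Fin.ext
    simp
    omega

lemma blockDiag_mul (N : ℕ) (S T : K →L[ℂ] K) :
    blockDiag N S * blockDiag N T = blockDiag N (S * T) := rfl

lemma blockDiag_one (N : ℕ) : blockDiag N (1 : K →L[ℂ] K) = 1 := rfl

lemma blockDiag_adjoint (N : ℕ) (U : K →L[ℂ] K) :
    adjoint (blockDiag N U) = blockDiag N (adjoint U) := by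
  symm
  rw [ContinuousLinearMap.eq_adjoint_iff]
  intro x y
  rw [PiLp.inner_apply, PiLp.inner_apply]
  exact Finset.sum_congr rfl fun i _ => adjoint_inner_left U _ _

lemma blockDiag_pow (N : ℕ) (U : K →L[ℂ] K) (m : ℕ) :
    (blockDiag N U) ^ m = blockDiag N (U ^ m) := by
  induction m with
  | zero => rw [pow_zero, pow_zero, blockDiag_one]
  | succ m ih => rw [pow_succ, pow_succ, ih, blockDiag_mul]

lemma blockDiag_unitary (N : ℕ) (U : K →L[ℂ] K) (hU : U ∈ unitary (K →L[ℂ] K)) :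
    blockDiag N U ∈ unitary _ := by
  rw [Unitary.mem_iff] at hU ⊢
  rw [ContinuousLinearMap.star_eq_adjoint, blockDiag_adjoint, blockDiag_mul, blockDiag_mul,
    ← ContinuousLinearMap.star_eq_adjoint, hU.1, hU.2, blockDiag_one]
  exact ⟨rfl, rfl⟩

lemma blockDiag_commute_blockV
    (hV : U * V = V * U) (hVs : U * adjoint V = adjoint V * U)
    (hP : U * P = P * U) (hQ : U * Q = Q * U) :
    Commute (blockDiag N U) (blockV N V P Q) := by
  show _ = _
  ext x : 1
  rw [ContinuousLinearMap.mul_apply, ContinuousLinearMap.mul_apply]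
  ext i
  rcases i with ⟨iv, hlt⟩
  rcases Nat.lt_or_ge iv 1 with hiv | hiv
  · have h0 : (⟨iv, hlt⟩ : Fin (N+2)) = 0 := Fin.ext (by simpa using by omega)
    rw [h0]
    show U (blockV N V P Q x 0) = blockV N V P Q (blockDiag N U x) 0
    rw [blockV_apply_zero, blockV_apply_zero, map_add]
    rw [blockDiag_apply, blockDiag_apply]
    rw [← app_add_mul, ← app_add_mul, ← app_add_mul, ← app_add_mul, hV, hQ]
  rcases Nat.lt_or_ge iv 2 with hiv2 | hiv2
  · have h0 : (⟨iv, hlt⟩ : Fin (N+2)) = 1 := Fin.ext (by simp; omega)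
    rw [h0]
    show U (blockV N V P Q x 1) = blockV N V P Q (blockDiag N U x) 1
    rw [blockV_apply_one, blockV_apply_one, map_sub]
    rw [blockDiag_apply, blockDiag_apply]
    rw [← app_add_mul, ← app_add_mul, ← app_add_mul, ← app_add_mul, hP, hVs]
  · show U (blockV N V P Q x ⟨iv, hlt⟩) = blockV N V P Q (blockDiag N U x) ⟨iv, hlt⟩
    rw [blockV_apply_mk N V P Q _ iv hiv2 hlt, blockV_apply_mk N V P Q _ iv hiv2 hlt]
    rfl

lemma blockV_pow_embed0 (m : ℕ) (hm : m ≤ N + 1) (k : K) (i : Fin (N+2)) :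
    ((blockV N V P Q) ^ m) (embed0 N k) i =
      if (i:ℕ) = 0 then (V ^ m) k
      else if (i:ℕ) ≤ m then P ((V ^ (m - (i:ℕ))) k) else 0 := by
  induction m generalizing i with
  | zero =>
    rw [pow_zero, ContinuousLinearMap.one_apply, embed0_apply]
    rcases Nat.eq_zero_or_pos (i:ℕ) with h0 | h0
    · rw [if_pos h0, if_pos h0, pow_zero, ContinuousLinearMap.one_apply]
    · rw [if_neg (by omega), if_neg (by omega), if_neg (by omega)]
  | succ m ih =>
    have hm' : m ≤ N + 1 := by omega
    rw [pow_succ', ContinuousLinearMap.mul_apply]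
    have hz_last : ((blockV N V P Q) ^ m) (embed0 N k) (Fin.last (N+1)) = 0 := by
      rw [ih hm']
      rw [if_neg (by simp), if_neg (by simp; omega)]
    have hz_zero : ((blockV N V P Q) ^ m) (embed0 N k) 0 = (V ^ m) k := by
      rw [ih hm']
      simp
    rcases i with ⟨iv, hlt⟩
    rcases Nat.lt_or_ge iv 1 with hiv | hiv
    · have h0 : (⟨iv, hlt⟩ : Fin (N+2)) = 0 := Fin.ext (by simpa using by omega)
      rw [h0, blockV_apply_zero, hz_last, hz_zero, map_zero, add_zero]
      rw [if_pos (by simp)]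
      rw [← app_add_mul, ← pow_succ']
    rcases Nat.lt_or_ge iv 2 with hiv2 | hiv2
    · have h0 : (⟨iv, hlt⟩ : Fin (N+2)) = 1 := Fin.ext (by simp; omega)
      rw [h0, blockV_apply_one, hz_last, hz_zero, map_zero, sub_zero]
      rw [if_neg (by simp), if_pos (by simp; try omega)]
      have : m + 1 - ((1 : Fin (N+2)) : ℕ) = m := by simp
      rw [this]
    · rw [blockV_apply_mk N V P Q _ iv hiv2 hlt]
      rw [ih hm']
      simp only [Fin.val_mk]
      rw [if_neg (by omega)]
      by_cases hle : iv ≤ m + 1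
      · rw [if_pos (by omega), if_neg (by omega), if_pos (by omega)]
        have he : m - (iv - 1) = m + 1 - iv := by omega
        rw [he]
      · rw [if_neg (by omega), if_neg (by omega), if_neg (by omega)]

lemma adjoint_embed0 (N : ℕ) (y : PiLp 2 (fun _ : Fin (N+2) => K)) :
    adjoint (embed0 N (K := K)).toContinuousLinearMap y = y 0 := by
  apply ext_inner_right ℂ
  intro w
  rw [adjoint_inner_left]
  have : ((embed0 N (K := K)).toContinuousLinearMap w) = embed0 N w := rfl
  rw [this, PiLp.inner_apply]
  rw [Finset.sum_eq_single (0 : Fin (N+2))]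
  · rw [embed0_apply]; simp
  · intro i _ hi
    have : (i : ℕ) ≠ 0 := fun hc => hi (Fin.ext hc)
    rw [embed0_apply, if_neg this, inner_zero_right]
  · intro h; exact absurd (Finset.mem_univ _) h

theorem block_dilation (N : ℕ) (U V P Q : K →L[ℂ] K) (hU : U ∈ unitary (K →L[ℂ] K))
    (hUV : U * V = V * U) (hUVs : U * adjoint V = adjoint V * U)
    (hUP : U * P = P * U) (hUQ : U * Q = Q * U)
    (hPsa : IsSelfAdjoint P) (hQsa : IsSelfAdjoint Q)
    (c1 : adjoint V * V + P * P = 1) (c2 : V * adjoint V + Q * Q = 1)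
    (c3 : V * P = Q * V) (c4 : P * adjoint V = adjoint V * Q) :
    blockDiag N U ∈ unitary _ ∧ blockV N V P Q ∈ unitary _ ∧
      Commute (blockDiag N U) (blockV N V P Q) ∧
      ∀ n₁ n₂ : ℕ, n₂ ≤ N + 1 → ∀ k : K,
        adjoint (embed0 N (K := K)).toContinuousLinearMap
            (((blockDiag N U) ^ n₁ * (blockV N V P Q) ^ n₂) (embed0 N k))
          = (U ^ n₁ * V ^ n₂) k := by
  refine ⟨blockDiag_unitary N U hU, ?_, blockDiag_commute_blockV hUV hUVs hUP hUQ, ?_⟩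
  · rw [Unitary.mem_iff, ContinuousLinearMap.star_eq_adjoint,
      ← blockVstar_eq_adjoint N V P Q hPsa hQsa]
    exact ⟨blockVstar_mul_blockV c1 c2 c3 c4, blockV_mul_blockVstar c1 c2 c3 c4⟩
  · intro n₁ n₂ hn k
    have h1 : ((blockDiag N U) ^ n₁ * (blockV N V P Q) ^ n₂) (embed0 N k)
        = blockDiag N (U ^ n₁) (((blockV N V P Q) ^ n₂) (embed0 N k)) := by
      rw [← blockDiag_pow]; rfl
    rw [h1, adjoint_embed0, blockDiag_apply, blockV_pow_embed0 n₂ hn k 0]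
    rw [if_pos (by simp)]
    rfl
end CommutantLiftingAux
end CommutantLiftingAux

open CommutantLiftingAux in
set_option maxHeartbeats 1000000 in
/-- **Commutant lifting gives joint N-dilations.** Let `A, B` be commuting contractions
on a finite-dimensional Hilbert space `H`. Suppose `U` is a unitary `N`-dilation of `A`
on a finite-dimensional space `K`, and `V` is a contraction on `K` commuting with `U`
such that the pair `(U, V)` is an `N`-dilation of `(A, B)`. Then `(A, B)` has a unitary
`N`-dilation on a finite-dimensional space: there are commuting unitaries `U', V'` on a
finite-dimensional `K' ⊇ H` with `A^{n₁} B^{n₂} = P_H U'^{n₁} V'^{n₂} P_H` for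
`n₁ + n₂ ≤ N`. -/
theorem commutant_lifting_gives_unitary_N_dilation
    (H K : Type)
    [NormedAddCommGroup H] [InnerProductSpace ℂ H] [FiniteDimensional ℂ H]
    [NormedAddCommGroup K] [InnerProductSpace ℂ K] [FiniteDimensional ℂ K]
    (A B : H →L[ℂ] H) (hA : ‖A‖ ≤ 1) (hB : ‖B‖ ≤ 1) (hAB : Commute A B)
    (N : ℕ) (W : H →ₗᵢ[ℂ] K)
    (U : K →L[ℂ] K) (hU : U ∈ unitary (K →L[ℂ] K))
    (V : K →L[ℂ] K) (hV : ‖V‖ ≤ 1) (hUV : Commute U V)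
    (hdil : ∀ n₁ n₂ : ℕ, n₁ + n₂ ≤ N →
      ∀ h : H, adjoint W.toContinuousLinearMap ((U ^ n₁ * V ^ n₂) (W h)) = (A ^ n₁ * B ^ n₂) h) :
    ∃ (K' : Type) (_i1 : NormedAddCommGroup K') (_i2 : InnerProductSpace ℂ K')
      (_i3 : FiniteDimensional ℂ K') (W' : H →ₗᵢ[ℂ] K') (U' V' : K' →L[ℂ] K'),
      U' ∈ unitary (K' →L[ℂ] K') ∧ V' ∈ unitary (K' →L[ℂ] K') ∧ Commute U' V' ∧
      ∀ n₁ n₂ : ℕ, n₁ + n₂ ≤ N →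
        ∀ h : H,
          adjoint W'.toContinuousLinearMap ((U' ^ n₁ * V' ^ n₂) (W' h)) =
            (A ^ n₁ * B ^ n₂) h := by
  classical
  obtain ⟨hU1, hU2⟩ := Unitary.mem_iff.mp hU
  have hUVe : U * V = V * U := hUV.eq
  have hUVs : U * adjoint V = adjoint V * U := by
    have hs : star V * star U = star U * star V := by
      rw [← star_mul, ← star_mul, hUVe]
    calc U * adjoint V = U * star V := by rw [ContinuousLinearMap.star_eq_adjoint]
      _ = U * star V * (star U * U) := by rw [hU1, mul_one]
      _ = U * (star V * star U) * U := by rw [mul_assoc, mul_assoc, mul_assoc]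
      _ = U * (star U * star V) * U := by rw [hs]
      _ = (U * star U) * (star V * U) := by rw [mul_assoc, mul_assoc, mul_assoc]
      _ = star V * U := by rw [hU2, one_mul]
      _ = adjoint V * U := by rw [ContinuousLinearMap.star_eq_adjoint]
  set x : K →L[ℂ] K := 1 - adjoint V * V with hxdef
  set y : K →L[ℂ] K := 1 - V * adjoint V with hydef
  have hx_sa : IsSelfAdjoint x := by
    have : IsSelfAdjoint (1 - star V * V : K →L[ℂ] K) :=
      (IsSelfAdjoint.one _).sub (IsSelfAdjoint.star_mul_self V)
    rwa [ContinuousLinearMap.star_eq_adjoint] at this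
  have hy_sa : IsSelfAdjoint y := by
    have : IsSelfAdjoint (1 - star (star V) * star V : K →L[ℂ] K) :=
      (IsSelfAdjoint.one _).sub (IsSelfAdjoint.star_mul_self (star V))
    rwa [star_star, ContinuousLinearMap.star_eq_adjoint] at this
  have hx0 : 0 ≤ x := by
    have := contraction_defect_nonneg V hV
    rwa [ContinuousLinearMap.star_eq_adjoint] at this
  have hy0 : 0 ≤ y := by
    have hns : ‖(star V : K →L[ℂ] K)‖ ≤ 1 := by
      rw [ContinuousLinearMap.star_eq_adjoint]
      show ‖(ContinuousLinearMap.adjoint : (K →L[ℂ] K) ≃ₗᵢ⋆[ℂ] (K →L[ℂ] K)) V‖ ≤ 1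
      rw [LinearIsometryEquiv.norm_map]
      exact hV
    have := contraction_defect_nonneg (star V) hns
    rwa [star_star, ContinuousLinearMap.star_eq_adjoint] at this
  set P : K →L[ℂ] K := cfc Real.sqrt x with hPdef
  set Q : K →L[ℂ] K := cfc Real.sqrt y with hQdef
  have hPsa : IsSelfAdjoint P := cfc_predicate Real.sqrt x
  have hQsa : IsSelfAdjoint Q := cfc_predicate Real.sqrt y
  have hP2 : P * P = x := sqrt_mul_sqrt x hx_sa hx0
  have hQ2 : Q * Q = y := sqrt_mul_sqrt y hy_sa hy0
  have c1 : adjoint V * V + P * P = 1 := by rw [hP2, hxdef]; abel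
  have c2 : V * adjoint V + Q * Q = 1 := by rw [hQ2, hydef]; abel
  have hvxy : V * x = y * V := by rw [hxdef, hydef]; noncomm_ring
  have c3 : V * P = Q * V :=
    intertwine_cfc V x y hx_sa hy_sa hvxy Real.sqrt Real.continuous_sqrt
  have c4 : P * adjoint V = adjoint V * Q := by
    have h := congrArg star c3
    rw [star_mul, star_mul, hPsa.star_eq, hQsa.star_eq] at h
    simp only [ContinuousLinearMap.star_eq_adjoint] at h
    exact h
  have hUxx : U * x = x * U := by
    have h1 : U * (adjoint V * V) = (adjoint V * V) * U := by
      rw [← mul_assoc, hUVs, mul_assoc, hUVe, ← mul_assoc]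
    rw [hxdef, mul_sub, sub_mul, mul_one, one_mul, h1]
  have hUyy : U * y = y * U := by
    have h1 : U * (V * adjoint V) = (V * adjoint V) * U := by
      rw [← mul_assoc, hUVe, mul_assoc, hUVs, ← mul_assoc]
    rw [hydef, mul_sub, sub_mul, mul_one, one_mul, h1]
  have hUP : U * P = P * U :=
    intertwine_cfc U x x hx_sa hx_sa hUxx Real.sqrt Real.continuous_sqrt
  have hUQ : U * Q = Q * U :=
    intertwine_cfc U y y hy_sa hy_sa hUyy Real.sqrt Real.continuous_sqrt
  obtain ⟨hu', hv', hcomm', hdil'⟩ :=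
    block_dilation N U V P Q hU hUVe hUVs hUP hUQ hPsa hQsa c1 c2 c3 c4
  refine ⟨PiLp 2 (fun _ : Fin (N+2) => K), inferInstance, inferInstance, inferInstance,
    (embed0 N).comp W, blockDiag N U, blockV N V P Q, hu', hv', hcomm', ?_⟩
  intro n₁ n₂ hn h
  have hW' : ((embed0 N).comp W).toContinuousLinearMap
      = (embed0 N (K := K)).toContinuousLinearMap.comp W.toContinuousLinearMap := by
    ext h'; rfl
  rw [hW', ContinuousLinearMap.adjoint_comp, ContinuousLinearMap.comp_apply]
  have happ : (((embed0 N).comp W) h : PiLp 2 (fun _ : Fin (N+2) => K)) = embed0 N (W h) := rfl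
  rw [happ, hdil' n₁ n₂ (by omega) (W h)]
  exact hdil n₁ n₂ hn h
end

section
/- Let φ be a completely positive map on B(H) = M_n(ℂ) of Choi index d > 1 (the minimal number of Kraus operators in a representation φ(T) = ∑_{i=1}^d A_i T A_i* is greater than 1). Suppose K ⊇ H and α is a *-endomorphism of B(K) such that φ(T) = P_H α(T) P_H for all T ∈ B(H). Then K is infinite-dimensional. -/
open ContinuousLinearMap
open scoped InnerProductSpace

section rk
variable {E F G : Type*} [NormedAddCommGroup E] [InnerProductSpace ℂ E]
  [NormedAddCommGroup F] [InnerProductSpace ℂ F]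
  [NormedAddCommGroup G] [InnerProductSpace ℂ G]

noncomputable def rk (x : F) (y : E) : E →L[ℂ] F := (innerSL ℂ y).smulRight x

@[simp] lemma rk_apply (x : F) (y z : E) : rk x y z = ⟪y, z⟫_ℂ • x := rfl

lemma comp_rk (C : F →L[ℂ] G) (x : F) (y : E) : C ∘L rk x y = rk (C x) y := by
  ext z; simp

lemma rk_comp [CompleteSpace E] [CompleteSpace G] (x : F) (y : E) (C : G →L[ℂ] E) :
    rk x y ∘L C = rk x (adjoint C y) := by
  ext z; simp [adjoint_inner_left]

lemma adjoint_rk [CompleteSpace E] [CompleteSpace F] (x : F) (y : E) :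
    adjoint (rk x y) = rk y x := by
  symm
  rw [eq_adjoint_iff]
  intro a b
  simp [inner_smul_left, inner_smul_right, mul_comm]

lemma rk_rk (x : F) (y z : E) (w : G) :
    rk x y ∘L rk z w = ⟪y, z⟫_ℂ • rk x w := by
  ext a; simp [smul_smul, mul_comm]

lemma sum_rk {ι : Type*} [Fintype ι] (b : OrthonormalBasis ι ℂ E) (T : E →L[ℂ] F) :
    ∑ i, rk (T (b i)) (b i) = T := by
  ext z
  simp only [ContinuousLinearMap.sum_apply, rk_apply]
  calc ∑ i, ⟪b i, z⟫_ℂ • T (b i) = T (∑ i, ⟪b i, z⟫_ℂ • b i) := by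
        rw [map_sum]; simp
    _ = T z := by rw [b.sum_repr' z]

lemma rk_add (x x' : F) (y : E) : rk (x + x') y = rk x y + rk x' y := by
  ext z; simp

lemma rk_smul (c : ℂ) (x : F) (y : E) : rk (c • x) y = c • rk x y := by
  ext z
  simp only [rk_apply, ContinuousLinearMap.smul_apply]
  rw [smul_comm]

end rk

set_option maxHeartbeats 2000000 in
/-- **No finite-dimensional ∗-endomorphic dilations.** Let `φ` be a completely positive
map on `B(H)` (given, via Choi's theorem, by Kraus operators) whose index is greater than
`1` (it admits no single-Kraus-operator representation). If `K ⊇ H` and `α` is a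
∗-endomorphism of `B(K)` with `φ(T) = P_H α(T) P_H` for all `T ∈ B(H)`, then `K` is
infinite-dimensional. -/
theorem cp_endomorphic_dilation_infinite_dimensional
    (H : Type) [NormedAddCommGroup H] [InnerProductSpace ℂ H] [FiniteDimensional ℂ H]
    (φ : (H →L[ℂ] H) →ₗ[ℂ] (H →L[ℂ] H))
    (hCP : ∃ (d : ℕ) (A : Fin d → (H →L[ℂ] H)),
      ∀ T : H →L[ℂ] H, φ T = ∑ i, A i ∘L T ∘L adjoint (A i))
    (hIndex : ¬ ∃ A : H →L[ℂ] H, ∀ T : H →L[ℂ] H, φ T = A ∘L T ∘L adjoint A)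
    (K : Type) [NormedAddCommGroup K] [InnerProductSpace ℂ K] [CompleteSpace K]
    (W : H →ₗᵢ[ℂ] K)
    (α : (K →L[ℂ] K) →⋆ₐ[ℂ] (K →L[ℂ] K))
    (hdil : ∀ T : H →L[ℂ] H,
      φ T = adjoint W.toContinuousLinearMap ∘L
        α (W.toContinuousLinearMap ∘L T ∘L adjoint W.toContinuousLinearMap) ∘L
        W.toContinuousLinearMap) :
    ¬ FiniteDimensional ℂ K := by
  intro hK
  apply hIndex
  by_cases hH : Subsingleton H
  · refine ⟨0, fun T => ?_⟩
    have hT : T = 0 := Subsingleton.elim T 0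
    rw [hT, map_zero]
    simp
  have : Nontrivial H := not_subsingleton_iff_nontrivial.mp hH
  obtain ⟨x0, hx0⟩ := exists_ne (0 : H)
  set ξ : H := (‖x0‖ : ℂ)⁻¹ • x0 with hξdef
  have hnx0 : ‖x0‖ ≠ 0 := norm_ne_zero_iff.mpr hx0
  have hξ : ‖ξ‖ = 1 := by
    rw [hξdef, norm_smul]
    simp [hnx0]
  set Wc := W.toContinuousLinearMap with hWcdef
  have hWinner : ∀ x y : H, ⟪Wc x, Wc y⟫_ℂ = ⟪x, y⟫_ℂ := fun x y => W.inner_map_map x y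
  have hWW : ∀ x : H, adjoint Wc (Wc x) = x := by
    intro x
    apply ext_inner_left ℂ
    intro v
    rw [adjoint_inner_right, hWinner]
  have hWξ : ⟪Wc ξ, Wc ξ⟫_ℂ = 1 := by
    rw [hWinner, inner_self_eq_norm_sq_to_K, hξ]
    norm_num
  have hWξ0 : Wc ξ ≠ 0 := by
    intro h
    rw [h, inner_zero_left] at hWξ
    exact zero_ne_one hWξ
  -- algebraic facts about α
  have hαcomp : ∀ X Y : K →L[ℂ] K, α (X ∘L Y) = α X ∘L α Y := by
    intro X Y
    rw [← mul_def, map_mul, mul_def]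
  have hαstar : ∀ X : K →L[ℂ] K, α (adjoint X) = adjoint (α X) := by
    intro X
    rw [← star_eq_adjoint, ← star_eq_adjoint, map_star]
  have hone : (1 : K →L[ℂ] K) ≠ 0 := by
    intro h
    apply hWξ0
    calc Wc ξ = (1 : K →L[ℂ] K) (Wc ξ) := rfl
      _ = 0 := by rw [h]; rfl
  -- injectivity of α
  have hker : ∀ X : K →L[ℂ] K, α X = 0 → X = 0 := by
    intro X hX
    by_contra hX0
    obtain ⟨u, hu⟩ : ∃ u, X u ≠ 0 := by
      by_contra h
      push_neg at h
      exact hX0 (by ext u; simpa using h u)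
    have hnu : (‖X u‖ : ℂ)^2 ≠ 0 := by
      simp [norm_ne_zero_iff.mpr hu]
    have hαrk : ∀ x y : K, α (rk x y) = 0 := by
      intro x y
      have hfact : rk x y = ((‖X u‖ : ℂ)^2)⁻¹ • (rk x (X u) ∘L (X ∘L rk u y)) := by
        ext z
        simp only [rk_apply, comp_apply, smul_apply, map_smul, smul_smul,
          inner_smul_right]
        rw [inner_self_eq_norm_sq_to_K]
        field_simp
        congr 1
        exact (mul_div_cancel_right₀ _ hnu).symm
      rw [hfact, map_smul, hαcomp, hαcomp, hX]
      simp
    have h1 : α 1 = 0 := by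
      conv_lhs => rw [← sum_rk (stdOrthonormalBasis ℂ K) (1 : K →L[ℂ] K)]
      rw [map_sum]
      simp [hαrk]
    exact hone (by rw [← map_one α, h1])
  have hinj : Function.Injective α := by
    intro X Y h
    have := hker (X - Y) (by rw [map_sub, h, sub_self])
    exact sub_eq_zero.mp this
  have hsurj : Function.Surjective α := by
    have : Function.Injective (α.toAlgHom.toLinearMap) := hinj
    exact LinearMap.injective_iff_surjective.mp this
  -- the projection p = α(E)
  set E : K →L[ℂ] K := rk (Wc ξ) (Wc ξ) with hEdef
  have hEE : E ∘L E = E := by rw [hEdef, rk_rk, hWξ, one_smul]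
  have hEstar : adjoint E = E := by rw [hEdef, adjoint_rk]
  have hE0 : E ≠ 0 := by
    intro h
    apply hWξ0
    have := congrFun (congrArg DFunLike.coe h) (Wc ξ)
    simpa [hEdef, hWξ] using this
  set p : K →L[ℂ] K := α E with hpdef
  have hpp : p ∘L p = p := by rw [hpdef, ← hαcomp, hEE]
  have hpstar : adjoint p = p := by rw [hpdef, ← hαstar, hEstar]
  have hp0 : p ≠ 0 := by
    intro h
    exact hE0 (hinj (by rw [← hpdef, h, map_zero]))
  have hscalar : ∀ X : K →L[ℂ] K, ∃ c : ℂ, p ∘L X ∘L p = c • p := by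
    intro X
    obtain ⟨Y, rfl⟩ := hsurj X
    refine ⟨⟪Wc ξ, Y (Wc ξ)⟫_ℂ, ?_⟩
    rw [hpdef, ← hαcomp, ← hαcomp, ← map_smul]
    congr 1
    ext z
    simp only [hEdef, comp_apply, rk_apply, map_smul, inner_smul_right, smul_apply,
      smul_smul]
    ring_nf
  -- p is the rank-one projection onto η
  obtain ⟨z0, hz0⟩ : ∃ z, p z ≠ 0 := by
    by_contra h
    push_neg at h
    exact hp0 (by ext z; simpa using h z)
  set η₀ : K := p z0 with hη₀def
  have hpη₀ : p η₀ = η₀ := by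
    show p (p z0) = p z0
    conv_lhs => rw [← comp_apply, hpp]
  have hpinner : ∀ x : K, ⟪η₀, p x⟫_ℂ = ⟪η₀, x⟫_ℂ := by
    intro x
    have h1 : ⟪η₀, p x⟫_ℂ = ⟪adjoint p η₀, x⟫_ℂ := (adjoint_inner_left p x η₀).symm
    rw [h1, hpstar, hpη₀]
  have htne : ⟪η₀, η₀⟫_ℂ ≠ 0 := inner_self_ne_zero.mpr hz0
  have hpx : ∀ x : K, p x = (⟪η₀, η₀⟫_ℂ)⁻¹ • (⟪η₀, x⟫_ℂ • η₀) := by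
    obtain ⟨c, hc⟩ := hscalar (rk η₀ η₀)
    have key : ∀ x, c • p x = ⟪η₀, x⟫_ℂ • η₀ := by
      intro x
      have := congrFun (congrArg DFunLike.coe hc) x
      simp only [comp_apply, rk_apply, smul_apply] at this
      rw [map_smul, hpinner, hpη₀] at this
      exact this.symm
    have hcval : c = ⟪η₀, η₀⟫_ℂ := by
      have h1 := key z0
      rw [← hpinner z0, ← hη₀def] at h1
      by_contra hne
      have h3 : (c - ⟪η₀, η₀⟫_ℂ) • η₀ = 0 := by
        rw [sub_smul, h1, sub_self]
      rcases smul_eq_zero.mp h3 with h | h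
      · exact hne (sub_eq_zero.mp h)
      · exact hz0 h
    intro x
    rw [← key x, hcval, smul_smul, inv_mul_cancel₀ htne, one_smul]
  set η : K := (‖η₀‖ : ℂ)⁻¹ • η₀ with hηdef
  have hηnorm : ‖η‖ = 1 := by
    rw [hηdef, norm_smul]
    simp [norm_ne_zero_iff.mpr hz0]
  have hη1 : ⟪η, η⟫_ℂ = 1 := by
    rw [inner_self_eq_norm_sq_to_K, hηnorm]
    norm_num
  have hin : ⟪η₀, η₀⟫_ℂ = (‖η₀‖ : ℂ)^2 := inner_self_eq_norm_sq_to_K η₀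
  have hnη₀ : (‖η₀‖ : ℂ) ≠ 0 := by
    simp [norm_ne_zero_iff.mpr hz0]
  have hpη : p = rk η η := by
    ext x
    rw [rk_apply, hpx x, hηdef, inner_smul_left, map_inv₀, Complex.conj_ofReal]
    rw [smul_smul, smul_smul]
    congr 1
    rw [hin, sq]
    field_simp
  -- the operators S_v = α (rk (Wc v) (Wc ξ))
  have hSrk : ∀ v : H, α (rk (Wc v) (Wc ξ)) = rk (α (rk (Wc v) (Wc ξ)) η) η := by
    intro v
    have hSp : α (rk (Wc v) (Wc ξ)) ∘L p = α (rk (Wc v) (Wc ξ)) := by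
      rw [hpdef, ← hαcomp, hEdef, rk_rk, hWξ, one_smul]
    conv_lhs => rw [← hSp, hpη, comp_rk]
  -- the single Kraus operator
  set A0 : H →ₗ[ℂ] H :=
    { toFun := fun v => adjoint Wc (α (rk (Wc v) (Wc ξ)) η)
      map_add' := by
        intro v w
        show adjoint Wc (α (rk (Wc (v + w)) (Wc ξ)) η) =
          adjoint Wc (α (rk (Wc v) (Wc ξ)) η) + adjoint Wc (α (rk (Wc w) (Wc ξ)) η)
        rw [show rk (Wc (v + w)) (Wc ξ) = rk (Wc v) (Wc ξ) + rk (Wc w) (Wc ξ) by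
          rw [map_add, rk_add]]
        rw [map_add, ContinuousLinearMap.add_apply, map_add]
      map_smul' := by
        intro c v
        show adjoint Wc (α (rk (Wc (c • v)) (Wc ξ)) η) =
          c • adjoint Wc (α (rk (Wc v) (Wc ξ)) η)
        rw [show rk (Wc (c • v)) (Wc ξ) = c • rk (Wc v) (Wc ξ) by
          rw [map_smul, rk_smul]]
        rw [map_smul α, ContinuousLinearMap.smul_apply, map_smul (adjoint Wc)] } with hA0def
  set A : H →L[ℂ] H := LinearMap.toContinuousLinearMap A0 with hAdef
  have hAv : ∀ v : H, A v = adjoint Wc (α (rk (Wc v) (Wc ξ)) η) := by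
    intro v
    rw [hAdef, LinearMap.coe_toContinuousLinearMap', hA0def]
    rfl
  have hkey : ∀ v w : H, φ (rk v w) = A ∘L rk v w ∘L adjoint A := by
    intro v w
    rw [hdil]
    have h1 : Wc ∘L (rk v w ∘L adjoint Wc) = rk (Wc v) (Wc w) := by
      rw [rk_comp, adjoint_adjoint, comp_rk]
    have h2 : rk (Wc v) (Wc w) =
        rk (Wc v) (Wc ξ) ∘L adjoint (rk (Wc w) (Wc ξ)) := by
      rw [adjoint_rk, rk_rk, hWξ, one_smul]
    rw [h1, h2, hαcomp, hαstar]
    rw [hSrk v, hSrk w]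
    rw [adjoint_rk, rk_rk, hη1, one_smul]
    rw [rk_comp, comp_rk]
    rw [rk_comp, adjoint_adjoint, comp_rk]
    rw [hAv v, hAv w]
  refine ⟨A, fun T => ?_⟩
  have hT := (sum_rk (stdOrthonormalBasis ℂ H) T).symm
  conv_lhs => rw [hT]
  rw [map_sum]
  conv_rhs => rw [hT]
  simp_rw [hkey]
  ext x
  simp [ContinuousLinearMap.sum_apply, map_sum]
end
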